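/- arXiv:2107.02325 — 4 statements merged into one kernel-verified Lean document; each statement's English description precedes it below -/
import Mathlib

section
/- Let a, b, c be linear forms over ℂ, say a = a₁x₁+a₂x₂+a₃x₃, b = b₁x₁+b₂x₂+b₃x₃, c = c₁x₁+c₂x₂+c₃x₃, and let f = a·b·c. Then det(∂ᵢ∂ⱼ f) = 2·[abc]²·a·b·c, where [abc] is the determinant of the 3×3 matrix whose rows are (a₁,a₂,a₃), (b₁,b₂,b₃), (c₁,c₂,c₃). In particular, the Hessian determinant of a completely reducible cubic form is a scalar multiple of the form. -/
open MvPolynomial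

/-- The Hessian determinant `det (∂ᵢ∂ⱼ f)` of a ternary form. -/
noncomputable def hessianDet (f : MvPolynomial (Fin 3) ℂ) : MvPolynomial (Fin 3) ℂ :=
  Matrix.det (Matrix.of fun i j : Fin 3 => pderiv i (pderiv j f))

/-- The linear form `v₁x₁ + v₂x₂ + v₃x₃` with coefficient vector `v`. -/
noncomputable def lin (v : Fin 3 → ℂ) : MvPolynomial (Fin 3) ℂ :=
  ∑ i, C (v i) * X i

/-- A linear form is a homogeneous polynomial of degree 1. -/
def IsLinearForm (a : MvPolynomial (Fin 3) ℂ) : Prop := a.IsHomogeneous 1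

/-- A cubic form is completely reducible if it is a product of three linear forms. -/
def CompletelyReducible (f : MvPolynomial (Fin 3) ℂ) : Prop :=
  ∃ a b c : MvPolynomial (Fin 3) ℂ,
    IsLinearForm a ∧ IsLinearForm b ∧ IsLinearForm c ∧ f = a * b * c

lemma pderiv_lin (v : Fin 3 → ℂ) (j : Fin 3) : pderiv j (lin v) = C (v j) := by
  simp [lin, pderiv_X, Pi.single_apply, Finset.mul_sum, apply_ite]

lemma hess_entry (a b c : Fin 3 → ℂ) (i j : Fin 3) :
    pderiv i (pderiv j (lin a * lin b * lin c)) =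
      C (a j) * (C (b i) * lin c + lin b * C (c i)) +
      C (b j) * (C (a i) * lin c + lin a * C (c i)) +
      C (c j) * (C (a i) * lin b + lin a * C (b i)) := by
  simp only [pderiv_mul, pderiv_lin, map_add, map_mul, pderiv_C, mul_zero, zero_mul, add_zero,
    zero_add, map_zero]
  ring

lemma key (a b c : Fin 3 → ℂ) :
    hessianDet (lin a * lin b * lin c) =
        C (2 * (Matrix.det (Matrix.of ![a, b, c])) ^ 2) * (lin a * lin b * lin c) := by
  simp only [hessianDet, Matrix.det_fin_three, Matrix.of_apply, hess_entry, map_mul, map_add,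
    map_sub, map_pow, map_ofNat, Matrix.cons_val', Matrix.cons_val_zero, Matrix.cons_val_one,
    Matrix.head_cons, Matrix.cons_val_two, Matrix.tail_cons, Matrix.empty_val',
    Matrix.cons_val_fin_one, Matrix.vecHead]
  ring

lemma deg_one {m : Fin 3 →₀ ℕ} (h : m.degree = 1) : ∃ i, m = Finsupp.single i 1 := by
  have hs : m.degree = ∑ i : Fin 3, m i :=
    Finset.sum_subset (Finset.subset_univ _) (by simp [Finsupp.notMem_support_iff])
  rw [hs, Fin.sum_univ_three] at h
  have h0 : m 0 = 1 ∧ m 1 = 0 ∧ m 2 = 0 ∨ m 0 = 0 ∧ m 1 = 1 ∧ m 2 = 0 ∨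
      m 0 = 0 ∧ m 1 = 0 ∧ m 2 = 1 := by omega
  rcases h0 with ⟨h1,h2,h3⟩|⟨h1,h2,h3⟩|⟨h1,h2,h3⟩
  · exact ⟨0, by ext j; fin_cases j <;> simp [h1,h2,h3, Finsupp.single_apply]⟩
  · exact ⟨1, by ext j; fin_cases j <;> simp [h1,h2,h3, Finsupp.single_apply]⟩
  · exact ⟨2, by ext j; fin_cases j <;> simp [h1,h2,h3, Finsupp.single_apply]⟩

lemma eq_lin {a : MvPolynomial (Fin 3) ℂ} (h : IsLinearForm a) :
    a = lin (fun i => coeff (Finsupp.single i 1) a) := by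
  ext m
  rw [lin]
  simp only [coeff_sum, coeff_C_mul, coeff_X', mul_ite, mul_one, mul_zero]
  by_cases hm : m.degree = 1
  · obtain ⟨i, rfl⟩ := deg_one hm
    rw [Finset.sum_eq_single i]
    · simp
    · intro j _ hj
      simp only [ite_eq_right_iff]
      intro he
      exact absurd (by simpa using (Finsupp.single_left_injective one_ne_zero he.symm).symm) hj
    · simp
  · rw [h.coeff_eq_zero hm]
    rw [Finset.sum_eq_zero]
    intro j _
    simp only [ite_eq_right_iff]
    intro he
    exact absurd (by rw [← he]; simp [Finsupp.degree_single]) hm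

theorem stmt2 (a b c : Fin 3 → ℂ) :
    hessianDet (lin a * lin b * lin c) =
        C (2 * (Matrix.det (Matrix.of ![a, b, c])) ^ 2) * (lin a * lin b * lin c) ∧
      ∀ f : MvPolynomial (Fin 3) ℂ, CompletelyReducible f →
        ∃ t : ℂ, hessianDet f = C t * f := by
  refine ⟨key a b c, ?_⟩
  rintro f ⟨p, q, r, hp, hq, hr, rfl⟩
  rw [eq_lin hp, eq_lin hq, eq_lin hr]
  exact ⟨_, key _ _ _⟩
end

section
/- Let a, b be linearly independent linear forms over ℂ and let f be a ternary cubic form. Then the Jacobian J[f, a, b] — the determinant of the 3×3 matrix whose rows are (∂₁f, ∂₂f, ∂₃f), (∂₁a, ∂₂a, ∂₃a), (∂₁b, ∂₂b, ∂₃b) — is the zero polynomial if and only if f = g₀·a³ + h₀·a²·b + k₀·a·b² + i₀·b³ for some g₀, h₀, k₀, i₀ ∈ ℂ. -/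
open MvPolynomial

/-- The Jacobian of three ternary forms: the determinant of the 3×3 matrix whose rows
are the gradients of the three forms. -/
noncomputable def jacobian (f g h : MvPolynomial (Fin 3) ℂ) : MvPolynomial (Fin 3) ℂ :=
  Matrix.det !![pderiv 0 f, pderiv 1 f, pderiv 2 f;
                pderiv 0 g, pderiv 1 g, pderiv 2 g;
                pderiv 0 h, pderiv 1 h, pderiv 2 h]

namespace Stmt14Aux

/-- Linear substitution by matrix M: X i ↦ ∑ j, M i j • X j. -/
noncomputable def sub (M : Matrix (Fin 3) (Fin 3) ℂ) :
    MvPolynomial (Fin 3) ℂ →ₐ[ℂ] MvPolynomial (Fin 3) ℂ :=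
  aeval (fun i => ∑ j, C (M i j) * X j)

lemma sub_X (M : Matrix (Fin 3) (Fin 3) ℂ) (i : Fin 3) :
    sub M (X i) = ∑ j, C (M i j) * X j := aeval_X _ _

lemma sub_C (M : Matrix (Fin 3) (Fin 3) ℂ) (c : ℂ) : sub M (C c) = C c := by
  simp [sub, algebraMap_eq]

lemma sub_comp (M N : Matrix (Fin 3) (Fin 3) ℂ) (p : MvPolynomial (Fin 3) ℂ) :
    sub M (sub N p) = sub (N * M) p := by
  have : (sub M).comp (sub N) = sub (N * M) := by
    apply MvPolynomial.algHom_ext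
    intro i
    simp only [AlgHom.comp_apply, sub_X, map_sum, map_mul, sub, aeval_C, aeval_X,
      algebraMap_eq, Matrix.mul_apply, Finset.mul_sum, map_sum]
    rw [Finset.sum_comm]
    refine Finset.sum_congr rfl fun k _ => ?_
    rw [Finset.sum_mul]
    exact Finset.sum_congr rfl fun j _ => (mul_assoc _ _ _).symm
  exact DFunLike.congr_fun this p

lemma sub_one (p : MvPolynomial (Fin 3) ℂ) : sub 1 p = p := by
  have : sub (1 : Matrix (Fin 3) (Fin 3) ℂ) = AlgHom.id ℂ _ := by
    apply MvPolynomial.algHom_ext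
    intro i
    simp [sub_X, Matrix.one_apply, apply_ite C, ite_mul, Finset.sum_ite_eq, C_0, C_1]
  rw [this]; rfl

lemma pderiv_sub_X (M : Matrix (Fin 3) (Fin 3) ℂ) (i j : Fin 3) :
    pderiv j (sub M (X i)) = C (M i j) := by
  rw [sub_X, map_sum]
  rw [Fin.sum_univ_three]
  fin_cases j <;>
    simp [pderiv_C_mul, pderiv_X_self, pderiv_X_of_ne, show (0:Fin 3) ≠ 1 by decide,
      show (0:Fin 3) ≠ 2 by decide, show (1:Fin 3) ≠ 0 by decide, show (1:Fin 3) ≠ 2 by decide,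
      show (2:Fin 3) ≠ 0 by decide, show (2:Fin 3) ≠ 1 by decide]

lemma pderiv_sub (M : Matrix (Fin 3) (Fin 3) ℂ) (p : MvPolynomial (Fin 3) ℂ) (j : Fin 3) :
    pderiv j (sub M p) = ∑ i, sub M (pderiv i p) * C (M i j) := by
  induction p using MvPolynomial.induction_on with
  | C c => simp [sub]
  | add p q hp hq => simp [map_add, hp, hq, add_mul, Finset.sum_add_distrib]
  | mul_X p i hp =>
    rw [map_mul, pderiv_mul, hp, pderiv_sub_X]
    have hrhs : ∀ l : Fin 3, pderiv l (p * X i) =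
        pderiv l p * X i + p * if i = l then 1 else 0 := by
      intro l
      rw [pderiv_mul]
      congr 1
      rw [pderiv_X]
      simp [Pi.single_apply]
    simp only [hrhs, map_add, map_mul, add_mul]
    rw [Finset.sum_add_distrib]
    congr 1
    · rw [Finset.sum_mul]
      exact Finset.sum_congr rfl fun l _ => by ring
    · simp [apply_ite (sub M), ite_mul, mul_ite, Finset.sum_ite_eq]

lemma jacobian_X01 (g : MvPolynomial (Fin 3) ℂ) :
    jacobian g (X 0) (X 1) = pderiv 2 g := by
  simp [jacobian, Matrix.det_fin_three, pderiv_X_self, pderiv_X_of_ne,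
    show (0:Fin 3) ≠ 1 by decide, show (0:Fin 3) ≠ 2 by decide,
    show (1:Fin 3) ≠ 0 by decide, show (1:Fin 3) ≠ 2 by decide,
    Matrix.vecHead, Matrix.vecTail]

lemma jacobian_expand (f g h : MvPolynomial (Fin 3) ℂ) :
    jacobian f g h =
      pderiv 0 f * (pderiv 1 g * pderiv 2 h - pderiv 2 g * pderiv 1 h)
      - pderiv 1 f * (pderiv 0 g * pderiv 2 h - pderiv 2 g * pderiv 0 h)
      + pderiv 2 f * (pderiv 0 g * pderiv 1 h - pderiv 1 g * pderiv 0 h) := by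
  simp [jacobian, Matrix.det_fin_three]
  ring

set_option maxHeartbeats 1000000 in
lemma jacobian_sub (M : Matrix (Fin 3) (Fin 3) ℂ) (f g h : MvPolynomial (Fin 3) ℂ) :
    jacobian (sub M f) (sub M g) (sub M h) = sub M (jacobian f g h) * C M.det := by
  rw [jacobian_expand, jacobian_expand, Matrix.det_fin_three]
  simp only [pderiv_sub, Fin.sum_univ_three, map_add, map_sub, map_mul, C_add, C_sub, C_mul]
  ring

lemma sub_homogeneous {M : Matrix (Fin 3) (Fin 3) ℂ} {p : MvPolynomial (Fin 3) ℂ} {n : ℕ}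
    (hp : p.IsHomogeneous n) : (sub M p).IsHomogeneous n := by
  have := hp.eval₂ (algebraMap ℂ (MvPolynomial (Fin 3) ℂ)) (fun i => ∑ j, C (M i j) * X j)
    (fun r => by rw [algebraMap_eq]; exact isHomogeneous_C _ r)
    (fun i => IsHomogeneous.sum _ _ _ fun j _ => (isHomogeneous_X _ _).C_mul _)
  rw [one_mul] at this
  exact this

lemma deg_of_mem_support {n : ℕ} {p : MvPolynomial (Fin 3) ℂ} (hp : p.IsHomogeneous n)
    {d : Fin 3 →₀ ℕ} (hd : coeff d p ≠ 0) : d 0 + d 1 + d 2 = n := by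
  have := hp hd
  rw [Finsupp.weight_apply] at this
  rw [← this]
  rw [Finsupp.sum_fintype _ _ (by simp)]
  simp [Fin.sum_univ_three]

lemma deg_one_classify (d : Fin 3 →₀ ℕ) (hd : d 0 + d 1 + d 2 = 1) :
    d = Finsupp.single 0 1 ∨ d = Finsupp.single 1 1 ∨ d = Finsupp.single 2 1 := by
  have h : (d 0 = 1 ∧ d 1 = 0 ∧ d 2 = 0) ∨ (d 0 = 0 ∧ d 1 = 1 ∧ d 2 = 0) ∨
      (d 0 = 0 ∧ d 1 = 0 ∧ d 2 = 1) := by omega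
  rcases h with ⟨h0, h1, h2⟩ | ⟨h0, h1, h2⟩ | ⟨h0, h1, h2⟩
  · left; ext i; fin_cases i <;> simp [Finsupp.single_apply, h0, h1, h2]
  · right; left; ext i; fin_cases i <;> simp [Finsupp.single_apply, h0, h1, h2]
  · right; right; ext i; fin_cases i <;> simp [Finsupp.single_apply, h0, h1, h2]

/-- row of coefficients of a linear form -/
noncomputable def row (a : MvPolynomial (Fin 3) ℂ) : Fin 3 → ℂ :=
  fun j => coeff (Finsupp.single j 1) a

lemma linear_rep {a : MvPolynomial (Fin 3) ℂ} (ha : IsLinearForm a) :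
    a = ∑ j, C (row a j) * X j := by
  ext d
  rw [Fin.sum_univ_three]
  simp only [coeff_add, coeff_C_mul, coeff_X', row]
  by_cases h0 : d = Finsupp.single 0 1
  · subst h0
    simp [Finsupp.single_left_inj, show ¬ (Finsupp.single (1:Fin 3) 1 = Finsupp.single 0 1) by
      intro h; simpa using DFunLike.congr_fun h 1,
      show ¬ (Finsupp.single (2:Fin 3) 1 = Finsupp.single 0 1) by
      intro h; simpa using DFunLike.congr_fun h 2]
  · by_cases h1 : d = Finsupp.single 1 1
    · subst h1
      simp [show ¬ (Finsupp.single (0:Fin 3) 1 = Finsupp.single 1 1) by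
        intro h; simpa using DFunLike.congr_fun h 0,
        show ¬ (Finsupp.single (2:Fin 3) 1 = Finsupp.single 1 1) by
        intro h; simpa using DFunLike.congr_fun h 2]
    · by_cases h2 : d = Finsupp.single 2 1
      · subst h2
        simp [show ¬ (Finsupp.single (0:Fin 3) 1 = Finsupp.single 2 1) by
          intro h; simpa using DFunLike.congr_fun h 0,
          show ¬ (Finsupp.single (1:Fin 3) 1 = Finsupp.single 2 1) by
          intro h; simpa using DFunLike.congr_fun h 1]
      · have hz : coeff d a = 0 := by
          by_contra hc
          rcases deg_one_classify d (deg_of_mem_support ha hc) with h | h | h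
          exacts [h0 h, h1 h, h2 h]
        rw [hz]
        simp [Ne.symm h0, Ne.symm h1, Ne.symm h2]

/-- the natural linear map from rows of coefficients into polynomials -/
noncomputable def L : (Fin 3 → ℂ) →ₗ[ℂ] MvPolynomial (Fin 3) ℂ where
  toFun r := ∑ j, C (r j) * X j
  map_add' r s := by
    simp only [Pi.add_apply, map_add, add_mul]
    rw [Finset.sum_add_distrib]
  map_smul' c r := by
    simp only [Pi.smul_apply, smul_eq_mul, RingHom.id_apply, Finset.smul_sum,
      smul_eq_C_mul, map_mul, mul_assoc]

lemma coeff_pderiv (i : Fin 3) (p : MvPolynomial (Fin 3) ℂ) (d : Fin 3 →₀ ℕ) :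
    coeff d (pderiv i p) = (d i + 1 : ℕ) * coeff (d + Finsupp.single i 1) p := by
  induction p using MvPolynomial.induction_on' with
  | monomial s a =>
    rw [pderiv_monomial, coeff_monomial, coeff_monomial]
    by_cases h : s = d + Finsupp.single i 1
    · subst h
      have h1 : d + Finsupp.single i 1 - Finsupp.single i 1 = d :=
        add_tsub_cancel_right d (Finsupp.single i 1)
      rw [if_pos h1, if_pos rfl]
      simp only [Finsupp.add_apply, Finsupp.single_eq_same]
      push_cast
      ring
    · rw [if_neg h]
      by_cases hsi : s i = 0
      · by_cases h' : s - Finsupp.single i 1 = d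
        · rw [if_pos h', hsi]; simp
        · rw [if_neg h']; simp
      · have h' : ¬ (s - Finsupp.single i 1 = d) := by
          intro he
          apply h
          ext j
          have hj := DFunLike.congr_fun he j
          simp only [Finsupp.tsub_apply, Finsupp.single_apply, Finsupp.add_apply] at hj ⊢
          by_cases hji : i = j
          · subst hji; simp at hj ⊢; omega
          · simp [hji] at hj ⊢; omega
        rw [if_neg h']; simp
  | add p q hp hq => simp [map_add, hp, hq, mul_add]

lemma support_X01 {p : MvPolynomial (Fin 3) ℂ} (h2 : pderiv 2 p = 0)
    {d : Fin 3 →₀ ℕ} (hd : coeff d p ≠ 0) : d 2 = 0 := by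
  by_contra hne
  set e := d - Finsupp.single 2 1 with he
  have hed : e + Finsupp.single 2 1 = d := by
    ext j
    simp only [he, Finsupp.add_apply, Finsupp.tsub_apply, Finsupp.single_apply]
    by_cases hj : (2 : Fin 3) = j
    · subst hj; simp; omega
    · simp [hj]
  have hc := coeff_pderiv 2 p e
  rw [h2, hed, coeff_zero] at hc
  rcases mul_eq_zero.mp hc.symm with h | h
  · exact absurd h (by exact_mod_cast Nat.succ_ne_zero (e 2))
  · exact hd h

lemma cubic_decomp {p : MvPolynomial (Fin 3) ℂ} (hp : p.IsHomogeneous 3)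
    (h2 : pderiv 2 p = 0) :
    ∃ g₀ h₀ k₀ i₀ : ℂ, p = C g₀ * X 0 ^ 3 + C h₀ * X 0 ^ 2 * X 1
      + C k₀ * X 0 * X 1 ^ 2 + C i₀ * X 1 ^ 3 := by
  classical
  set s30 : Fin 3 →₀ ℕ := Finsupp.single 0 3 with hs30
  set s21 : Fin 3 →₀ ℕ := Finsupp.single 0 2 + Finsupp.single 1 1 with hs21
  set s12 : Fin 3 →₀ ℕ := Finsupp.single 0 1 + Finsupp.single 1 2 with hs12
  set s03 : Fin 3 →₀ ℕ := Finsupp.single 1 3 with hs03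
  have v30 : s30 0 = 3 := by simp [hs30]
  have v21 : s21 0 = 2 := by simp [hs21, Finsupp.single_apply]
  have v12 : s12 0 = 1 := by simp [hs12, Finsupp.single_apply]
  have v03 : s03 0 = 0 := by simp [hs03, Finsupp.single_apply]
  have ne1 : s30 ≠ s21 := fun h => by rw [DFunLike.congr_fun h 0] at v30; omega
  have ne2 : s30 ≠ s12 := fun h => by rw [DFunLike.congr_fun h 0] at v30; omega
  have ne3 : s30 ≠ s03 := fun h => by rw [DFunLike.congr_fun h 0] at v30; omega
  have ne4 : s21 ≠ s12 := fun h => by rw [DFunLike.congr_fun h 0] at v21; omega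
  have ne5 : s21 ≠ s03 := fun h => by rw [DFunLike.congr_fun h 0] at v21; omega
  have ne6 : s12 ≠ s03 := fun h => by rw [DFunLike.congr_fun h 0] at v12; omega
  refine ⟨coeff s30 p, coeff s21 p, coeff s12 p, coeff s03 p, ?_⟩
  have key : ∀ d : Fin 3 →₀ ℕ, coeff d p ≠ 0 →
      d = s30 ∨ d = s21 ∨ d = s12 ∨ d = s03 := by
    intro d hd
    have hdeg := deg_of_mem_support hp hd
    have hd2 := support_X01 h2 hd
    have h : (d 0 = 3 ∧ d 1 = 0) ∨ (d 0 = 2 ∧ d 1 = 1) ∨ (d 0 = 1 ∧ d 1 = 2) ∨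
        (d 0 = 0 ∧ d 1 = 3) := by omega
    rcases h with ⟨h0, h1⟩ | ⟨h0, h1⟩ | ⟨h0, h1⟩ | ⟨h0, h1⟩
    · left; ext i; fin_cases i <;> simp [hs30, Finsupp.single_apply, h0, h1, hd2]
    · right; left; ext i; fin_cases i <;>
        simp [hs21, Finsupp.single_apply, h0, h1, hd2]
    · right; right; left; ext i; fin_cases i <;>
        simp [hs12, Finsupp.single_apply, h0, h1, hd2]
    · right; right; right; ext i; fin_cases i <;>
        simp [hs03, Finsupp.single_apply, h0, h1, hd2]
  have e30 : C (coeff s30 p) * X 0 ^ 3 = monomial s30 (coeff s30 p) :=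
    C_mul_X_pow_eq_monomial
  have eX0 : (X 0 : MvPolynomial (Fin 3) ℂ) = monomial (Finsupp.single 0 1) 1 := by
    rw [← X_pow_eq_monomial, pow_one]
  have eX1 : (X 1 : MvPolynomial (Fin 3) ℂ) = monomial (Finsupp.single 1 1) 1 := by
    rw [← X_pow_eq_monomial, pow_one]
  have e21 : C (coeff s21 p) * X 0 ^ 2 * X 1 = monomial s21 (coeff s21 p) := by
    rw [hs21, X_pow_eq_monomial, C_apply, eX1, monomial_mul, monomial_mul]
    simp
  have e12 : C (coeff s12 p) * X 0 * X 1 ^ 2 = monomial s12 (coeff s12 p) := by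
    rw [hs12, eX0, C_apply, X_pow_eq_monomial, monomial_mul, monomial_mul]
    simp
  have e03 : C (coeff s03 p) * X 1 ^ 3 = monomial s03 (coeff s03 p) :=
    C_mul_X_pow_eq_monomial
  rw [e30, e21, e12, e03]
  ext d
  simp only [coeff_add, coeff_monomial]
  by_cases h30 : d = s30
  · subst h30; simp [Ne.symm ne1, Ne.symm ne2, Ne.symm ne3]
  by_cases h21 : d = s21
  · subst h21; simp [ne1, Ne.symm ne4, Ne.symm ne5]
  by_cases h12 : d = s12
  · subst h12; simp [ne2, ne4, Ne.symm ne6]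
  by_cases h03 : d = s03
  · subst h03; simp [ne3, ne5, ne6]
  have : coeff d p = 0 := by
    by_contra hc
    rcases key d hc with h | h | h | h
    exacts [h30 h, h21 h, h12 h, h03 h]
  rw [this]
  simp [Ne.symm h30, Ne.symm h21, Ne.symm h12, Ne.symm h03]

end Stmt14Aux

theorem stmt14 (a b f : MvPolynomial (Fin 3) ℂ)
    (ha : IsLinearForm a) (hb : IsLinearForm b)
    (hab : LinearIndependent ℂ ![a, b]) (hf : f.IsHomogeneous 3) :
    jacobian f a b = 0 ↔
      ∃ g₀ h₀ k₀ i₀ : ℂ,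
        f = C g₀ * a ^ 3 + C h₀ * a ^ 2 * b + C k₀ * a * b ^ 2 + C i₀ * b ^ 3 := by
  classical
  open Stmt14Aux in
  have hrow : LinearIndependent ℂ ![row a, row b] := by
    apply LinearIndependent.of_comp Stmt14Aux.L
    have hcomp : (Stmt14Aux.L ∘ ![row a, row b]) = ![a, b] := by
      funext i
      fin_cases i
      · simpa [Stmt14Aux.L] using (linear_rep ha).symm
      · simpa [Stmt14Aux.L] using (linear_rep hb).symm
    rw [hcomp]; exact hab
  obtain ⟨v, hv⟩ := exists_linearIndependent_snoc_of_lt_finrank hrow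
    (by simp [Module.finrank_fintype_fun_eq_card])
  set M : Matrix (Fin 3) (Fin 3) ℂ := Matrix.of ![Stmt14Aux.row a, Stmt14Aux.row b, v] with hM
  have hsnoc : (fun i => M i) = Fin.snoc ![Stmt14Aux.row a, Stmt14Aux.row b] v := by
    funext i; fin_cases i <;> simp [hM, Fin.snoc] <;> rfl
  have hMunit : IsUnit M :=
    Matrix.linearIndependent_rows_iff_isUnit.mp (by rw [show M.row = fun i => M i from rfl, hsnoc]; exact hv)
  have hdetU : IsUnit M.det := (Matrix.isUnit_iff_isUnit_det M).mp hMunit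
  have hdet : M.det ≠ 0 := hdetU.ne_zero
  set N := M⁻¹ with hNdef
  have hNM : N * M = 1 := Matrix.nonsing_inv_mul M hdetU
  have hMN : M * N = 1 := Matrix.mul_nonsing_inv M hdetU
  have hM0 : ∀ j, M 0 j = Stmt14Aux.row a j := fun j => by simp [hM]
  have hM1 : ∀ j, M 1 j = Stmt14Aux.row b j := fun j => by simp [hM]
  have hsubMa : Stmt14Aux.sub M (X 0) = a := by
    rw [Stmt14Aux.sub_X]
    conv_rhs => rw [Stmt14Aux.linear_rep ha]
    exact Finset.sum_congr rfl fun j _ => by rw [hM0]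
  have hsubMb : Stmt14Aux.sub M (X 1) = b := by
    rw [Stmt14Aux.sub_X]
    conv_rhs => rw [Stmt14Aux.linear_rep hb]
    exact Finset.sum_congr rfl fun j _ => by rw [hM1]
  set F := Stmt14Aux.sub N f with hFdef
  have hFf : Stmt14Aux.sub M F = f := by
    rw [hFdef, Stmt14Aux.sub_comp, hNM, Stmt14Aux.sub_one]
  have hNa : Stmt14Aux.sub N a = X 0 := by
    rw [← hsubMa, Stmt14Aux.sub_comp, hMN, Stmt14Aux.sub_one]
  have hNb : Stmt14Aux.sub N b = X 1 := by
    rw [← hsubMb, Stmt14Aux.sub_comp, hMN, Stmt14Aux.sub_one]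
  have hinj : ∀ q : MvPolynomial (Fin 3) ℂ, Stmt14Aux.sub M q = 0 → q = 0 := by
    intro q hq
    have : Stmt14Aux.sub N (Stmt14Aux.sub M q) = q := by
      rw [Stmt14Aux.sub_comp, hMN, Stmt14Aux.sub_one]
    rw [hq, map_zero] at this
    exact this.symm
  have key : jacobian f a b = Stmt14Aux.sub M (pderiv 2 F) * C M.det := by
    conv_lhs => rw [← hFf, ← hsubMa, ← hsubMb]
    rw [Stmt14Aux.jacobian_sub, Stmt14Aux.jacobian_X01]
  constructor
  · intro h
    rw [key] at h
    have hC : (C M.det : MvPolynomial (Fin 3) ℂ) ≠ 0 := by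
      simpa using hdet
    have h2 : pderiv 2 F = 0 := by
      rcases mul_eq_zero.mp h with h' | h'
      · exact hinj _ h'
      · exact absurd h' hC
    have hFhom : F.IsHomogeneous 3 := Stmt14Aux.sub_homogeneous hf
    obtain ⟨g₀, h₀, k₀, i₀, hF⟩ := Stmt14Aux.cubic_decomp hFhom h2
    refine ⟨g₀, h₀, k₀, i₀, ?_⟩
    have := congrArg (Stmt14Aux.sub M) hF
    rw [hFf] at this
    rw [this]
    simp only [map_add, map_mul, map_pow, Stmt14Aux.sub_C, hsubMa, hsubMb]
  · rintro ⟨g₀, h₀, k₀, i₀, rfl⟩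
    have hFeq : F = C g₀ * X 0 ^ 3 + C h₀ * X 0 ^ 2 * X 1
        + C k₀ * X 0 * X 1 ^ 2 + C i₀ * X 1 ^ 3 := by
      rw [hFdef]
      simp only [map_add, map_mul, map_pow, Stmt14Aux.sub_C, hNa, hNb]
    have h2 : pderiv 2 F = 0 := by
      rw [hFeq]
      simp [pderiv_mul, pderiv_pow, pderiv_C,
        pderiv_X_of_ne (show (0:Fin 3) ≠ 2 by decide),
        pderiv_X_of_ne (show (1:Fin 3) ≠ 2 by decide)]
    rw [key, h2, map_zero, zero_mul]
end

section
/- Let a be a nonzero linear form over ℂ and let f be a ternary quadratic form. Then the determinant of the 3×3 matrix with rows (∂₁f, ∂₂f, ∂₃f), (∂₁a, ∂₂a, ∂₃a), (u₁, u₂, u₃) is the zero polynomial for every (u₁,u₂,u₃) ∈ ℂ³ (i.e. the Jacobian of f, a and every linear form vanishes identically) if and only if a² divides f, i.e. f = t·a² for some t ∈ ℂ. -/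
open MvPolynomial Finsupp

lemma degree_eq_sum (m : Fin 3 →₀ ℕ) : m.degree = ∑ i : Fin 3, m i := by
  rw [Finsupp.degree]
  exact Finset.sum_subset (Finset.subset_univ _) (by
    intro x _ hx
    simpa using Finsupp.notMem_support_iff.mp hx)

lemma degree_sub_single {s : Fin 3 →₀ ℕ} {i : Fin 3} (h : s i ≠ 0) (h2 : s.degree = 2) :
    (s - Finsupp.single i 1).degree = 1 := by
  rw [degree_eq_sum] at h2 ⊢
  simp only [Finsupp.tsub_apply, Finsupp.single_apply, Fin.sum_univ_three] at h2 ⊢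
  fin_cases i <;> simp_all <;> omega

lemma pderiv_isHomog {f : MvPolynomial (Fin 3) ℂ} (hf : f.IsHomogeneous 2) (i : Fin 3) :
    (pderiv i f).IsHomogeneous 1 := by
  conv_lhs => rw [f.as_sum]
  rw [map_sum]
  apply MvPolynomial.IsHomogeneous.sum
  intro s hs
  rw [pderiv_monomial]
  by_cases h : s i = 0
  · simp only [h, Nat.cast_zero, mul_zero, monomial_zero]
    exact isHomogeneous_zero _ _ _
  · have h2 : s.degree = 2 := by
      rw [Finsupp.degree_eq_weight_one]
      exact hf (MvPolynomial.mem_support_iff.mp hs)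
    exact isHomogeneous_monomial _ (degree_sub_single h h2)

lemma euler {f : MvPolynomial (Fin 3) ℂ} (hf : f.IsHomogeneous 2) :
    ∑ i : Fin 3, X i * pderiv i f = C 2 * f := by
  have key : ∀ (i : Fin 3) (s : Fin 3 →₀ ℕ) (c : ℂ),
      X i * pderiv i (monomial s c) = monomial s (c * s i) := by
    intro i s c
    rw [pderiv_monomial]
    by_cases h : s i = 0
    · simp [h]
    · rw [X, monomial_mul, one_mul, add_tsub_cancel_of_le
        (Finsupp.single_le_iff.mpr (Nat.one_le_iff_ne_zero.mpr h))]
  calc ∑ i : Fin 3, X i * pderiv i f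
      = ∑ i : Fin 3, ∑ s ∈ f.support, monomial s (coeff s f * s i) := by
        refine Finset.sum_congr rfl fun i _ => ?_
        conv_lhs => rw [f.as_sum]
        rw [map_sum, Finset.mul_sum]
        exact Finset.sum_congr rfl fun s _ => key i s _
    _ = ∑ s ∈ f.support, ∑ i : Fin 3, monomial s (coeff s f * s i) := Finset.sum_comm
    _ = ∑ s ∈ f.support, monomial s (coeff s f * 2) := by
        refine Finset.sum_congr rfl fun s hs => ?_
        have h2 : s.degree = 2 := by
          rw [Finsupp.degree_eq_weight_one]
          exact hf (MvPolynomial.mem_support_iff.mp hs)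
        rw [← map_sum, ← Finset.mul_sum]
        congr 2
        have := _root_.degree_eq_sum s
        rw [h2] at this
        rw [← Nat.cast_sum, ← this]
        norm_num
    _ = C 2 * f := by
        conv_rhs => rw [f.as_sum]
        rw [Finset.mul_sum]
        exact Finset.sum_congr rfl fun s _ => by rw [C_mul_monomial, mul_comm]

lemma deg_one_single (m : Fin 3 →₀ ℕ) (hm : m.degree = 1) : ∃ i, m = Finsupp.single i 1 := by
  have hsum : m 0 + m 1 + m 2 = 1 := by
    have : ∑ i : Fin 3, m i = m.degree := by
      rw [Finsupp.degree]
      exact (Finset.sum_subset (Finset.subset_univ _) (by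
        intro x _ hx
        simpa using Finsupp.notMem_support_iff.mp hx)).symm
    rw [hm] at this
    simpa [Fin.sum_univ_three] using this
  rcases Nat.eq_zero_or_pos (m 0) with h0 | h0
  · rcases Nat.eq_zero_or_pos (m 1) with h1 | h1
    · exact ⟨2, by ext j; fin_cases j <;> simp_all <;> omega⟩
    · exact ⟨1, by ext j; fin_cases j <;> simp_all <;> omega⟩
  · exact ⟨0, by ext j; fin_cases j <;> simp_all <;> omega⟩

lemma degree_single' (i : Fin 3) : (Finsupp.single i 1 : Fin 3 →₀ ℕ).degree = 1 := by
  rw [_root_.degree_eq_sum]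
  fin_cases i <;> simp [Fin.sum_univ_three]

lemma decomp (p : MvPolynomial (Fin 3) ℂ) (hp : p.IsHomogeneous 1) :
    p = ∑ i : Fin 3, C (coeff (Finsupp.single i 1) p) * X i := by
  ext m
  rw [coeff_sum]
  simp only [coeff_C_mul, coeff_X']
  by_cases hm : m.degree = 1
  · obtain ⟨i, rfl⟩ := deg_one_single m hm
    rw [Finset.sum_eq_single i]
    · simp
    · intro j _ hj
      have : (Finsupp.single j 1 : Fin 3 →₀ ℕ) ≠ Finsupp.single i 1 := by
        simp [Finsupp.single_eq_single_iff, hj]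
      simp [this]
    · simp
  · rw [hp.coeff_eq_zero hm]
    symm
    apply Finset.sum_eq_zero
    intro j _
    have : (Finsupp.single j 1 : Fin 3 →₀ ℕ) ≠ m := fun h => hm (h ▸ degree_single' j)
    simp [this]

lemma pderiv_deg1 (p : MvPolynomial (Fin 3) ℂ) (hp : p.IsHomogeneous 1) (j : Fin 3) :
    pderiv j p = C (coeff (Finsupp.single j 1) p) := by
  conv_lhs => rw [decomp p hp]
  rw [map_sum]
  rw [Fin.sum_univ_three]
  fin_cases j <;> simp [pderiv_X]

theorem stmt15 (a f : MvPolynomial (Fin 3) ℂ)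
    (ha : IsLinearForm a) (ha0 : a ≠ 0) (hf : f.IsHomogeneous 2) :
    (∀ u : Fin 3 → ℂ,
        Matrix.det !![pderiv 0 f, pderiv 1 f, pderiv 2 f;
                      pderiv 0 a, pderiv 1 a, pderiv 2 a;
                      C (u 0), C (u 1), C (u 2)] = 0) ↔
      ∃ t : ℂ, f = C t * a ^ 2 := by
  have ha' : a.IsHomogeneous 1 := ha
  have pa : ∀ j : Fin 3, pderiv j a = C (coeff (Finsupp.single j 1) a) :=
    pderiv_deg1 a ha'
  have hC2 : (C 2 : MvPolynomial (Fin 3) ℂ) = 2 := map_ofNat C 2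
  constructor
  · intro h
    have h0 := h ![1,0,0]
    have h1 := h ![0,1,0]
    have h2 := h ![0,0,1]
    simp [Matrix.det_fin_three, pa] at h0 h1 h2
    have hck : ∃ k : Fin 3, coeff (Finsupp.single k 1) a ≠ 0 := by
      by_contra hall
      push_neg at hall
      apply ha0
      rw [decomp a ha']
      simp [hall]
    obtain ⟨k, hk⟩ := hck
    have hCk : (C (coeff (Finsupp.single k 1) a) : MvPolynomial (Fin 3) ℂ) ≠ 0 := by
      simpa using hk
    set g : MvPolynomial (Fin 3) ℂ :=
      C (coeff (Finsupp.single k 1) a)⁻¹ * pderiv k f with hg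
    have hCinv : (C (coeff (Finsupp.single k 1) a) : MvPolynomial (Fin 3) ℂ) *
        C (coeff (Finsupp.single k 1) a)⁻¹ = 1 := by
      rw [← C_mul, mul_inv_cancel₀ hk, map_one]
    have hig : ∀ i : Fin 3, pderiv i f = C (coeff (Finsupp.single i 1) a) * g := by
      intro i
      have hmin : pderiv i f * C (coeff (Finsupp.single k 1) a)
          = pderiv k f * C (coeff (Finsupp.single i 1) a) := by
        fin_cases i <;> fin_cases k <;>
          simp only [Fin.zero_eta, Fin.mk_one, Fin.reduceFinMk] <;>
          first
          | ring1
          | linear_combination C (coeff (Finsupp.single 0 1) a) * h0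
          | linear_combination -(C (coeff (Finsupp.single 0 1) a) * h0)
          | linear_combination C (coeff (Finsupp.single 1 1) a) * h1
          | linear_combination -(C (coeff (Finsupp.single 1 1) a) * h1)
          | linear_combination C (coeff (Finsupp.single 2 1) a) * h2
          | linear_combination -(C (coeff (Finsupp.single 2 1) a) * h2)
          | linear_combination h0
          | linear_combination -h0
          | linear_combination h1
          | linear_combination -h1
          | linear_combination h2
          | linear_combination -h2
      apply mul_right_cancel₀ hCk
      rw [hg]
      linear_combination hmin - C (coeff (Finsupp.single i 1) a) * pderiv k f * hCinv
    have he : C 2 * f = a * g := by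
      rw [← euler hf]
      calc ∑ i : Fin 3, X i * pderiv i f
          = ∑ i : Fin 3, (C (coeff (Finsupp.single i 1) a) * X i) * g :=
            Finset.sum_congr rfl fun i _ => by rw [hig i]; ring
        _ = (∑ i : Fin 3, C (coeff (Finsupp.single i 1) a) * X i) * g := by
            rw [Finset.sum_mul]
        _ = a * g := by rw [← decomp a ha']
    have hg1 : g.IsHomogeneous 1 := (pderiv_isHomog hf k).C_mul _
    have hd : pderiv k g = C (coeff (Finsupp.single k 1) g) := pderiv_deg1 g hg1 k
    have he2 : C 2 * pderiv k f
        = a * C (coeff (Finsupp.single k 1) g) + g * C (coeff (Finsupp.single k 1) a) := by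
      have := congrArg (pderiv k) he
      simpa [pderiv_C_mul, Derivation.leibniz, pa, hd, smul_eq_mul] using this
    rw [hig k] at he2
    have he3 : C (coeff (Finsupp.single k 1) a) * g = a * C (coeff (Finsupp.single k 1) g) := by
      rw [hC2] at he2
      linear_combination he2
    refine ⟨coeff (Finsupp.single k 1) g / (2 * coeff (Finsupp.single k 1) a), ?_⟩
    have h2ck : (2 : ℂ) * coeff (Finsupp.single k 1) a ≠ 0 := by
      exact mul_ne_zero two_ne_zero hk
    apply mul_left_cancel₀
      (show (C (2 * coeff (Finsupp.single k 1) a) : MvPolynomial (Fin 3) ℂ) ≠ 0 by simpa using h2ck)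
    have hcancel : (2 * coeff (Finsupp.single k 1) a)
        * (coeff (Finsupp.single k 1) g / (2 * coeff (Finsupp.single k 1) a))
        = coeff (Finsupp.single k 1) g := by
      field_simp
    calc C (2 * coeff (Finsupp.single k 1) a) * f
        = C (coeff (Finsupp.single k 1) a) * (C 2 * f) := by rw [map_mul]; ring
      _ = C (coeff (Finsupp.single k 1) a) * (a * g) := by rw [he]
      _ = a * (C (coeff (Finsupp.single k 1) a) * g) := by ring
      _ = a * (a * C (coeff (Finsupp.single k 1) g)) := by rw [he3]
      _ = C (2 * coeff (Finsupp.single k 1) a)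
          * (C (coeff (Finsupp.single k 1) g / (2 * coeff (Finsupp.single k 1) a)) * a ^ 2) := by
          have hCC : (C (2 * coeff (Finsupp.single k 1) a) : MvPolynomial (Fin 3) ℂ)
              * C (coeff (Finsupp.single k 1) g / (2 * coeff (Finsupp.single k 1) a))
              = C (coeff (Finsupp.single k 1) g) := by rw [← C_mul, hcancel]
          linear_combination (-(a ^ 2)) * hCC
  · rintro ⟨t, rfl⟩ u
    have hp : ∀ i : Fin 3, pderiv i (C t * a ^ 2)
        = C t * (2 * a * C (coeff (Finsupp.single i 1) a)) := by
      intro i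
      rw [pderiv_C_mul, pderiv_pow, pa]
      norm_num
    simp [Matrix.det_fin_three, hp, pa]
    ring
end

section
/- Let a, b, c, d ∈ ℂ and let f be the ternary cubic form f = a·(2x₁−x₂−x₃)(2x₂−x₃−x₁)(2x₃−x₁−x₂) + b·(x₁−x₂)(x₂−x₃)(x₃−x₁) + c·(x₁+x₂+x₃)³ + d·(x₁³+x₂³+x₃³−3x₁x₂x₃). Then f is completely reducible if and only if either a = b = c = 0, or (27a² + b²)·c + d³ = 0. -/
open MvPolynomial

lemma aux_deg1 (m : Fin 3 →₀ ℕ) (hm : m.degree = 1) :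
    m = Finsupp.single 0 1 ∨ m = Finsupp.single 1 1 ∨ m = Finsupp.single 2 1 := by
  have h1 : ∑ i ∈ m.support, m i = ∑ i : Fin 3, m i :=
    Finset.sum_subset (Finset.subset_univ _) (fun i _ hi => Finsupp.notMem_support_iff.mp hi)
  rw [Finsupp.degree_apply, h1, Fin.sum_univ_three] at hm
  have h2 : (m 0 = 1 ∧ m 1 = 0 ∧ m 2 = 0) ∨ (m 0 = 0 ∧ m 1 = 1 ∧ m 2 = 0) ∨
      (m 0 = 0 ∧ m 1 = 0 ∧ m 2 = 1) := by omega
  rcases h2 with ⟨h,h',h''⟩|⟨h,h',h''⟩|⟨h,h',h''⟩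
  · left; ext j; fin_cases j <;> simp [Finsupp.single_apply, h, h', h'']
  · right; left; ext j; fin_cases j <;> simp [Finsupp.single_apply, h, h', h'']
  · right; right; ext j; fin_cases j <;> simp [Finsupp.single_apply, h, h', h'']

lemma lin_decomp {l : MvPolynomial (Fin 3) ℂ} (h : IsLinearForm l) :
    ∃ p q r : ℂ, ∀ x : Fin 3 → ℂ, eval x l = p * x 0 + q * x 1 + r * x 2 := by
  refine ⟨coeff (Finsupp.single 0 1) l, coeff (Finsupp.single 1 1) l,
    coeff (Finsupp.single 2 1) l, ?_⟩
  have hl : l = C (coeff (Finsupp.single 0 1) l) * X 0 + C (coeff (Finsupp.single 1 1) l) * X 1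
      + C (coeff (Finsupp.single 2 1) l) * X 2 := by
    ext m
    by_cases h0 : m = Finsupp.single 0 1
    · subst h0; simp [coeff_X', Finsupp.single_eq_single_iff]
    by_cases h1 : m = Finsupp.single 1 1
    · subst h1; simp [coeff_X', Finsupp.single_eq_single_iff]
    by_cases h2 : m = Finsupp.single 2 1
    · subst h2; simp [coeff_X', Finsupp.single_eq_single_iff]
    have hz : coeff m l = 0 := by
      apply h.coeff_eq_zero
      intro hdeg
      rcases aux_deg1 m hdeg with h'|h'|h' <;> simp_all
    rw [hz]
    simp [coeff_X', Ne.symm h0, Ne.symm h1, Ne.symm h2]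
  intro x
  rw [hl]
  simp

lemma lin_form (s t e w : ℂ) :
    IsLinearForm (C s * (X 0 + X 1 + X 2) + C t * (X 0 + C w * X 1 + C (w^2) * X 2)
      + C e * (X 0 + C (w^2) * X 1 + C w * X 2)) := by
  unfold IsLinearForm
  apply IsHomogeneous.add
  apply IsHomogeneous.add
  all_goals
    apply MvPolynomial.IsHomogeneous.C_mul
    apply IsHomogeneous.add
    try apply IsHomogeneous.add
  all_goals first
    | exact isHomogeneous_X _ _
    | exact isHomogeneous_C_mul_X _ _

set_option maxRecDepth 100000 in
set_option maxHeartbeats 16000000 in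
theorem stmt19 (a b c d : ℂ)
    (f : MvPolynomial (Fin 3) ℂ)
    (hfdef : f =
      C a * ((2 * X 0 - X 1 - X 2) * (2 * X 1 - X 2 - X 0) * (2 * X 2 - X 0 - X 1)) +
      C b * ((X 0 - X 1) * (X 1 - X 2) * (X 2 - X 0)) +
      C c * (X 0 + X 1 + X 2) ^ 3 +
      C d * (X 0 ^ 3 + X 1 ^ 3 + X 2 ^ 3 - 3 * X 0 * X 1 * X 2)) :
    CompletelyReducible f ↔
      (a = 0 ∧ b = 0 ∧ c = 0) ∨ (27 * a ^ 2 + b ^ 2) * c + d ^ 3 = 0 := by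
  obtain ⟨ω, hω⟩ : ∃ z : ℂ, z^2 + z + 1 = 0 := by
    refine ⟨(-1 + Complex.I * Real.sqrt 3)/2, ?_⟩
    have h3 : (Real.sqrt 3 : ℂ)^2 = 3 := by
      norm_cast
      rw [Real.sq_sqrt] <;> norm_num
    field_simp
    linear_combination ((Real.sqrt 3:ℂ)^2) * Complex.I_sq - h3
  have cr : ∀ z : ℂ, ∃ y : ℂ, y^3 = z := fun z => IsAlgClosed.exists_pow_nat_eq z (by norm_num)
  constructor
  · rintro ⟨l1, l2, l3, hh1, hh2, hh3, hprod⟩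
    obtain ⟨p1, q1, r1, hl1⟩ := lin_decomp hh1
    obtain ⟨p2, q2, r2, hl2⟩ := lin_decomp hh2
    obtain ⟨p3, q3, r3, hl3⟩ := lin_decomp hh3
    have key : ∀ X0 X1 X2 : ℂ,
        a * ((2*X0 - X1 - X2) * (2*X1 - X2 - X0) * (2*X2 - X0 - X1)) +
        b * ((X0 - X1) * (X1 - X2) * (X2 - X0)) +
        c * (X0 + X1 + X2)^3 +
        d * (X0^3 + X1^3 + X2^3 - 3*X0*X1*X2) =
        (p1*X0 + q1*X1 + r1*X2) * (p2*X0 + q2*X1 + r2*X2) * (p3*X0 + q3*X1 + r3*X2) := by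
      intro X0 X1 X2
      have e1 := congrArg (eval ![X0, X1, X2]) hprod
      rw [hfdef] at e1
      simp only [map_add, map_mul, map_sub, map_pow, map_ofNat, eval_C, eval_X, hl1, hl2, hl3,
        Matrix.cons_val_zero, Matrix.cons_val_one, Matrix.head_cons, Matrix.cons_val_two,
        Matrix.tail_cons] at e1
      linear_combination e1
    have H1 := key ((1/3:ℂ)) ((1/3:ℂ)) ((1/3:ℂ))
    have H2 := key ((1/3:ℂ)) ((1/3:ℂ)*ω^2) ((1/3:ℂ)*ω)
    have H3 := key ((1/3:ℂ)) ((1/3:ℂ)*ω) ((1/3:ℂ)*ω^2)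
    have H4 := key ((2/3:ℂ)) ((1/3:ℂ) + (1/3:ℂ)*ω^2) ((1/3:ℂ) + (1/3:ℂ)*ω)
    have H5 := key (0:ℂ) ((1/3:ℂ) + (-1/3:ℂ)*ω^2) ((1/3:ℂ) + (-1/3:ℂ)*ω)
    have H6 := key ((2/3:ℂ)) ((1/3:ℂ) + (1/3:ℂ)*ω) ((1/3:ℂ) + (1/3:ℂ)*ω^2)
    have H7 := key (0:ℂ) ((1/3:ℂ) + (-1/3:ℂ)*ω) ((1/3:ℂ) + (-1/3:ℂ)*ω^2)
    have H8 := key ((2/3:ℂ)) ((1/3:ℂ)*ω + (1/3:ℂ)*ω^2) ((1/3:ℂ)*ω + (1/3:ℂ)*ω^2)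
    have H9 := key (0:ℂ) ((-1/3:ℂ)*ω + (1/3:ℂ)*ω^2) ((1/3:ℂ)*ω + (-1/3:ℂ)*ω^2)
    have H10 := key ((1:ℂ)) ((1/3:ℂ) + (1/3:ℂ)*ω + (1/3:ℂ)*ω^2) ((1/3:ℂ) + (1/3:ℂ)*ω + (1/3:ℂ)*ω^2)
    obtain ⟨al1, hal1⟩ : ∃ z : ℂ, z = (p1+q1+r1)/3 := ⟨_, rfl⟩
    obtain ⟨be1, hbe1⟩ : ∃ z : ℂ, z = (p1+ω^2*q1+ω*r1)/3 := ⟨_, rfl⟩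
    obtain ⟨ga1, hga1⟩ : ∃ z : ℂ, z = (p1+ω*q1+ω^2*r1)/3 := ⟨_, rfl⟩
    obtain ⟨al2, hal2⟩ : ∃ z : ℂ, z = (p2+q2+r2)/3 := ⟨_, rfl⟩
    obtain ⟨be2, hbe2⟩ : ∃ z : ℂ, z = (p2+ω^2*q2+ω*r2)/3 := ⟨_, rfl⟩
    obtain ⟨ga2, hga2⟩ : ∃ z : ℂ, z = (p2+ω*q2+ω^2*r2)/3 := ⟨_, rfl⟩
    obtain ⟨al3, hal3⟩ : ∃ z : ℂ, z = (p3+q3+r3)/3 := ⟨_, rfl⟩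
    obtain ⟨be3, hbe3⟩ : ∃ z : ℂ, z = (p3+ω^2*q3+ω*r3)/3 := ⟨_, rfl⟩
    obtain ⟨ga3, hga3⟩ : ∃ z : ℂ, z = (p3+ω*q3+ω^2*r3)/3 := ⟨_, rfl⟩
    have Ec : ((1:ℂ)*al1*al2*al3 + (-1:ℂ)*c) = 0 := by linear_combination (norm := ring1) ((1:ℂ)*al2*al3) * hal1 + ((1/3:ℂ)*r1*al3 + (1/3:ℂ)*q1*al3 + (1/3:ℂ)*p1*al3) * hal2 + ((1/9:ℂ)*r1*r2 + (1/9:ℂ)*r1*q2 + (1/9:ℂ)*r1*p2 + (1/9:ℂ)*q1*r2 + (1/9:ℂ)*q1*q2 + (1/9:ℂ)*q1*p2 + (1/9:ℂ)*p1*r2 + (1/9:ℂ)*p1*q2 + (1/9:ℂ)*p1*p2) * hal3 + ((-1:ℂ)) * H1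
    have EA : ((1:ℂ)*be1*be2*be3 + (-1/9:ℂ)*b*ω + (1/9:ℂ)*b*ω^2 + (-1:ℂ)*a) = 0 := by linear_combination (norm := ring1) ((1:ℂ)*be2*be3) * hbe1 + ((1/3:ℂ)*p1*be3 + (1/3:ℂ)*ω*r1*be3 + (1/3:ℂ)*ω^2*q1*be3) * hbe2 + ((1/9:ℂ)*p1*p2 + (1/9:ℂ)*ω*r1*p2 + (1/9:ℂ)*ω*p1*r2 + (1/9:ℂ)*ω^2*r1*r2 + (1/9:ℂ)*ω^2*q1*p2 + (1/9:ℂ)*ω^2*p1*q2 + (1/9:ℂ)*ω^3*r1*q2 + (1/9:ℂ)*ω^3*q1*r2 + (1/9:ℂ)*ω^4*q1*q2) * hbe3 + ((-1:ℂ)) * H2 + ((1/27:ℂ)*d + (-1/27:ℂ)*d*ω + (-1/27:ℂ)*d*ω^3 + (1/27:ℂ)*d*ω^4 + (1/27:ℂ)*c + (2/27:ℂ)*c*ω + (1/9:ℂ)*c*ω^2 + (2/27:ℂ)*c*ω^3 + (1/27:ℂ)*c*ω^4 + (-2/27:ℂ)*b*ω + (1/9:ℂ)*b*ω^2 + (-1/27:ℂ)*b*ω^3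 + (-25/27:ℂ)*a + (22/27:ℂ)*a*ω + (-1/9:ℂ)*a*ω^2 + (-5/27:ℂ)*a*ω^3 + (2/27:ℂ)*a*ω^4) * hω
    have EB : ((1:ℂ)*ga1*ga2*ga3 + (1/9:ℂ)*b*ω + (-1/9:ℂ)*b*ω^2 + (-1:ℂ)*a) = 0 := by linear_combination (norm := ring1) ((1:ℂ)*ga2*ga3) * hga1 + ((1/3:ℂ)*p1*ga3 + (1/3:ℂ)*ω*q1*ga3 + (1/3:ℂ)*ω^2*r1*ga3) * hga2 + ((1/9:ℂ)*p1*p2 + (1/9:ℂ)*ω*q1*p2 + (1/9:ℂ)*ω*p1*q2 + (1/9:ℂ)*ω^2*r1*p2 + (1/9:ℂ)*ω^2*q1*q2 + (1/9:ℂ)*ω^2*p1*r2 + (1/9:ℂ)*ω^3*r1*q2 + (1/9:ℂ)*ω^3*q1*r2 + (1/9:ℂ)*ω^4*r1*r2) * hga3 + ((-1:ℂ)) * H3 + ((1/27:ℂ)*d + (-1/27:ℂ)*d*ω + (-1/27:ℂ)*d*ω^3 + (1/27:ℂ)*d*ω^4 + (1/27:ℂ)*c + (2/27:ℂ)*c*ω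 + (1/9:ℂ)*c*ω^2 + (2/27:ℂ)*c*ω^3 + (1/27:ℂ)*c*ω^4 + (2/27:ℂ)*b*ω + (-1/9:ℂ)*b*ω^2 + (1/27:ℂ)*b*ω^3 + (-25/27:ℂ)*a + (22/27:ℂ)*a*ω + (-1/9:ℂ)*a*ω^2 + (-5/27:ℂ)*a*ω^3 + (2/27:ℂ)*a*ω^4) * hω
    have Ed : ((1:ℂ)*ga1*be2*al3 + (1:ℂ)*ga1*al2*be3 + (1:ℂ)*be1*ga2*al3 + (1:ℂ)*be1*al2*ga3 + (1:ℂ)*al1*ga2*be3 + (1:ℂ)*al1*be2*ga3 + (-1:ℂ)*d) = 0 := by linear_combination (norm := ring1) ((1:ℂ)*ga2*be3 + (1:ℂ)*be2*ga3) * hal1 + ((1:ℂ)*ga2*al3 + (1:ℂ)*al2*ga3) * hbe1 + ((1:ℂ)*be2*al3 + (1:ℂ)*al2*be3) * hga1 + ((1/3:ℂ)*p1*ga3 + (1/3:ℂ)*p1*be3 + (1/3:ℂ)*ω*r1*ga3 + (1/3:ℂ)*ω*q1*be3 + (1/3:ℂ)*ω^2*r1*be3 + (1/3:ℂ)*ω^2*q1*ga3)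 * hal2 + ((1/3:ℂ)*r1*ga3 + (1/3:ℂ)*q1*ga3 + (1/3:ℂ)*p1*ga3 + (1/3:ℂ)*p1*al3 + (1/3:ℂ)*ω*q1*al3 + (1/3:ℂ)*ω^2*r1*al3) * hbe2 + ((1/3:ℂ)*r1*be3 + (1/3:ℂ)*q1*be3 + (1/3:ℂ)*p1*be3 + (1/3:ℂ)*p1*al3 + (1/3:ℂ)*ω*r1*al3 + (1/3:ℂ)*ω^2*q1*al3) * hga2 + ((2/9:ℂ)*p1*p2 + (1/9:ℂ)*ω*r1*p2 + (1/9:ℂ)*ω*q1*p2 + (1/9:ℂ)*ω*p1*r2 + (1/9:ℂ)*ω*p1*q2 + (1/9:ℂ)*ω^2*r1*q2 + (1/9:ℂ)*ω^2*r1*p2 + (1/9:ℂ)*ω^2*q1*r2 + (1/9:ℂ)*ω^2*q1*p2 + (1/9:ℂ)*ω^2*p1*r2 + (1/9:ℂ)*ω^2*p1*q2 + (2/9:ℂ)*ω^3*r1*r2 + (2/9:ℂ)*ω^3*q1*q2 + (1/9:ℂ)*ω^4*r1*q2 + (1/9:ℂ)*ω^4*q1*r2) * hal3 + ((1/9:ℂ)*r1*p2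 + (1/9:ℂ)*q1*p2 + (1/9:ℂ)*p1*r2 + (1/9:ℂ)*p1*q2 + (2/9:ℂ)*p1*p2 + (1/9:ℂ)*ω*r1*q2 + (1/9:ℂ)*ω*q1*r2 + (2/9:ℂ)*ω*q1*q2 + (1/9:ℂ)*ω*q1*p2 + (1/9:ℂ)*ω*p1*q2 + (2/9:ℂ)*ω^2*r1*r2 + (1/9:ℂ)*ω^2*r1*q2 + (1/9:ℂ)*ω^2*r1*p2 + (1/9:ℂ)*ω^2*q1*r2 + (1/9:ℂ)*ω^2*p1*r2) * hbe3 + ((1/9:ℂ)*r1*p2 + (1/9:ℂ)*q1*p2 + (1/9:ℂ)*p1*r2 + (1/9:ℂ)*p1*q2 + (2/9:ℂ)*p1*p2 + (2/9:ℂ)*ω*r1*r2 + (1/9:ℂ)*ω*r1*q2 + (1/9:ℂ)*ω*r1*p2 + (1/9:ℂ)*ω*q1*r2 + (1/9:ℂ)*ω*p1*r2 + (1/9:ℂ)*ω^2*r1*q2 + (1/9:ℂ)*ω^2*q1*r2 + (2/9:ℂ)*ω^2*q1*q2 + (1/9:ℂ)*ω^2*q1*p2 + (1/9:ℂ)*ω^2*p1*q2)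 * hga3 + ((-1:ℂ)) * H1 + ((-1:ℂ)) * H2 + ((-1:ℂ)) * H3 + ((1:ℂ)) * H4 + ((1:ℂ)) * H6 + ((1:ℂ)) * H8 + ((-1:ℂ)) * H10 + ((-7/9:ℂ)*d + (5/9:ℂ)*d*ω + (-1/9:ℂ)*d*ω^2 + (2/3:ℂ)*c + (2/3:ℂ)*c*ω + (2/3:ℂ)*c*ω^2) * hω
    have E1 : ((1:ℂ)*be1*al2*al3 + (1:ℂ)*al1*be2*al3 + (1:ℂ)*al1*al2*be3) = 0 := by linear_combination (norm := ring1) ((1:ℂ)*be2*al3 + (1:ℂ)*al2*be3) * hal1 + ((1:ℂ)*al2*al3) * hbe1 + ((1/3:ℂ)*r1*be3 + (1/3:ℂ)*q1*be3 + (1/3:ℂ)*p1*be3 + (1/3:ℂ)*p1*al3 + (1/3:ℂ)*ω*r1*al3 + (1/3:ℂ)*ω^2*q1*al3) * hal2 + ((1/3:ℂ)*r1*al3 + (1/3:ℂ)*q1*al3 + (1/3:ℂ)*p1*al3) * hbe2 + ((1/9:ℂ)*r1*p2 + (1/9:ℂ)*q1*p2 + (1/9:ℂ)*p1*r2 + (1/9:ℂ)*p1*q2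 + (2/9:ℂ)*p1*p2 + (2/9:ℂ)*ω*r1*r2 + (1/9:ℂ)*ω*r1*q2 + (1/9:ℂ)*ω*r1*p2 + (1/9:ℂ)*ω*q1*r2 + (1/9:ℂ)*ω*p1*r2 + (1/9:ℂ)*ω^2*r1*q2 + (1/9:ℂ)*ω^2*q1*r2 + (2/9:ℂ)*ω^2*q1*q2 + (1/9:ℂ)*ω^2*q1*p2 + (1/9:ℂ)*ω^2*p1*q2) * hal3 + ((1/9:ℂ)*r1*r2 + (1/9:ℂ)*r1*q2 + (1/9:ℂ)*r1*p2 + (1/9:ℂ)*q1*r2 + (1/9:ℂ)*q1*q2 + (1/9:ℂ)*q1*p2 + (1/9:ℂ)*p1*r2 + (1/9:ℂ)*p1*q2 + (1/9:ℂ)*p1*p2) * hbe3 + ((1:ℂ)) * H2 + ((-1/2:ℂ)) * H4 + ((1/2:ℂ)) * H5 + ((1:ℂ)*c) * hω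
    have E2 : ((1:ℂ)*ga1*al2*al3 + (1:ℂ)*al1*ga2*al3 + (1:ℂ)*al1*al2*ga3) = 0 := by linear_combination (norm := ring1) ((1:ℂ)*ga2*al3 + (1:ℂ)*al2*ga3) * hal1 + ((1:ℂ)*al2*al3) * hga1 + ((1/3:ℂ)*r1*ga3 + (1/3:ℂ)*q1*ga3 + (1/3:ℂ)*p1*ga3 + (1/3:ℂ)*p1*al3 + (1/3:ℂ)*ω*q1*al3 + (1/3:ℂ)*ω^2*r1*al3) * hal2 + ((1/3:ℂ)*r1*al3 + (1/3:ℂ)*q1*al3 + (1/3:ℂ)*p1*al3) * hga2 + ((1/9:ℂ)*r1*p2 + (1/9:ℂ)*q1*p2 + (1/9:ℂ)*p1*r2 + (1/9:ℂ)*p1*q2 + (2/9:ℂ)*p1*p2 + (1/9:ℂ)*ω*r1*q2 + (1/9:ℂ)*ω*q1*r2 + (2/9:ℂ)*ω*q1*q2 + (1/9:ℂ)*ω*q1*p2 + (1/9:ℂ)*ω*p1*q2 + (2/9:ℂ)*ω^2*r1*r2 + (1/9:ℂ)*ω^2*r1*q2 + (1/9:ℂ)*ω^2*r1*p2 + (1/9:ℂ)*ω^2*q1*r2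 + (1/9:ℂ)*ω^2*p1*r2) * hal3 + ((1/9:ℂ)*r1*r2 + (1/9:ℂ)*r1*q2 + (1/9:ℂ)*r1*p2 + (1/9:ℂ)*q1*r2 + (1/9:ℂ)*q1*q2 + (1/9:ℂ)*q1*p2 + (1/9:ℂ)*p1*r2 + (1/9:ℂ)*p1*q2 + (1/9:ℂ)*p1*p2) * hga3 + ((1:ℂ)) * H3 + ((-1/2:ℂ)) * H6 + ((1/2:ℂ)) * H7 + ((1:ℂ)*c) * hω
    have E3 : ((1:ℂ)*be1*be2*al3 + (1:ℂ)*be1*al2*be3 + (1:ℂ)*al1*be2*be3) = 0 := by linear_combination (norm := ring1) ((1:ℂ)*be2*be3) * hal1 + ((1:ℂ)*be2*al3 + (1:ℂ)*al2*be3) * hbe1 + ((1/3:ℂ)*p1*be3 + (1/3:ℂ)*ω*r1*be3 + (1/3:ℂ)*ω^2*q1*be3) * hal2 + ((1/3:ℂ)*r1*be3 + (1/3:ℂ)*q1*be3 + (1/3:ℂ)*p1*be3 + (1/3:ℂ)*p1*al3 + (1/3:ℂ)*ω*r1*al3 + (1/3:ℂ)*ω^2*q1*al3) * hbe2 + ((1/9:ℂ)*p1*p2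 + (1/9:ℂ)*ω*r1*p2 + (1/9:ℂ)*ω*p1*r2 + (1/9:ℂ)*ω^2*r1*r2 + (1/9:ℂ)*ω^2*q1*p2 + (1/9:ℂ)*ω^2*p1*q2 + (1/9:ℂ)*ω^3*r1*q2 + (1/9:ℂ)*ω^3*q1*r2 + (1/9:ℂ)*ω^4*q1*q2) * hal3 + ((1/9:ℂ)*r1*p2 + (1/9:ℂ)*q1*p2 + (1/9:ℂ)*p1*r2 + (1/9:ℂ)*p1*q2 + (2/9:ℂ)*p1*p2 + (2/9:ℂ)*ω*r1*r2 + (1/9:ℂ)*ω*r1*q2 + (1/9:ℂ)*ω*r1*p2 + (1/9:ℂ)*ω*q1*r2 + (1/9:ℂ)*ω*p1*r2 + (1/9:ℂ)*ω^2*r1*q2 + (1/9:ℂ)*ω^2*q1*r2 + (2/9:ℂ)*ω^2*q1*q2 + (1/9:ℂ)*ω^2*q1*p2 + (1/9:ℂ)*ω^2*p1*q2) * hbe3 + ((1:ℂ)) * H1 + ((-1/2:ℂ)) * H4 + ((-1/2:ℂ)) * H5 + ((1/9:ℂ)*d + (-2/9:ℂ)*d*ω + (1/9:ℂ)*d*ω^2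 + (1/3:ℂ)*c + (1/3:ℂ)*c*ω + (1/3:ℂ)*c*ω^2) * hω
    have E4 : ((1:ℂ)*ga1*be2*be3 + (1:ℂ)*be1*ga2*be3 + (1:ℂ)*be1*be2*ga3) = 0 := by linear_combination (norm := ring1) ((1:ℂ)*ga2*be3 + (1:ℂ)*be2*ga3) * hbe1 + ((1:ℂ)*be2*be3) * hga1 + ((1/3:ℂ)*p1*ga3 + (1/3:ℂ)*p1*be3 + (1/3:ℂ)*ω*r1*ga3 + (1/3:ℂ)*ω*q1*be3 + (1/3:ℂ)*ω^2*r1*be3 + (1/3:ℂ)*ω^2*q1*ga3) * hbe2 + ((1/3:ℂ)*p1*be3 + (1/3:ℂ)*ω*r1*be3 + (1/3:ℂ)*ω^2*q1*be3) * hga2 + ((2/9:ℂ)*p1*p2 + (1/9:ℂ)*ω*r1*p2 + (1/9:ℂ)*ω*q1*p2 + (1/9:ℂ)*ω*p1*r2 + (1/9:ℂ)*ω*p1*q2 + (1/9:ℂ)*ω^2*r1*q2 + (1/9:ℂ)*ω^2*r1*p2 + (1/9:ℂ)*ω^2*q1*r2 + (1/9:ℂ)*ω^2*q1*p2 + (1/9:ℂ)*ω^2*p1*r2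 + (1/9:ℂ)*ω^2*p1*q2 + (2/9:ℂ)*ω^3*r1*r2 + (2/9:ℂ)*ω^3*q1*q2 + (1/9:ℂ)*ω^4*r1*q2 + (1/9:ℂ)*ω^4*q1*r2) * hbe3 + ((1/9:ℂ)*p1*p2 + (1/9:ℂ)*ω*r1*p2 + (1/9:ℂ)*ω*p1*r2 + (1/9:ℂ)*ω^2*r1*r2 + (1/9:ℂ)*ω^2*q1*p2 + (1/9:ℂ)*ω^2*p1*q2 + (1/9:ℂ)*ω^3*r1*q2 + (1/9:ℂ)*ω^3*q1*r2 + (1/9:ℂ)*ω^4*q1*q2) * hga3 + ((1:ℂ)) * H3 + ((-1/2:ℂ)) * H8 + ((1/2:ℂ)) * H9 + ((1/9:ℂ)*d + (-1/9:ℂ)*d*ω + (-1/9:ℂ)*d*ω^2 + (1/9:ℂ)*d*ω^3 + (1/9:ℂ)*c + (2/9:ℂ)*c*ω + (1/3:ℂ)*c*ω^2 + (2/9:ℂ)*c*ω^3 + (1/9:ℂ)*c*ω^4 + (1/27:ℂ)*b*ω + (-1/9:ℂ)*b*ω^2 + (1/9:ℂ)*b*ω^3 + (-1/27:ℂ)*b*ω^4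 + (2/9:ℂ)*a + (-5/9:ℂ)*a*ω + (1/3:ℂ)*a*ω^2 + (1/9:ℂ)*a*ω^3 + (-1/9:ℂ)*a*ω^4) * hω
    have E5 : ((1:ℂ)*ga1*ga2*al3 + (1:ℂ)*ga1*al2*ga3 + (1:ℂ)*al1*ga2*ga3) = 0 := by linear_combination (norm := ring1) ((1:ℂ)*ga2*ga3) * hal1 + ((1:ℂ)*ga2*al3 + (1:ℂ)*al2*ga3) * hga1 + ((1/3:ℂ)*p1*ga3 + (1/3:ℂ)*ω*q1*ga3 + (1/3:ℂ)*ω^2*r1*ga3) * hal2 + ((1/3:ℂ)*r1*ga3 + (1/3:ℂ)*q1*ga3 + (1/3:ℂ)*p1*ga3 + (1/3:ℂ)*p1*al3 + (1/3:ℂ)*ω*q1*al3 + (1/3:ℂ)*ω^2*r1*al3) * hga2 + ((1/9:ℂ)*p1*p2 + (1/9:ℂ)*ω*q1*p2 + (1/9:ℂ)*ω*p1*q2 + (1/9:ℂ)*ω^2*r1*p2 + (1/9:ℂ)*ω^2*q1*q2 + (1/9:ℂ)*ω^2*p1*r2 + (1/9:ℂ)*ω^3*r1*q2 + (1/9:ℂ)*ω^3*q1*r2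 + (1/9:ℂ)*ω^4*r1*r2) * hal3 + ((1/9:ℂ)*r1*p2 + (1/9:ℂ)*q1*p2 + (1/9:ℂ)*p1*r2 + (1/9:ℂ)*p1*q2 + (2/9:ℂ)*p1*p2 + (1/9:ℂ)*ω*r1*q2 + (1/9:ℂ)*ω*q1*r2 + (2/9:ℂ)*ω*q1*q2 + (1/9:ℂ)*ω*q1*p2 + (1/9:ℂ)*ω*p1*q2 + (2/9:ℂ)*ω^2*r1*r2 + (1/9:ℂ)*ω^2*r1*q2 + (1/9:ℂ)*ω^2*r1*p2 + (1/9:ℂ)*ω^2*q1*r2 + (1/9:ℂ)*ω^2*p1*r2) * hga3 + ((1:ℂ)) * H1 + ((-1/2:ℂ)) * H6 + ((-1/2:ℂ)) * H7 + ((1/9:ℂ)*d + (-2/9:ℂ)*d*ω + (1/9:ℂ)*d*ω^2 + (1/3:ℂ)*c + (1/3:ℂ)*c*ω + (1/3:ℂ)*c*ω^2) * hω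
    have E6 : ((1:ℂ)*ga1*ga2*be3 + (1:ℂ)*ga1*be2*ga3 + (1:ℂ)*be1*ga2*ga3) = 0 := by linear_combination (norm := ring1) ((1:ℂ)*ga2*ga3) * hbe1 + ((1:ℂ)*ga2*be3 + (1:ℂ)*be2*ga3) * hga1 + ((1/3:ℂ)*p1*ga3 + (1/3:ℂ)*ω*q1*ga3 + (1/3:ℂ)*ω^2*r1*ga3) * hbe2 + ((1/3:ℂ)*p1*ga3 + (1/3:ℂ)*p1*be3 + (1/3:ℂ)*ω*r1*ga3 + (1/3:ℂ)*ω*q1*be3 + (1/3:ℂ)*ω^2*r1*be3 + (1/3:ℂ)*ω^2*q1*ga3) * hga2 + ((1/9:ℂ)*p1*p2 + (1/9:ℂ)*ω*q1*p2 + (1/9:ℂ)*ω*p1*q2 + (1/9:ℂ)*ω^2*r1*p2 + (1/9:ℂ)*ω^2*q1*q2 + (1/9:ℂ)*ω^2*p1*r2 + (1/9:ℂ)*ω^3*r1*q2 + (1/9:ℂ)*ω^3*q1*r2 + (1/9:ℂ)*ω^4*r1*r2) * hbe3 + ((2/9:ℂ)*p1*p2 + (1/9:ℂ)*ω*r1*p2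 + (1/9:ℂ)*ω*q1*p2 + (1/9:ℂ)*ω*p1*r2 + (1/9:ℂ)*ω*p1*q2 + (1/9:ℂ)*ω^2*r1*q2 + (1/9:ℂ)*ω^2*r1*p2 + (1/9:ℂ)*ω^2*q1*r2 + (1/9:ℂ)*ω^2*q1*p2 + (1/9:ℂ)*ω^2*p1*r2 + (1/9:ℂ)*ω^2*p1*q2 + (2/9:ℂ)*ω^3*r1*r2 + (2/9:ℂ)*ω^3*q1*q2 + (1/9:ℂ)*ω^4*r1*q2 + (1/9:ℂ)*ω^4*q1*r2) * hga3 + ((1:ℂ)) * H2 + ((-1/2:ℂ)) * H8 + ((-1/2:ℂ)) * H9 + ((1/9:ℂ)*d + (-1/9:ℂ)*d*ω + (-1/9:ℂ)*d*ω^2 + (1/9:ℂ)*d*ω^3 + (1/9:ℂ)*c + (2/9:ℂ)*c*ω + (1/3:ℂ)*c*ω^2 + (2/9:ℂ)*c*ω^3 + (1/9:ℂ)*c*ω^4 + (-1/27:ℂ)*b*ω + (1/9:ℂ)*b*ω^2 + (-1/9:ℂ)*b*ω^3 + (1/27:ℂ)*b*ω^4 + (2/9:ℂ)*a + (-5/9:ℂ)*a*ω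 + (1/3:ℂ)*a*ω^2 + (1/9:ℂ)*a*ω^3 + (-1/9:ℂ)*a*ω^4) * hω
    have hTA : (a + (ω - ω^2)/9 * b) * ((27*a^2+b^2)*c + d^3) = 0 := by linear_combination (norm := ring1) ((-1/9:ℂ)*b^3*ω + (1/9:ℂ)*b^3*ω^2 + (-1:ℂ)*a*b^2 + (-3:ℂ)*a^2*b*ω + (3:ℂ)*a^2*b*ω^2 + (-27:ℂ)*a^3) * Ec + ((-1:ℂ)*ga1^3*be2^3*al3^3 + (-3:ℂ)*ga1^3*al2*be2^2*al3^2*be3 + (-3:ℂ)*ga1^3*al2^2*be2*al3*be3^2 + (-1:ℂ)*ga1^3*al2^3*be3^3 + (-3:ℂ)*be1*ga1^2*be2^2*ga2*al3^3 + (-6:ℂ)*be1*ga1^2*al2*be2*ga2*al3^2*be3 + (-3:ℂ)*be1*ga1^2*al2*be2^2*al3^2*ga3 + (-3:ℂ)*be1*ga1^2*al2^2*ga2*al3*be3^2 + (-6:ℂ)*be1*ga1^2*al2^2*be2*al3*be3*ga3 + (-3:ℂ)*be1*ga1^2*al2^3*be3^2*ga3 + (-3:ℂ)*be1^2*ga1*be2*ga2^2*al3^3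 + (-3:ℂ)*be1^2*ga1*al2*ga2^2*al3^2*be3 + (-6:ℂ)*be1^2*ga1*al2*be2*ga2*al3^2*ga3 + (-6:ℂ)*be1^2*ga1*al2^2*ga2*al3*be3*ga3 + (-3:ℂ)*be1^2*ga1*al2^2*be2*al3*ga3^2 + (-3:ℂ)*be1^2*ga1*al2^3*be3*ga3^2 + (-1:ℂ)*be1^3*ga2^3*al3^3 + (-3:ℂ)*be1^3*al2*ga2^2*al3^2*ga3 + (-3:ℂ)*be1^3*al2^2*ga2*al3*ga3^2 + (-1:ℂ)*be1^3*al2^3*ga3^3 + (-3:ℂ)*al1*ga1^2*be2^2*ga2*al3^2*be3 + (-3:ℂ)*al1*ga1^2*be2^3*al3^2*ga3 + (-6:ℂ)*al1*ga1^2*al2*be2*ga2*al3*be3^2 + (-6:ℂ)*al1*ga1^2*al2*be2^2*al3*be3*ga3 + (-3:ℂ)*al1*ga1^2*al2^2*ga2*be3^3 + (-3:ℂ)*al1*ga1^2*al2^2*be2*be3^2*ga3 + (-6:ℂ)*al1*be1*ga1*be2*ga2^2*al3^2*be3 + (-6:ℂ)*al1*be1*ga1*be2^2*ga2*al3^2*ga3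 + (-6:ℂ)*al1*be1*ga1*al2*ga2^2*al3*be3^2 + (-12:ℂ)*al1*be1*ga1*al2*be2*ga2*al3*be3*ga3 + (-6:ℂ)*al1*be1*ga1*al2*be2^2*al3*ga3^2 + (-6:ℂ)*al1*be1*ga1*al2^2*ga2*be3^2*ga3 + (-6:ℂ)*al1*be1*ga1*al2^2*be2*be3*ga3^2 + (-3:ℂ)*al1*be1^2*ga2^3*al3^2*be3 + (-3:ℂ)*al1*be1^2*be2*ga2^2*al3^2*ga3 + (-6:ℂ)*al1*be1^2*al2*ga2^2*al3*be3*ga3 + (-6:ℂ)*al1*be1^2*al2*be2*ga2*al3*ga3^2 + (-27:ℂ)*al1*be1^2*al2*be2^2*al3*be3^2 + (-3:ℂ)*al1*be1^2*al2^2*ga2*be3*ga3^2 + (-3:ℂ)*al1*be1^2*al2^2*be2*ga3^3 + (-3:ℂ)*al1^2*ga1*be2*ga2^2*al3*be3^2 + (-6:ℂ)*al1^2*ga1*be2^2*ga2*al3*be3*ga3 + (-3:ℂ)*al1^2*ga1*be2^3*al3*ga3^2 + (-3:ℂ)*al1^2*ga1*al2*ga2^2*be3^3 + (-6:ℂ)*al1^2*ga1*al2*be2*ga2*be3^2*ga3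 + (-3:ℂ)*al1^2*ga1*al2*be2^2*be3*ga3^2 + (-3:ℂ)*al1^2*be1*ga2^3*al3*be3^2 + (-6:ℂ)*al1^2*be1*be2*ga2^2*al3*be3*ga3 + (-3:ℂ)*al1^2*be1*be2^2*ga2*al3*ga3^2 + (-3:ℂ)*al1^2*be1*al2*ga2^2*be3^2*ga3 + (-6:ℂ)*al1^2*be1*al2*be2*ga2*be3*ga3^2 + (-3:ℂ)*al1^2*be1*al2*be2^2*ga3^3 + (-1:ℂ)*al1^3*ga2^3*be3^3 + (-3:ℂ)*al1^3*be2*ga2^2*be3^2*ga3 + (-3:ℂ)*al1^3*be2^2*ga2*be3*ga3^2 + (-1:ℂ)*al1^3*be2^3*ga3^3 + (9/4:ℂ)*ω^2*al1*be1*ga1*al2*be2*ga2*al3*be3*ga3 + (-45/4:ℂ)*ω^2*al1*be1^2*al2*be2^2*al3*be3^2 + (-9/2:ℂ)*ω^3*al1*be1*ga1*al2*be2*ga2*al3*be3*ga3 + (45/2:ℂ)*ω^3*al1*be1^2*al2*be2^2*al3*be3^2 + (3:ℂ)*ω^4*al1*be1*ga1*al2*be2*ga2*al3*be3*ga3 +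 (-12:ℂ)*ω^4*al1*be1^2*al2*be2^2*al3*be3^2 + (-3:ℂ)*ω^5*al1*be1*ga1*al2*be2*ga2*al3*be3*ga3 + (3:ℂ)*ω^5*al1*be1^2*al2*be2^2*al3*be3^2 + (9/2:ℂ)*ω^6*al1*be1*ga1*al2*be2*ga2*al3*be3*ga3 + (-9/2:ℂ)*ω^6*al1*be1^2*al2*be2^2*al3*be3^2 + (-3:ℂ)*ω^7*al1*be1*ga1*al2*be2*ga2*al3*be3*ga3 + (3:ℂ)*ω^7*al1*be1^2*al2*be2^2*al3*be3^2 + (3/4:ℂ)*ω^8*al1*be1*ga1*al2*be2*ga2*al3*be3*ga3 + (-3/4:ℂ)*ω^8*al1*be1^2*al2*be2^2*al3*be3^2 + (9/2:ℂ)*b*ω*al1*be1*al2*be2*al3*be3 + (-9/2:ℂ)*b*ω^2*al1*be1*al2*be2*al3*be3 + (1/2:ℂ)*b*ω^3*al1*be1*al2*be2*al3*be3 + (-3/2:ℂ)*b*ω^4*al1*be1*al2*be2*al3*be3 + (3/2:ℂ)*b*ω^5*al1*be1*al2*be2*al3*be3 + (-1/2:ℂ)*b*ω^6*al1*be1*al2*be2*al3*be3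 + (-1:ℂ)*b^2*al1*al2*al3 + (-27:ℂ)*a*al1*be1*al2*be2*al3*be3 + (-27:ℂ)*a^2*al1*al2*al3) * EA + ((-9/4:ℂ)*ω^2*al1*be1*ga1*al2*be2*ga2*al3*be3*ga3 + (45/4:ℂ)*ω^2*al1*be1^2*al2*be2^2*al3*be3^2 + (9/2:ℂ)*ω^3*al1*be1*ga1*al2*be2*ga2*al3*be3*ga3 + (-45/2:ℂ)*ω^3*al1*be1^2*al2*be2^2*al3*be3^2 + (-3:ℂ)*ω^4*al1*be1*ga1*al2*be2*ga2*al3*be3*ga3 + (12:ℂ)*ω^4*al1*be1^2*al2*be2^2*al3*be3^2 + (3:ℂ)*ω^5*al1*be1*ga1*al2*be2*ga2*al3*be3*ga3 + (-3:ℂ)*ω^5*al1*be1^2*al2*be2^2*al3*be3^2 + (-9/2:ℂ)*ω^6*al1*be1*ga1*al2*be2*ga2*al3*be3*ga3 + (9/2:ℂ)*ω^6*al1*be1^2*al2*be2^2*al3*be3^2 + (3:ℂ)*ω^7*al1*be1*ga1*al2*be2*ga2*al3*be3*ga3 + (-3:ℂ)*ω^7*al1*be1^2*al2*be2^2*al3*be3^2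 + (-3/4:ℂ)*ω^8*al1*be1*ga1*al2*be2*ga2*al3*be3*ga3 + (3/4:ℂ)*ω^8*al1*be1^2*al2*be2^2*al3*be3^2 + (-3/2:ℂ)*b*ω*al1*be1*al2*be2*al3*be3 + (3/2:ℂ)*b*ω^2*al1*be1*al2*be2*al3*be3 + (-1/2:ℂ)*b*ω^3*al1*be1*al2*be2*al3*be3 + (3/2:ℂ)*b*ω^4*al1*be1*al2*be2*al3*be3 + (-3/2:ℂ)*b*ω^5*al1*be1*al2*be2*al3*be3 + (1/2:ℂ)*b*ω^6*al1*be1*al2*be2*al3*be3) * EB + ((-1/9:ℂ)*b*ω*ga1^2*be2^2*al3^2 + (-2/9:ℂ)*b*ω*ga1^2*al2*be2*al3*be3 + (-1/9:ℂ)*b*ω*ga1^2*al2^2*be3^2 + (-2/9:ℂ)*b*ω*be1*ga1*be2*ga2*al3^2 + (-2/9:ℂ)*b*ω*be1*ga1*al2*ga2*al3*be3 + (-2/9:ℂ)*b*ω*be1*ga1*al2*be2*al3*ga3 + (-2/9:ℂ)*b*ω*be1*ga1*al2^2*be3*ga3 + (-1/9:ℂ)*b*ω*be1^2*ga2^2*al3^2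 + (-2/9:ℂ)*b*ω*be1^2*al2*ga2*al3*ga3 + (-1/9:ℂ)*b*ω*be1^2*al2^2*ga3^2 + (-2/9:ℂ)*b*ω*al1*ga1*be2*ga2*al3*be3 + (-2/9:ℂ)*b*ω*al1*ga1*be2^2*al3*ga3 + (-2/9:ℂ)*b*ω*al1*ga1*al2*ga2*be3^2 + (-2/9:ℂ)*b*ω*al1*ga1*al2*be2*be3*ga3 + (-2/9:ℂ)*b*ω*al1*be1*ga2^2*al3*be3 + (-2/9:ℂ)*b*ω*al1*be1*be2*ga2*al3*ga3 + (-2/9:ℂ)*b*ω*al1*be1*al2*ga2*be3*ga3 + (-2/9:ℂ)*b*ω*al1*be1*al2*be2*ga3^2 + (-1/9:ℂ)*b*ω*al1^2*ga2^2*be3^2 + (-2/9:ℂ)*b*ω*al1^2*be2*ga2*be3*ga3 + (-1/9:ℂ)*b*ω*al1^2*be2^2*ga3^2 + (1/9:ℂ)*b*ω^2*ga1^2*be2^2*al3^2 + (2/9:ℂ)*b*ω^2*ga1^2*al2*be2*al3*be3 + (1/9:ℂ)*b*ω^2*ga1^2*al2^2*be3^2 + (2/9:ℂ)*b*ω^2*be1*ga1*be2*ga2*al3^2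 + (2/9:ℂ)*b*ω^2*be1*ga1*al2*ga2*al3*be3 + (2/9:ℂ)*b*ω^2*be1*ga1*al2*be2*al3*ga3 + (2/9:ℂ)*b*ω^2*be1*ga1*al2^2*be3*ga3 + (1/9:ℂ)*b*ω^2*be1^2*ga2^2*al3^2 + (2/9:ℂ)*b*ω^2*be1^2*al2*ga2*al3*ga3 + (1/9:ℂ)*b*ω^2*be1^2*al2^2*ga3^2 + (2/9:ℂ)*b*ω^2*al1*ga1*be2*ga2*al3*be3 + (2/9:ℂ)*b*ω^2*al1*ga1*be2^2*al3*ga3 + (2/9:ℂ)*b*ω^2*al1*ga1*al2*ga2*be3^2 + (2/9:ℂ)*b*ω^2*al1*ga1*al2*be2*be3*ga3 + (2/9:ℂ)*b*ω^2*al1*be1*ga2^2*al3*be3 + (2/9:ℂ)*b*ω^2*al1*be1*be2*ga2*al3*ga3 + (2/9:ℂ)*b*ω^2*al1*be1*al2*ga2*be3*ga3 + (2/9:ℂ)*b*ω^2*al1*be1*al2*be2*ga3^2 + (1/9:ℂ)*b*ω^2*al1^2*ga2^2*be3^2 + (2/9:ℂ)*b*ω^2*al1^2*be2*ga2*be3*ga3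 + (1/9:ℂ)*b*ω^2*al1^2*be2^2*ga3^2 + (-1/9:ℂ)*b*d*ω*ga1*be2*al3 + (-1/9:ℂ)*b*d*ω*ga1*al2*be3 + (-1/9:ℂ)*b*d*ω*be1*ga2*al3 + (-1/9:ℂ)*b*d*ω*be1*al2*ga3 + (-1/9:ℂ)*b*d*ω*al1*ga2*be3 + (-1/9:ℂ)*b*d*ω*al1*be2*ga3 + (1/9:ℂ)*b*d*ω^2*ga1*be2*al3 + (1/9:ℂ)*b*d*ω^2*ga1*al2*be3 + (1/9:ℂ)*b*d*ω^2*be1*ga2*al3 + (1/9:ℂ)*b*d*ω^2*be1*al2*ga3 + (1/9:ℂ)*b*d*ω^2*al1*ga2*be3 + (1/9:ℂ)*b*d*ω^2*al1*be2*ga3 + (-1/9:ℂ)*b*d^2*ω + (1/9:ℂ)*b*d^2*ω^2 + (-1:ℂ)*a*ga1^2*be2^2*al3^2 + (-2:ℂ)*a*ga1^2*al2*be2*al3*be3 + (-1:ℂ)*a*ga1^2*al2^2*be3^2 + (-2:ℂ)*a*be1*ga1*be2*ga2*al3^2 + (-2:ℂ)*a*be1*ga1*al2*ga2*al3*be3 +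 (-2:ℂ)*a*be1*ga1*al2*be2*al3*ga3 + (-2:ℂ)*a*be1*ga1*al2^2*be3*ga3 + (-1:ℂ)*a*be1^2*ga2^2*al3^2 + (-2:ℂ)*a*be1^2*al2*ga2*al3*ga3 + (-1:ℂ)*a*be1^2*al2^2*ga3^2 + (-2:ℂ)*a*al1*ga1*be2*ga2*al3*be3 + (-2:ℂ)*a*al1*ga1*be2^2*al3*ga3 + (-2:ℂ)*a*al1*ga1*al2*ga2*be3^2 + (-2:ℂ)*a*al1*ga1*al2*be2*be3*ga3 + (-2:ℂ)*a*al1*be1*ga2^2*al3*be3 + (-2:ℂ)*a*al1*be1*be2*ga2*al3*ga3 + (-2:ℂ)*a*al1*be1*al2*ga2*be3*ga3 + (-2:ℂ)*a*al1*be1*al2*be2*ga3^2 + (-1:ℂ)*a*al1^2*ga2^2*be3^2 + (-2:ℂ)*a*al1^2*be2*ga2*be3*ga3 + (-1:ℂ)*a*al1^2*be2^2*ga3^2 + (-1:ℂ)*a*d*ga1*be2*al3 + (-1:ℂ)*a*d*ga1*al2*be3 + (-1:ℂ)*a*d*be1*ga2*al3 + (-1:ℂ)*a*d*be1*al2*ga3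 + (-1:ℂ)*a*d*al1*ga2*be3 + (-1:ℂ)*a*d*al1*be2*ga3 + (-1:ℂ)*a*d^2) * Ed + ((2:ℂ)*ga1^3*be2^3*al3*be3^2 + (3:ℂ)*ga1^3*al2*be2^2*be3^3 + (3:ℂ)*be1*ga1^2*be2^2*ga2*al3*be3^2 + (3:ℂ)*be1*ga1^2*be2^3*al3*be3*ga3 + (3:ℂ)*be1*ga1^2*al2*be2*ga2*be3^3 + (6:ℂ)*be1*ga1^2*al2*be2^2*be3^2*ga3 + (6:ℂ)*be1^2*ga1*be2^2*ga2*al3*be3*ga3 + (6:ℂ)*be1^2*ga1*al2*be2*ga2*be3^2*ga3 + (3:ℂ)*be1^2*ga1*al2*be2^2*be3*ga3^2 + (-1:ℂ)*be1^3*ga2^3*al3*be3^2 + (3:ℂ)*be1^3*be2*ga2^2*al3*be3*ga3 + (3:ℂ)*be1^3*al2*be2*ga2*be3*ga3^2 + (1:ℂ)*be1^3*al2*be2^2*ga3^3 + (-6:ℂ)*al1*ga1^2*be2^3*be3^2*ga3 + (3:ℂ)*al1*be1*ga1*be2*ga2^2*be3^3 + (13:ℂ)*al1*be1*ga1*be2^2*ga2*be3^2*ga3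 + (3:ℂ)*al1*be1*ga1*be2^3*be3*ga3^2 + (-2:ℂ)*al1*be1^2*ga2^3*be3^3 + (3:ℂ)*al1*be1^2*be2*ga2^2*be3^2*ga3 + (-5:ℂ)*al1*be1^2*be2^2*ga2*be3*ga3^2 + (2:ℂ)*al1*be1^2*be2^3*ga3^3) * E1 + ((-5:ℂ)*al1*ga1^2*be2^3*be3^3 + (-14:ℂ)*al1*be1^2*be2^3*be3*ga3^2) * E2 + ((1:ℂ)*ga1^3*be2^3*al3^2*be3 + (3:ℂ)*be1*ga1^2*be2^2*ga2*al3^2*be3 + (3:ℂ)*be1^2*ga1*be2*ga2^2*al3^2*be3 + (1:ℂ)*be1^3*ga2^3*al3^2*be3 + (-1:ℂ)*be1^3*al2^2*be2*ga3^3 + (3:ℂ)*al1*ga1^2*be2^3*al3*be3*ga3 + (3:ℂ)*al1*be1*ga1*be2*ga2^2*al3*be3^2 + (3:ℂ)*al1*be1^2*ga2^3*al3*be3^2 + (-6:ℂ)*al1*be1^2*al2*be2*ga2*be3*ga3^2 + (-3:ℂ)*al1*be1^2*al2*be2^2*ga3^3 + (-8:ℂ)*al1^2*ga1*be2*ga2^2*be3^3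 + (-29:ℂ)*al1^2*ga1*be2^2*ga2*be3^2*ga3 + (-3:ℂ)*al1^2*ga1*be2^3*be3*ga3^2 + (2:ℂ)*al1^2*be1*ga2^3*be3^3 + (3:ℂ)*al1^2*be1*be2*ga2^2*be3^2*ga3 + (22:ℂ)*al1^2*be1*be2^2*ga2*be3*ga3^2 + (26:ℂ)*al1^2*be1*be2^3*ga3^3) * E3 + ((1:ℂ)*be1*ga1^2*al2^3*be3^3 + (3:ℂ)*be1^2*ga1*al2^3*be3^2*ga3 + (2:ℂ)*be1^3*al2^3*be3*ga3^2 + (-3:ℂ)*al1*ga1^2*be2^3*al3^2*be3 + (-3:ℂ)*al1*ga1^2*al2^2*be2*be3^3 + (3:ℂ)*al1*be1*ga1*al2^2*ga2*be3^3 + (3:ℂ)*al1*be1^2*al2^2*ga2*be3^2*ga3 + (6:ℂ)*al1*be1^2*al2^2*be2*be3*ga3^2 + (5:ℂ)*al1^2*ga1*be2^2*ga2*al3*be3^2 + (3:ℂ)*al1^2*ga1*be2^3*al3*be3*ga3 + (11:ℂ)*al1^2*ga1*al2*be2^2*be3^2*ga3 + (-28:ℂ)*al1^2*be1*be2^3*al3*ga3^2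 + (-11:ℂ)*al1^2*be1*al2*be2*ga2*be3^2*ga3 + (-8:ℂ)*al1^2*be1*al2*be2^2*be3*ga3^2 + (-1:ℂ)*al1^3*be2*ga2^2*be3^3 + (-8:ℂ)*al1^3*be2^2*ga2*be3^2*ga3 + (-25:ℂ)*al1^3*be2^3*be3*ga3^2) * E4 + ((-14:ℂ)*al1^2*be1*be2^3*be3^2*ga3) * E5 + ((-1:ℂ)*be1^2*ga1*al2^3*be3^3 + (-2:ℂ)*be1^3*al2^3*be3^2*ga3 + (14:ℂ)*al1*be1^2*al2*be2^2*al3*be3*ga3 + (-3:ℂ)*al1*be1^2*al2^2*ga2*be3^3 + (-3:ℂ)*al1*be1^2*al2^2*be2*be3^2*ga3 + (28:ℂ)*al1^2*be1*be2^3*al3*be3*ga3 + (8:ℂ)*al1^2*be1*al2*be2*ga2*be3^3 + (14:ℂ)*al1^2*be1*al2*be2^2*be3^2*ga3 + (9:ℂ)*al1^3*be2^2*ga2*be3^3 + (28:ℂ)*al1^3*be2^3*be3^2*ga3) * E6 + ((-27:ℂ)*al1*be1^2*ga1*al2*be2^2*ga2*al3*be3^2*ga3 + (27:ℂ)*al1*be1^3*al2*be2^3*al3*be3^3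 + (27:ℂ)*ω*al1*be1^2*ga1*al2*be2^2*ga2*al3*be3^2*ga3 + (-27:ℂ)*ω*al1*be1^3*al2*be2^3*al3*be3^3 + (9/4:ℂ)*ω^2*al1*be1*ga1^2*al2*be2*ga2^2*al3*be3*ga3^2 + (-27/2:ℂ)*ω^2*al1*be1^2*ga1*al2*be2^2*ga2*al3*be3^2*ga3 + (45/4:ℂ)*ω^2*al1*be1^3*al2*be2^3*al3*be3^3 + (-27/4:ℂ)*ω^3*al1*be1*ga1^2*al2*be2*ga2^2*al3*be3*ga3^2 + (27/2:ℂ)*ω^3*al1*be1^2*ga1*al2*be2^2*ga2*al3*be3^2*ga3 + (-27/4:ℂ)*ω^3*al1*be1^3*al2*be2^3*al3*be3^3 + (15/2:ℂ)*ω^4*al1*be1*ga1^2*al2*be2*ga2^2*al3*be3*ga3^2 + (-15:ℂ)*ω^4*al1*be1^2*ga1*al2*be2^2*ga2*al3*be3^2*ga3 + (15/2:ℂ)*ω^4*al1*be1^3*al2*be2^3*al3*be3^3 + (-15/4:ℂ)*ω^5*al1*be1*ga1^2*al2*be2*ga2^2*al3*be3*ga3^2 + (15/2:ℂ)*ω^5*al1*be1^2*ga1*al2*be2^2*ga2*al3*be3^2*ga3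 + (-15/4:ℂ)*ω^5*al1*be1^3*al2*be2^3*al3*be3^3 + (3/4:ℂ)*ω^6*al1*be1*ga1^2*al2*be2*ga2^2*al3*be3*ga3^2 + (-3/2:ℂ)*ω^6*al1*be1^2*ga1*al2*be2^2*ga2*al3*be3^2*ga3 + (3/4:ℂ)*ω^6*al1*be1^3*al2*be2^3*al3*be3^3 + (3/2:ℂ)*b*ω*al1*be1*ga1*al2*be2*ga2*al3*be3*ga3 + (-15/2:ℂ)*b*ω*al1*be1^2*al2*be2^2*al3*be3^2 + (-3:ℂ)*b*ω^2*al1*be1*ga1*al2*be2*ga2*al3*be3*ga3 + (15:ℂ)*b*ω^2*al1*be1^2*al2*be2^2*al3*be3^2 + (5/2:ℂ)*b*ω^3*al1*be1*ga1*al2*be2*ga2*al3*be3*ga3 + (-21/2:ℂ)*b*ω^3*al1*be1^2*al2*be2^2*al3*be3^2 + (-5/2:ℂ)*b*ω^4*al1*be1*ga1*al2*be2*ga2*al3*be3*ga3 + (9/2:ℂ)*b*ω^4*al1*be1^2*al2*be2^2*al3*be3^2 + (19/6:ℂ)*b*ω^5*al1*be1*ga1*al2*be2*ga2*al3*be3*ga3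 + (-19/6:ℂ)*b*ω^5*al1*be1^2*al2*be2^2*al3*be3^2 + (-5/2:ℂ)*b*ω^6*al1*be1*ga1*al2*be2*ga2*al3*be3*ga3 + (5/2:ℂ)*b*ω^6*al1*be1^2*al2*be2^2*al3*be3^2 + (1:ℂ)*b*ω^7*al1*be1*ga1*al2*be2*ga2*al3*be3*ga3 + (-1:ℂ)*b*ω^7*al1*be1^2*al2*be2^2*al3*be3^2 + (-1/6:ℂ)*b*ω^8*al1*be1*ga1*al2*be2*ga2*al3*be3*ga3 + (1/6:ℂ)*b*ω^8*al1*be1^2*al2*be2^2*al3*be3^2 + (1:ℂ)*b^2*al1*be1*al2*be2*al3*be3 + (-1:ℂ)*b^2*ω*al1*be1*al2*be2*al3*be3 + (2/3:ℂ)*b^2*ω^2*al1*be1*al2*be2*al3*be3 + (-1:ℂ)*b^2*ω^3*al1*be1*al2*be2*al3*be3 + (10/9:ℂ)*b^2*ω^4*al1*be1*al2*be2*al3*be3 + (-5/9:ℂ)*b^2*ω^5*al1*be1*al2*be2*al3*be3 + (1/9:ℂ)*b^2*ω^6*al1*be1*al2*be2*al3*be3) * hω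
    have hTB : (a - (ω - ω^2)/9 * b) * ((27*a^2+b^2)*c + d^3) = 0 := by linear_combination (norm := ring1) ((1/9:ℂ)*b^3*ω + (-1/9:ℂ)*b^3*ω^2 + (-1:ℂ)*a*b^2 + (3:ℂ)*a^2*b*ω + (-3:ℂ)*a^2*b*ω^2 + (-27:ℂ)*a^3) * Ec + ((45/4:ℂ)*ω^2*al1*ga1^2*al2*ga2^2*al3*ga3^2 + (-9/4:ℂ)*ω^2*al1*be1*ga1*al2*be2*ga2*al3*be3*ga3 + (-45/2:ℂ)*ω^3*al1*ga1^2*al2*ga2^2*al3*ga3^2 + (9/2:ℂ)*ω^3*al1*be1*ga1*al2*be2*ga2*al3*be3*ga3 + (12:ℂ)*ω^4*al1*ga1^2*al2*ga2^2*al3*ga3^2 + (-3:ℂ)*ω^4*al1*be1*ga1*al2*be2*ga2*al3*be3*ga3 + (-3:ℂ)*ω^5*al1*ga1^2*al2*ga2^2*al3*ga3^2 + (3:ℂ)*ω^5*al1*be1*ga1*al2*be2*ga2*al3*be3*ga3 + (9/2:ℂ)*ω^6*al1*ga1^2*al2*ga2^2*al3*ga3^2 + (-9/2:ℂ)*ω^6*al1*be1*ga1*al2*be2*ga2*al3*be3*ga3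 + (-3:ℂ)*ω^7*al1*ga1^2*al2*ga2^2*al3*ga3^2 + (3:ℂ)*ω^7*al1*be1*ga1*al2*be2*ga2*al3*be3*ga3 + (3/4:ℂ)*ω^8*al1*ga1^2*al2*ga2^2*al3*ga3^2 + (-3/4:ℂ)*ω^8*al1*be1*ga1*al2*be2*ga2*al3*be3*ga3 + (3/2:ℂ)*b*ω*al1*ga1*al2*ga2*al3*ga3 + (-3/2:ℂ)*b*ω^2*al1*ga1*al2*ga2*al3*ga3 + (1/2:ℂ)*b*ω^3*al1*ga1*al2*ga2*al3*ga3 + (-3/2:ℂ)*b*ω^4*al1*ga1*al2*ga2*al3*ga3 + (3/2:ℂ)*b*ω^5*al1*ga1*al2*ga2*al3*ga3 + (-1/2:ℂ)*b*ω^6*al1*ga1*al2*ga2*al3*ga3) * EA + ((-1:ℂ)*ga1^3*be2^3*al3^3 + (-3:ℂ)*ga1^3*al2*be2^2*al3^2*be3 + (-3:ℂ)*ga1^3*al2^2*be2*al3*be3^2 + (-1:ℂ)*ga1^3*al2^3*be3^3 + (-3:ℂ)*be1*ga1^2*be2^2*ga2*al3^3 + (-6:ℂ)*be1*ga1^2*al2*be2*ga2*al3^2*be3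 + (-3:ℂ)*be1*ga1^2*al2*be2^2*al3^2*ga3 + (-3:ℂ)*be1*ga1^2*al2^2*ga2*al3*be3^2 + (-6:ℂ)*be1*ga1^2*al2^2*be2*al3*be3*ga3 + (-3:ℂ)*be1*ga1^2*al2^3*be3^2*ga3 + (-3:ℂ)*be1^2*ga1*be2*ga2^2*al3^3 + (-3:ℂ)*be1^2*ga1*al2*ga2^2*al3^2*be3 + (-6:ℂ)*be1^2*ga1*al2*be2*ga2*al3^2*ga3 + (-6:ℂ)*be1^2*ga1*al2^2*ga2*al3*be3*ga3 + (-3:ℂ)*be1^2*ga1*al2^2*be2*al3*ga3^2 + (-3:ℂ)*be1^2*ga1*al2^3*be3*ga3^2 + (-1:ℂ)*be1^3*ga2^3*al3^3 + (-3:ℂ)*be1^3*al2*ga2^2*al3^2*ga3 + (-3:ℂ)*be1^3*al2^2*ga2*al3*ga3^2 + (-1:ℂ)*be1^3*al2^3*ga3^3 + (-3:ℂ)*al1*ga1^2*be2^2*ga2*al3^2*be3 + (-3:ℂ)*al1*ga1^2*be2^3*al3^2*ga3 + (-27:ℂ)*al1*ga1^2*al2*ga2^2*al3*ga3^2 + (-6:ℂ)*al1*ga1^2*al2*be2*ga2*al3*be3^2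 + (-6:ℂ)*al1*ga1^2*al2*be2^2*al3*be3*ga3 + (-3:ℂ)*al1*ga1^2*al2^2*ga2*be3^3 + (-3:ℂ)*al1*ga1^2*al2^2*be2*be3^2*ga3 + (-6:ℂ)*al1*be1*ga1*be2*ga2^2*al3^2*be3 + (-6:ℂ)*al1*be1*ga1*be2^2*ga2*al3^2*ga3 + (-6:ℂ)*al1*be1*ga1*al2*ga2^2*al3*be3^2 + (-12:ℂ)*al1*be1*ga1*al2*be2*ga2*al3*be3*ga3 + (-6:ℂ)*al1*be1*ga1*al2*be2^2*al3*ga3^2 + (-6:ℂ)*al1*be1*ga1*al2^2*ga2*be3^2*ga3 + (-6:ℂ)*al1*be1*ga1*al2^2*be2*be3*ga3^2 + (-3:ℂ)*al1*be1^2*ga2^3*al3^2*be3 + (-3:ℂ)*al1*be1^2*be2*ga2^2*al3^2*ga3 + (-6:ℂ)*al1*be1^2*al2*ga2^2*al3*be3*ga3 + (-6:ℂ)*al1*be1^2*al2*be2*ga2*al3*ga3^2 + (-3:ℂ)*al1*be1^2*al2^2*ga2*be3*ga3^2 + (-3:ℂ)*al1*be1^2*al2^2*be2*ga3^3 + (-3:ℂ)*al1^2*ga1*be2*ga2^2*al3*be3^2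 + (-6:ℂ)*al1^2*ga1*be2^2*ga2*al3*be3*ga3 + (-3:ℂ)*al1^2*ga1*be2^3*al3*ga3^2 + (-3:ℂ)*al1^2*ga1*al2*ga2^2*be3^3 + (-6:ℂ)*al1^2*ga1*al2*be2*ga2*be3^2*ga3 + (-3:ℂ)*al1^2*ga1*al2*be2^2*be3*ga3^2 + (-3:ℂ)*al1^2*be1*ga2^3*al3*be3^2 + (-6:ℂ)*al1^2*be1*be2*ga2^2*al3*be3*ga3 + (-3:ℂ)*al1^2*be1*be2^2*ga2*al3*ga3^2 + (-3:ℂ)*al1^2*be1*al2*ga2^2*be3^2*ga3 + (-6:ℂ)*al1^2*be1*al2*be2*ga2*be3*ga3^2 + (-3:ℂ)*al1^2*be1*al2*be2^2*ga3^3 + (-1:ℂ)*al1^3*ga2^3*be3^3 + (-3:ℂ)*al1^3*be2*ga2^2*be3^2*ga3 + (-3:ℂ)*al1^3*be2^2*ga2*be3*ga3^2 + (-1:ℂ)*al1^3*be2^3*ga3^3 + (-45/4:ℂ)*ω^2*al1*ga1^2*al2*ga2^2*al3*ga3^2 + (9/4:ℂ)*ω^2*al1*be1*ga1*al2*be2*ga2*al3*be3*ga3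 + (45/2:ℂ)*ω^3*al1*ga1^2*al2*ga2^2*al3*ga3^2 + (-9/2:ℂ)*ω^3*al1*be1*ga1*al2*be2*ga2*al3*be3*ga3 + (-12:ℂ)*ω^4*al1*ga1^2*al2*ga2^2*al3*ga3^2 + (3:ℂ)*ω^4*al1*be1*ga1*al2*be2*ga2*al3*be3*ga3 + (3:ℂ)*ω^5*al1*ga1^2*al2*ga2^2*al3*ga3^2 + (-3:ℂ)*ω^5*al1*be1*ga1*al2*be2*ga2*al3*be3*ga3 + (-9/2:ℂ)*ω^6*al1*ga1^2*al2*ga2^2*al3*ga3^2 + (9/2:ℂ)*ω^6*al1*be1*ga1*al2*be2*ga2*al3*be3*ga3 + (3:ℂ)*ω^7*al1*ga1^2*al2*ga2^2*al3*ga3^2 + (-3:ℂ)*ω^7*al1*be1*ga1*al2*be2*ga2*al3*be3*ga3 + (-3/4:ℂ)*ω^8*al1*ga1^2*al2*ga2^2*al3*ga3^2 + (3/4:ℂ)*ω^8*al1*be1*ga1*al2*be2*ga2*al3*be3*ga3 + (-9/2:ℂ)*b*ω*al1*ga1*al2*ga2*al3*ga3 + (9/2:ℂ)*b*ω^2*al1*ga1*al2*ga2*al3*ga3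 + (-1/2:ℂ)*b*ω^3*al1*ga1*al2*ga2*al3*ga3 + (3/2:ℂ)*b*ω^4*al1*ga1*al2*ga2*al3*ga3 + (-3/2:ℂ)*b*ω^5*al1*ga1*al2*ga2*al3*ga3 + (1/2:ℂ)*b*ω^6*al1*ga1*al2*ga2*al3*ga3 + (-1:ℂ)*b^2*al1*al2*al3 + (-27:ℂ)*a*al1*ga1*al2*ga2*al3*ga3 + (-27:ℂ)*a^2*al1*al2*al3) * EB + ((1/9:ℂ)*b*ω*ga1^2*be2^2*al3^2 + (2/9:ℂ)*b*ω*ga1^2*al2*be2*al3*be3 + (1/9:ℂ)*b*ω*ga1^2*al2^2*be3^2 + (2/9:ℂ)*b*ω*be1*ga1*be2*ga2*al3^2 + (2/9:ℂ)*b*ω*be1*ga1*al2*ga2*al3*be3 + (2/9:ℂ)*b*ω*be1*ga1*al2*be2*al3*ga3 + (2/9:ℂ)*b*ω*be1*ga1*al2^2*be3*ga3 + (1/9:ℂ)*b*ω*be1^2*ga2^2*al3^2 + (2/9:ℂ)*b*ω*be1^2*al2*ga2*al3*ga3 + (1/9:ℂ)*b*ω*be1^2*al2^2*ga3^2 + (2/9:ℂ)*b*ω*al1*ga1*be2*ga2*al3*be3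 + (2/9:ℂ)*b*ω*al1*ga1*be2^2*al3*ga3 + (2/9:ℂ)*b*ω*al1*ga1*al2*ga2*be3^2 + (2/9:ℂ)*b*ω*al1*ga1*al2*be2*be3*ga3 + (2/9:ℂ)*b*ω*al1*be1*ga2^2*al3*be3 + (2/9:ℂ)*b*ω*al1*be1*be2*ga2*al3*ga3 + (2/9:ℂ)*b*ω*al1*be1*al2*ga2*be3*ga3 + (2/9:ℂ)*b*ω*al1*be1*al2*be2*ga3^2 + (1/9:ℂ)*b*ω*al1^2*ga2^2*be3^2 + (2/9:ℂ)*b*ω*al1^2*be2*ga2*be3*ga3 + (1/9:ℂ)*b*ω*al1^2*be2^2*ga3^2 + (-1/9:ℂ)*b*ω^2*ga1^2*be2^2*al3^2 + (-2/9:ℂ)*b*ω^2*ga1^2*al2*be2*al3*be3 + (-1/9:ℂ)*b*ω^2*ga1^2*al2^2*be3^2 + (-2/9:ℂ)*b*ω^2*be1*ga1*be2*ga2*al3^2 + (-2/9:ℂ)*b*ω^2*be1*ga1*al2*ga2*al3*be3 + (-2/9:ℂ)*b*ω^2*be1*ga1*al2*be2*al3*ga3 + (-2/9:ℂ)*b*ω^2*be1*ga1*al2^2*be3*ga3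 + (-1/9:ℂ)*b*ω^2*be1^2*ga2^2*al3^2 + (-2/9:ℂ)*b*ω^2*be1^2*al2*ga2*al3*ga3 + (-1/9:ℂ)*b*ω^2*be1^2*al2^2*ga3^2 + (-2/9:ℂ)*b*ω^2*al1*ga1*be2*ga2*al3*be3 + (-2/9:ℂ)*b*ω^2*al1*ga1*be2^2*al3*ga3 + (-2/9:ℂ)*b*ω^2*al1*ga1*al2*ga2*be3^2 + (-2/9:ℂ)*b*ω^2*al1*ga1*al2*be2*be3*ga3 + (-2/9:ℂ)*b*ω^2*al1*be1*ga2^2*al3*be3 + (-2/9:ℂ)*b*ω^2*al1*be1*be2*ga2*al3*ga3 + (-2/9:ℂ)*b*ω^2*al1*be1*al2*ga2*be3*ga3 + (-2/9:ℂ)*b*ω^2*al1*be1*al2*be2*ga3^2 + (-1/9:ℂ)*b*ω^2*al1^2*ga2^2*be3^2 + (-2/9:ℂ)*b*ω^2*al1^2*be2*ga2*be3*ga3 + (-1/9:ℂ)*b*ω^2*al1^2*be2^2*ga3^2 + (1/9:ℂ)*b*d*ω*ga1*be2*al3 + (1/9:ℂ)*b*d*ω*ga1*al2*be3 + (1/9:ℂ)*b*d*ω*be1*ga2*al3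 + (1/9:ℂ)*b*d*ω*be1*al2*ga3 + (1/9:ℂ)*b*d*ω*al1*ga2*be3 + (1/9:ℂ)*b*d*ω*al1*be2*ga3 + (-1/9:ℂ)*b*d*ω^2*ga1*be2*al3 + (-1/9:ℂ)*b*d*ω^2*ga1*al2*be3 + (-1/9:ℂ)*b*d*ω^2*be1*ga2*al3 + (-1/9:ℂ)*b*d*ω^2*be1*al2*ga3 + (-1/9:ℂ)*b*d*ω^2*al1*ga2*be3 + (-1/9:ℂ)*b*d*ω^2*al1*be2*ga3 + (1/9:ℂ)*b*d^2*ω + (-1/9:ℂ)*b*d^2*ω^2 + (-1:ℂ)*a*ga1^2*be2^2*al3^2 + (-2:ℂ)*a*ga1^2*al2*be2*al3*be3 + (-1:ℂ)*a*ga1^2*al2^2*be3^2 + (-2:ℂ)*a*be1*ga1*be2*ga2*al3^2 + (-2:ℂ)*a*be1*ga1*al2*ga2*al3*be3 + (-2:ℂ)*a*be1*ga1*al2*be2*al3*ga3 + (-2:ℂ)*a*be1*ga1*al2^2*be3*ga3 + (-1:ℂ)*a*be1^2*ga2^2*al3^2 + (-2:ℂ)*a*be1^2*al2*ga2*al3*ga3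 + (-1:ℂ)*a*be1^2*al2^2*ga3^2 + (-2:ℂ)*a*al1*ga1*be2*ga2*al3*be3 + (-2:ℂ)*a*al1*ga1*be2^2*al3*ga3 + (-2:ℂ)*a*al1*ga1*al2*ga2*be3^2 + (-2:ℂ)*a*al1*ga1*al2*be2*be3*ga3 + (-2:ℂ)*a*al1*be1*ga2^2*al3*be3 + (-2:ℂ)*a*al1*be1*be2*ga2*al3*ga3 + (-2:ℂ)*a*al1*be1*al2*ga2*be3*ga3 + (-2:ℂ)*a*al1*be1*al2*be2*ga3^2 + (-1:ℂ)*a*al1^2*ga2^2*be3^2 + (-2:ℂ)*a*al1^2*be2*ga2*be3*ga3 + (-1:ℂ)*a*al1^2*be2^2*ga3^2 + (-1:ℂ)*a*d*ga1*be2*al3 + (-1:ℂ)*a*d*ga1*al2*be3 + (-1:ℂ)*a*d*be1*ga2*al3 + (-1:ℂ)*a*d*be1*al2*ga3 + (-1:ℂ)*a*d*al1*ga2*be3 + (-1:ℂ)*a*d*al1*be2*ga3 + (-1:ℂ)*a*d^2) * Ed + ((3:ℂ)*ga1^3*be2*ga2^2*al3*be3*ga3 + (3:ℂ)*ga1^3*be2^2*ga2*al3*ga3^2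 + (3:ℂ)*ga1^3*al2*ga2^2*be3^2*ga3 + (6:ℂ)*ga1^3*al2*be2*ga2*be3*ga3^2 + (6:ℂ)*be1*ga1^2*be2*ga2^2*al3*ga3^2 + (6:ℂ)*be1*ga1^2*al2*ga2^2*be3*ga3^2 + (3:ℂ)*be1*ga1^2*al2*be2*ga2*ga3^3 + (2:ℂ)*be1^2*ga1*ga2^3*al3*ga3^2 + (3:ℂ)*be1^2*ga1*al2*ga2^2*ga3^3 + (-3:ℂ)*al1*ga1^2*ga2^3*be3^2*ga3 + (21:ℂ)*al1*ga1^2*be2*ga2^2*be3*ga3^2 + (3:ℂ)*al1*ga1^2*be2^2*ga2*ga3^3 + (4:ℂ)*al1*be1*ga1*be2*ga2^2*ga3^3) * E1 + ((3:ℂ)*ga1^3*be2^2*ga2*al3*be3*ga3 + (-1:ℂ)*ga1^3*be2^3*al3*ga3^2 + (3:ℂ)*ga1^3*al2*be2*ga2*be3^2*ga3 + (-1:ℂ)*be1^3*ga2^3*al3*ga3^2 + (-3:ℂ)*al1*ga1^2*be2*ga2^2*be3^2*ga3 + (-6:ℂ)*al1*ga1^2*be2^2*ga2*be3*ga3^2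 + (1:ℂ)*al1*ga1^2*be2^3*ga3^3 + (10:ℂ)*al1*be1^2*be2*ga2^2*ga3^3) * E2 + ((3:ℂ)*ga1^3*be2*ga2^2*al3^2*ga3 + (3:ℂ)*be1*ga1^2*ga2^3*al3^2*ga3 + (9:ℂ)*al1*ga1^2*ga2^3*al3*be3*ga3 + (6:ℂ)*al1*ga1^2*be2*ga2^2*al3*ga3^2 + (1:ℂ)*al1*be1*ga1*ga2^3*al3*ga3^2 + (-10:ℂ)*al1*be1*ga1*al2*ga2^2*ga3^3 + (20:ℂ)*al1^2*ga1*ga2^3*be3*ga3^2 + (23:ℂ)*al1^2*ga1*be2*ga2^2*ga3^3 + (8:ℂ)*al1^2*be1*ga2^3*ga3^3) * E3 + ((-1:ℂ)*ga1^3*al2^3*be3*ga3^2 + (-2:ℂ)*be1*ga1^2*al2^3*ga3^3 + (-6:ℂ)*al1*ga1^2*be2*ga2^2*al3^2*ga3 + (-6:ℂ)*al1*ga1^2*al2^2*ga2*be3*ga3^2 + (3:ℂ)*al1*be1*ga1*al2^2*ga2*ga3^3 + (-15:ℂ)*al1^2*ga1*be2*ga2^2*al3*ga3^2 + (-18:ℂ)*al1^2*ga1*al2*ga2^2*be3*ga3^2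 + (6:ℂ)*al1^2*ga1*al2*be2*ga2*ga3^3 + (-3:ℂ)*al1^2*be1*ga2^3*al3*ga3^2 + (-4:ℂ)*al1^3*ga2^3*be3*ga3^2 + (-8:ℂ)*al1^3*be2*ga2^2*ga3^3) * E4 + ((1:ℂ)*ga1^3*be2^3*al3^2*ga3 + (1:ℂ)*be1^3*ga2^3*al3^2*ga3 + (1:ℂ)*be1^3*al2*ga2^2*al3*ga3^2 + (-1:ℂ)*be1^3*al2^2*ga2*ga3^3 + (3:ℂ)*al1*be1^2*ga2^3*al3*be3*ga3 + (-1:ℂ)*al1*be1^2*al2*be2*ga2*ga3^3 + (-1:ℂ)*al1^2*ga1*be2^3*ga3^3 + (3:ℂ)*al1^2*be1*ga2^3*be3^2*ga3 + (18:ℂ)*al1^2*be1*be2*ga2^2*be3*ga3^2 + (6:ℂ)*al1^2*be1*be2^2*ga2*ga3^3) * E5 + ((1:ℂ)*ga1^3*al2^3*be3^2*ga3 + (3:ℂ)*be1*ga1^2*al2^3*be3*ga3^2 + (2:ℂ)*be1^2*ga1*al2^3*ga3^3 + (6:ℂ)*al1*be1*ga1*al2^2*ga2*be3*ga3^2 +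 (1:ℂ)*al1*be1^2*al2^2*ga2*ga3^3 + (6:ℂ)*al1^2*ga1*al2*ga2^2*be3^2*ga3 + (-15:ℂ)*al1^2*be1*be2*ga2^2*al3*ga3^2 + (-8:ℂ)*al1^2*be1*al2*ga2^2*be3*ga3^2 + (-9:ℂ)*al1^2*be1*al2*be2*ga2*ga3^3 + (1:ℂ)*al1^3*ga2^3*be3^2*ga3 + (-14:ℂ)*al1^3*be2*ga2^2*be3*ga3^2 + (2:ℂ)*al1^3*be2^2*ga2*ga3^3) * E6 + ((27:ℂ)*al1*ga1^3*al2*ga2^3*al3*ga3^3 + (-27:ℂ)*al1*be1*ga1^2*al2*be2*ga2^2*al3*be3*ga3^2 + (-27:ℂ)*ω*al1*ga1^3*al2*ga2^3*al3*ga3^3 + (27:ℂ)*ω*al1*be1*ga1^2*al2*be2*ga2^2*al3*be3*ga3^2 + (45/4:ℂ)*ω^2*al1*ga1^3*al2*ga2^3*al3*ga3^3 + (-27/2:ℂ)*ω^2*al1*be1*ga1^2*al2*be2*ga2^2*al3*be3*ga3^2 + (9/4:ℂ)*ω^2*al1*be1^2*ga1*al2*be2^2*ga2*al3*be3^2*ga3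 + (-27/4:ℂ)*ω^3*al1*ga1^3*al2*ga2^3*al3*ga3^3 + (27/2:ℂ)*ω^3*al1*be1*ga1^2*al2*be2*ga2^2*al3*be3*ga3^2 + (-27/4:ℂ)*ω^3*al1*be1^2*ga1*al2*be2^2*ga2*al3*be3^2*ga3 + (15/2:ℂ)*ω^4*al1*ga1^3*al2*ga2^3*al3*ga3^3 + (-15:ℂ)*ω^4*al1*be1*ga1^2*al2*be2*ga2^2*al3*be3*ga3^2 + (15/2:ℂ)*ω^4*al1*be1^2*ga1*al2*be2^2*ga2*al3*be3^2*ga3 + (-15/4:ℂ)*ω^5*al1*ga1^3*al2*ga2^3*al3*ga3^3 + (15/2:ℂ)*ω^5*al1*be1*ga1^2*al2*be2*ga2^2*al3*be3*ga3^2 + (-15/4:ℂ)*ω^5*al1*be1^2*ga1*al2*be2^2*ga2*al3*be3^2*ga3 + (3/4:ℂ)*ω^6*al1*ga1^3*al2*ga2^3*al3*ga3^3 + (-3/2:ℂ)*ω^6*al1*be1*ga1^2*al2*be2*ga2^2*al3*be3*ga3^2 + (3/4:ℂ)*ω^6*al1*be1^2*ga1*al2*be2^2*ga2*al3*be3^2*ga3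 + (15/2:ℂ)*b*ω*al1*ga1^2*al2*ga2^2*al3*ga3^2 + (-3/2:ℂ)*b*ω*al1*be1*ga1*al2*be2*ga2*al3*be3*ga3 + (-15:ℂ)*b*ω^2*al1*ga1^2*al2*ga2^2*al3*ga3^2 + (3:ℂ)*b*ω^2*al1*be1*ga1*al2*be2*ga2*al3*be3*ga3 + (21/2:ℂ)*b*ω^3*al1*ga1^2*al2*ga2^2*al3*ga3^2 + (-5/2:ℂ)*b*ω^3*al1*be1*ga1*al2*be2*ga2*al3*be3*ga3 + (-9/2:ℂ)*b*ω^4*al1*ga1^2*al2*ga2^2*al3*ga3^2 + (5/2:ℂ)*b*ω^4*al1*be1*ga1*al2*be2*ga2*al3*be3*ga3 + (19/6:ℂ)*b*ω^5*al1*ga1^2*al2*ga2^2*al3*ga3^2 + (-19/6:ℂ)*b*ω^5*al1*be1*ga1*al2*be2*ga2*al3*be3*ga3 + (-5/2:ℂ)*b*ω^6*al1*ga1^2*al2*ga2^2*al3*ga3^2 + (5/2:ℂ)*b*ω^6*al1*be1*ga1*al2*be2*ga2*al3*be3*ga3 + (1:ℂ)*b*ω^7*al1*ga1^2*al2*ga2^2*al3*ga3^2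 + (-1:ℂ)*b*ω^7*al1*be1*ga1*al2*be2*ga2*al3*be3*ga3 + (-1/6:ℂ)*b*ω^8*al1*ga1^2*al2*ga2^2*al3*ga3^2 + (1/6:ℂ)*b*ω^8*al1*be1*ga1*al2*be2*ga2*al3*be3*ga3 + (1:ℂ)*b^2*al1*ga1*al2*ga2*al3*ga3 + (-1:ℂ)*b^2*ω*al1*ga1*al2*ga2*al3*ga3 + (2/3:ℂ)*b^2*ω^2*al1*ga1*al2*ga2*al3*ga3 + (-1:ℂ)*b^2*ω^3*al1*ga1*al2*ga2*al3*ga3 + (10/9:ℂ)*b^2*ω^4*al1*ga1*al2*ga2*al3*ga3 + (-5/9:ℂ)*b^2*ω^5*al1*ga1*al2*ga2*al3*ga3 + (1/9:ℂ)*b^2*ω^6*al1*ga1*al2*ga2*al3*ga3) * hω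
    have hTc : c * ((27*a^2+b^2)*c + d^3) = 0 := by linear_combination (norm := ring1) ((-1:ℂ)*ga1^3*be2^3*al3^3 + (-3:ℂ)*ga1^3*al2*be2^2*al3^2*be3 + (-3:ℂ)*ga1^3*al2^2*be2*al3*be3^2 + (-1:ℂ)*ga1^3*al2^3*be3^3 + (-3:ℂ)*be1*ga1^2*be2^2*ga2*al3^3 + (-6:ℂ)*be1*ga1^2*al2*be2*ga2*al3^2*be3 + (-3:ℂ)*be1*ga1^2*al2*be2^2*al3^2*ga3 + (-3:ℂ)*be1*ga1^2*al2^2*ga2*al3*be3^2 + (-6:ℂ)*be1*ga1^2*al2^2*be2*al3*be3*ga3 + (-3:ℂ)*be1*ga1^2*al2^3*be3^2*ga3 + (-3:ℂ)*be1^2*ga1*be2*ga2^2*al3^3 + (-3:ℂ)*be1^2*ga1*al2*ga2^2*al3^2*be3 + (-6:ℂ)*be1^2*ga1*al2*be2*ga2*al3^2*ga3 + (-6:ℂ)*be1^2*ga1*al2^2*ga2*al3*be3*ga3 + (-3:ℂ)*be1^2*ga1*al2^2*be2*al3*ga3^2 + (-3:ℂ)*be1^2*ga1*al2^3*be3*ga3^2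 + (-1:ℂ)*be1^3*ga2^3*al3^3 + (-3:ℂ)*be1^3*al2*ga2^2*al3^2*ga3 + (-3:ℂ)*be1^3*al2^2*ga2*al3*ga3^2 + (-1:ℂ)*be1^3*al2^3*ga3^3 + (-3:ℂ)*al1*ga1^2*be2^2*ga2*al3^2*be3 + (-3:ℂ)*al1*ga1^2*be2^3*al3^2*ga3 + (-6:ℂ)*al1*ga1^2*al2*be2*ga2*al3*be3^2 + (-6:ℂ)*al1*ga1^2*al2*be2^2*al3*be3*ga3 + (-3:ℂ)*al1*ga1^2*al2^2*ga2*be3^3 + (-3:ℂ)*al1*ga1^2*al2^2*be2*be3^2*ga3 + (-6:ℂ)*al1*be1*ga1*be2*ga2^2*al3^2*be3 + (-6:ℂ)*al1*be1*ga1*be2^2*ga2*al3^2*ga3 + (-6:ℂ)*al1*be1*ga1*al2*ga2^2*al3*be3^2 + (-12:ℂ)*al1*be1*ga1*al2*be2*ga2*al3*be3*ga3 + (-6:ℂ)*al1*be1*ga1*al2*be2^2*al3*ga3^2 + (-6:ℂ)*al1*be1*ga1*al2^2*ga2*be3^2*ga3 + (-6:ℂ)*al1*be1*ga1*al2^2*be2*be3*ga3^2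 + (-3:ℂ)*al1*be1^2*ga2^3*al3^2*be3 + (-3:ℂ)*al1*be1^2*be2*ga2^2*al3^2*ga3 + (-6:ℂ)*al1*be1^2*al2*ga2^2*al3*be3*ga3 + (-6:ℂ)*al1*be1^2*al2*be2*ga2*al3*ga3^2 + (-3:ℂ)*al1*be1^2*al2^2*ga2*be3*ga3^2 + (-3:ℂ)*al1*be1^2*al2^2*be2*ga3^3 + (-3:ℂ)*al1^2*ga1*be2*ga2^2*al3*be3^2 + (-6:ℂ)*al1^2*ga1*be2^2*ga2*al3*be3*ga3 + (-3:ℂ)*al1^2*ga1*be2^3*al3*ga3^2 + (-3:ℂ)*al1^2*ga1*al2*ga2^2*be3^3 + (-6:ℂ)*al1^2*ga1*al2*be2*ga2*be3^2*ga3 + (-3:ℂ)*al1^2*ga1*al2*be2^2*be3*ga3^2 + (-3:ℂ)*al1^2*be1*ga2^3*al3*be3^2 + (-6:ℂ)*al1^2*be1*be2*ga2^2*al3*be3*ga3 + (-3:ℂ)*al1^2*be1*be2^2*ga2*al3*ga3^2 + (-3:ℂ)*al1^2*be1*al2*ga2^2*be3^2*ga3 + (-6:ℂ)*al1^2*be1*al2*be2*ga2*be3*ga3^2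 + (-3:ℂ)*al1^2*be1*al2*be2^2*ga3^3 + (-1:ℂ)*al1^3*ga2^3*be3^3 + (-3:ℂ)*al1^3*be2*ga2^2*be3^2*ga3 + (-3:ℂ)*al1^3*be2^2*ga2*be3*ga3^2 + (-1:ℂ)*al1^3*be2^3*ga3^3 + (-1:ℂ)*b^2*al1*al2*al3 + (-1:ℂ)*b^2*c + (-27:ℂ)*a^2*al1*al2*al3 + (-27:ℂ)*a^2*c) * Ec + ((-27:ℂ)*al1^2*be1*al2^2*be2*al3^2*be3 + (9/4:ℂ)*ω^2*al1^2*ga1*al2^2*ga2*al3^2*ga3 + (-45/4:ℂ)*ω^2*al1^2*be1*al2^2*be2*al3^2*be3 + (-9/2:ℂ)*ω^3*al1^2*ga1*al2^2*ga2*al3^2*ga3 + (45/2:ℂ)*ω^3*al1^2*be1*al2^2*be2*al3^2*be3 + (3:ℂ)*ω^4*al1^2*ga1*al2^2*ga2*al3^2*ga3 + (-12:ℂ)*ω^4*al1^2*be1*al2^2*be2*al3^2*be3 + (-3:ℂ)*ω^5*al1^2*ga1*al2^2*ga2*al3^2*ga3 + (3:ℂ)*ω^5*al1^2*be1*al2^2*be2*al3^2*be3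 + (9/2:ℂ)*ω^6*al1^2*ga1*al2^2*ga2*al3^2*ga3 + (-9/2:ℂ)*ω^6*al1^2*be1*al2^2*be2*al3^2*be3 + (-3:ℂ)*ω^7*al1^2*ga1*al2^2*ga2*al3^2*ga3 + (3:ℂ)*ω^7*al1^2*be1*al2^2*be2*al3^2*be3 + (3/4:ℂ)*ω^8*al1^2*ga1*al2^2*ga2*al3^2*ga3 + (-3/4:ℂ)*ω^8*al1^2*be1*al2^2*be2*al3^2*be3 + (9/2:ℂ)*b*ω*al1^2*al2^2*al3^2 + (-9/2:ℂ)*b*ω^2*al1^2*al2^2*al3^2 + (1/2:ℂ)*b*ω^3*al1^2*al2^2*al3^2 + (-3/2:ℂ)*b*ω^4*al1^2*al2^2*al3^2 + (3/2:ℂ)*b*ω^5*al1^2*al2^2*al3^2 + (-1/2:ℂ)*b*ω^6*al1^2*al2^2*al3^2 + (-27:ℂ)*a*al1^2*al2^2*al3^2) * EA + ((-9/4:ℂ)*ω^2*al1^2*ga1*al2^2*ga2*al3^2*ga3 + (45/4:ℂ)*ω^2*al1^2*be1*al2^2*be2*al3^2*be3 + (9/2:ℂ)*ω^3*al1^2*ga1*al2^2*ga2*al3^2*ga3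 + (-45/2:ℂ)*ω^3*al1^2*be1*al2^2*be2*al3^2*be3 + (-3:ℂ)*ω^4*al1^2*ga1*al2^2*ga2*al3^2*ga3 + (12:ℂ)*ω^4*al1^2*be1*al2^2*be2*al3^2*be3 + (3:ℂ)*ω^5*al1^2*ga1*al2^2*ga2*al3^2*ga3 + (-3:ℂ)*ω^5*al1^2*be1*al2^2*be2*al3^2*be3 + (-9/2:ℂ)*ω^6*al1^2*ga1*al2^2*ga2*al3^2*ga3 + (9/2:ℂ)*ω^6*al1^2*be1*al2^2*be2*al3^2*be3 + (3:ℂ)*ω^7*al1^2*ga1*al2^2*ga2*al3^2*ga3 + (-3:ℂ)*ω^7*al1^2*be1*al2^2*be2*al3^2*be3 + (-3/4:ℂ)*ω^8*al1^2*ga1*al2^2*ga2*al3^2*ga3 + (3/4:ℂ)*ω^8*al1^2*be1*al2^2*be2*al3^2*be3 + (-3/2:ℂ)*b*ω*al1^2*al2^2*al3^2 + (3/2:ℂ)*b*ω^2*al1^2*al2^2*al3^2 + (-1/2:ℂ)*b*ω^3*al1^2*al2^2*al3^2 + (3/2:ℂ)*b*ω^4*al1^2*al2^2*al3^2 + (-3/2:ℂ)*b*ω^5*al1^2*al2^2*al3^2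 + (1/2:ℂ)*b*ω^6*al1^2*al2^2*al3^2) * EB + ((-1:ℂ)*c*ga1^2*be2^2*al3^2 + (-2:ℂ)*c*ga1^2*al2*be2*al3*be3 + (-1:ℂ)*c*ga1^2*al2^2*be3^2 + (-2:ℂ)*c*be1*ga1*be2*ga2*al3^2 + (-2:ℂ)*c*be1*ga1*al2*ga2*al3*be3 + (-2:ℂ)*c*be1*ga1*al2*be2*al3*ga3 + (-2:ℂ)*c*be1*ga1*al2^2*be3*ga3 + (-1:ℂ)*c*be1^2*ga2^2*al3^2 + (-2:ℂ)*c*be1^2*al2*ga2*al3*ga3 + (-1:ℂ)*c*be1^2*al2^2*ga3^2 + (-2:ℂ)*c*al1*ga1*be2*ga2*al3*be3 + (-2:ℂ)*c*al1*ga1*be2^2*al3*ga3 + (-2:ℂ)*c*al1*ga1*al2*ga2*be3^2 + (-2:ℂ)*c*al1*ga1*al2*be2*be3*ga3 + (-2:ℂ)*c*al1*be1*ga2^2*al3*be3 + (-2:ℂ)*c*al1*be1*be2*ga2*al3*ga3 + (-2:ℂ)*c*al1*be1*al2*ga2*be3*ga3 + (-2:ℂ)*c*al1*be1*al2*be2*ga3^2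 + (-1:ℂ)*c*al1^2*ga2^2*be3^2 + (-2:ℂ)*c*al1^2*be2*ga2*be3*ga3 + (-1:ℂ)*c*al1^2*be2^2*ga3^2 + (-1:ℂ)*c*d*ga1*be2*al3 + (-1:ℂ)*c*d*ga1*al2*be3 + (-1:ℂ)*c*d*be1*ga2*al3 + (-1:ℂ)*c*d*be1*al2*ga3 + (-1:ℂ)*c*d*al1*ga2*be3 + (-1:ℂ)*c*d*al1*be2*ga3 + (-1:ℂ)*c*d^2) * Ed + ((3:ℂ)*al1*ga1^2*be2^2*ga2*al3^3 + (6:ℂ)*al1*ga1^2*al2*be2*ga2*al3^2*be3 + (3:ℂ)*al1*ga1^2*al2*be2^2*al3^2*ga3 + (3:ℂ)*al1*ga1^2*al2^2*ga2*al3*be3^2 + (6:ℂ)*al1*ga1^2*al2^2*be2*al3*be3*ga3 + (3:ℂ)*al1*ga1^2*al2^3*be3^2*ga3 + (3:ℂ)*al1*be1*ga1*be2*ga2^2*al3^3 + (3:ℂ)*al1*be1*ga1*al2*ga2^2*al3^2*be3 + (6:ℂ)*al1*be1*ga1*al2*be2*ga2*al3^2*ga3 + (6:ℂ)*al1*be1*ga1*al2^2*ga2*al3*be3*ga3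 + (3:ℂ)*al1*be1*ga1*al2^2*be2*al3*ga3^2 + (3:ℂ)*al1*be1*ga1*al2^3*be3*ga3^2 + (1:ℂ)*al1*be1^2*ga2^3*al3^3 + (3:ℂ)*al1*be1^2*al2*ga2^2*al3^2*ga3 + (3:ℂ)*al1*be1^2*al2^2*ga2*al3*ga3^2 + (1:ℂ)*al1*be1^2*al2^3*ga3^3 + (3:ℂ)*al1^2*ga1*be2*ga2^2*al3^2*be3 + (3:ℂ)*al1^2*ga1*al2*ga2^2*al3*be3^2 + (27:ℂ)*al1^2*ga1*al2*be2*ga2*al3*be3*ga3 + (3:ℂ)*al1^2*ga1*al2*be2^2*al3*ga3^2 + (3:ℂ)*al1^2*be1*ga2^3*al3^2*be3 + (3:ℂ)*al1^2*be1*al2*ga2^2*al3*be3*ga3 + (3:ℂ)*al1^2*be1*al2*be2*ga2*al3*ga3^2 + (10:ℂ)*al1^2*be1*al2^2*be2*ga3^3 + (11:ℂ)*al1^3*ga2^3*al3*be3^2 + (12:ℂ)*al1^3*be2*ga2^2*al3*be3*ga3 + (3:ℂ)*al1^3*be2^2*ga2*al3*ga3^2 + (5:ℂ)*al1^3*al2*be2^2*ga3^3)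 * E1 + ((1:ℂ)*al1*ga1^2*be2^3*al3^3 + (3:ℂ)*al1*ga1^2*al2*be2^2*al3^2*be3 + (3:ℂ)*al1*ga1^2*al2^2*be2*al3*be3^2 + (1:ℂ)*al1*ga1^2*al2^3*be3^3 + (-9:ℂ)*al1^2*ga1*be2^2*ga2*al3^2*be3 + (3:ℂ)*al1^2*ga1*be2^3*al3^2*ga3 + (-6:ℂ)*al1^2*ga1*al2*be2*ga2*al3*be3^2 + (-6:ℂ)*al1^2*ga1*al2*be2^2*al3*be3*ga3 + (-1:ℂ)*al1^2*ga1*al2^2*ga2*be3^3 + (-9:ℂ)*al1^2*ga1*al2^2*be2*be3^2*ga3 + (-3:ℂ)*al1^3*be2^2*ga2*al3*be3*ga3 + (-4:ℂ)*al1^3*be2^3*al3*ga3^2 + (-10:ℂ)*al1^3*al2*ga2^2*be3^3 + (-12:ℂ)*al1^3*al2*be2*ga2*be3^2*ga3 + (9:ℂ)*al1^3*al2*be2^2*be3*ga3^2) * E2 + ((-3:ℂ)*al1^2*ga1*be2*ga2^2*al3^3 + (4:ℂ)*al1^2*ga1*al2^3*be3*ga3^2 + (-1:ℂ)*al1^2*be1*ga2^3*al3^3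 + (-1:ℂ)*al1^2*be1*al2^3*ga3^3 + (-11:ℂ)*al1^3*ga2^3*al3^2*be3 + (-9:ℂ)*al1^3*be2*ga2^2*al3^2*ga3 + (-3:ℂ)*al1^3*al2*be2*ga2*al3*ga3^2 + (7:ℂ)*al1^3*al2^2*ga2*be3*ga3^2 + (-14:ℂ)*al1^3*al2^2*be2*ga3^3) * E3 + ((-4:ℂ)*al1^2*ga1*al2^3*al3*be3*ga3 + (-7:ℂ)*al1^2*be1*al2^3*al3*ga3^2 + (9:ℂ)*al1^3*be2*ga2^2*al3^3 + (-1:ℂ)*al1^3*al2^2*ga2*al3*be3*ga3 + (2:ℂ)*al1^3*al2^2*be2*al3*ga3^2 + (5:ℂ)*al1^3*al2^3*be3*ga3^2) * E4 + ((-4:ℂ)*al1^2*ga1*be2^3*al3^3 + (-4:ℂ)*al1^2*ga1*al2^3*be3^3 + (-7:ℂ)*al1^2*be1*al2^3*be3^2*ga3 + (1:ℂ)*al1^3*be2^3*al3^2*ga3 + (3:ℂ)*al1^3*al2*be2*ga2*al3*be3^2 + (-3:ℂ)*al1^3*al2*be2^2*al3*be3*ga3 + (10:ℂ)*al1^3*al2^2*ga2*be3^3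 + (5:ℂ)*al1^3*al2^2*be2*be3^2*ga3) * E5 + ((4:ℂ)*al1^2*ga1*al2^3*al3*be3^2 + (7:ℂ)*al1^2*be1*al2^3*al3*be3*ga3 + (1:ℂ)*al1^3*al2^2*ga2*al3*be3^2 + (-2:ℂ)*al1^3*al2^2*be2*al3*be3*ga3 + (-5:ℂ)*al1^3*al2^3*be3^2*ga3) * E6 + ((-27:ℂ)*al1^2*be1*ga1*al2^2*be2*ga2*al3^2*be3*ga3 + (27:ℂ)*al1^2*be1^2*al2^2*be2^2*al3^2*be3^2 + (27:ℂ)*ω*al1^2*be1*ga1*al2^2*be2*ga2*al3^2*be3*ga3 + (-27:ℂ)*ω*al1^2*be1^2*al2^2*be2^2*al3^2*be3^2 + (9/4:ℂ)*ω^2*al1^2*ga1^2*al2^2*ga2^2*al3^2*ga3^2 + (-27/2:ℂ)*ω^2*al1^2*be1*ga1*al2^2*be2*ga2*al3^2*be3*ga3 + (45/4:ℂ)*ω^2*al1^2*be1^2*al2^2*be2^2*al3^2*be3^2 + (-27/4:ℂ)*ω^3*al1^2*ga1^2*al2^2*ga2^2*al3^2*ga3^2 + (27/2:ℂ)*ω^3*al1^2*be1*ga1*al2^2*be2*ga2*al3^2*be3*ga3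 + (-27/4:ℂ)*ω^3*al1^2*be1^2*al2^2*be2^2*al3^2*be3^2 + (15/2:ℂ)*ω^4*al1^2*ga1^2*al2^2*ga2^2*al3^2*ga3^2 + (-15:ℂ)*ω^4*al1^2*be1*ga1*al2^2*be2*ga2*al3^2*be3*ga3 + (15/2:ℂ)*ω^4*al1^2*be1^2*al2^2*be2^2*al3^2*be3^2 + (-15/4:ℂ)*ω^5*al1^2*ga1^2*al2^2*ga2^2*al3^2*ga3^2 + (15/2:ℂ)*ω^5*al1^2*be1*ga1*al2^2*be2*ga2*al3^2*be3*ga3 + (-15/4:ℂ)*ω^5*al1^2*be1^2*al2^2*be2^2*al3^2*be3^2 + (3/4:ℂ)*ω^6*al1^2*ga1^2*al2^2*ga2^2*al3^2*ga3^2 + (-3/2:ℂ)*ω^6*al1^2*be1*ga1*al2^2*be2*ga2*al3^2*be3*ga3 + (3/4:ℂ)*ω^6*al1^2*be1^2*al2^2*be2^2*al3^2*be3^2 + (3/2:ℂ)*b*ω*al1^2*ga1*al2^2*ga2*al3^2*ga3 + (-15/2:ℂ)*b*ω*al1^2*be1*al2^2*be2*al3^2*be3 + (-3:ℂ)*b*ω^2*al1^2*ga1*al2^2*ga2*al3^2*ga3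 + (15:ℂ)*b*ω^2*al1^2*be1*al2^2*be2*al3^2*be3 + (5/2:ℂ)*b*ω^3*al1^2*ga1*al2^2*ga2*al3^2*ga3 + (-21/2:ℂ)*b*ω^3*al1^2*be1*al2^2*be2*al3^2*be3 + (-5/2:ℂ)*b*ω^4*al1^2*ga1*al2^2*ga2*al3^2*ga3 + (9/2:ℂ)*b*ω^4*al1^2*be1*al2^2*be2*al3^2*be3 + (19/6:ℂ)*b*ω^5*al1^2*ga1*al2^2*ga2*al3^2*ga3 + (-19/6:ℂ)*b*ω^5*al1^2*be1*al2^2*be2*al3^2*be3 + (-5/2:ℂ)*b*ω^6*al1^2*ga1*al2^2*ga2*al3^2*ga3 + (5/2:ℂ)*b*ω^6*al1^2*be1*al2^2*be2*al3^2*be3 + (1:ℂ)*b*ω^7*al1^2*ga1*al2^2*ga2*al3^2*ga3 + (-1:ℂ)*b*ω^7*al1^2*be1*al2^2*be2*al3^2*be3 + (-1/6:ℂ)*b*ω^8*al1^2*ga1*al2^2*ga2*al3^2*ga3 + (1/6:ℂ)*b*ω^8*al1^2*be1*al2^2*be2*al3^2*be3 + (1:ℂ)*b^2*al1^2*al2^2*al3^2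 + (-1:ℂ)*b^2*ω*al1^2*al2^2*al3^2 + (2/3:ℂ)*b^2*ω^2*al1^2*al2^2*al3^2 + (-1:ℂ)*b^2*ω^3*al1^2*al2^2*al3^2 + (10/9:ℂ)*b^2*ω^4*al1^2*al2^2*al3^2 + (-5/9:ℂ)*b^2*ω^5*al1^2*al2^2*al3^2 + (1/9:ℂ)*b^2*ω^6*al1^2*al2^2*al3^2) * hω
    have hTa : a * ((27*a^2+b^2)*c + d^3) = 0 := by linear_combination (norm := ring1) (1/2:ℂ) * hTA + (1/2:ℂ) * hTB
    have hTb : b * ((27*a^2+b^2)*c + d^3) = 0 := by linear_combination (norm := ring1) ((-3/2:ℂ)*ω + (3/2:ℂ)*ω^2) * hTA + ((3/2:ℂ)*ω + (-3/2:ℂ)*ω^2) * hTB + ((1:ℂ)*b*d^3 + (-1:ℂ)*b*d^3*ω + (1/3:ℂ)*b*d^3*ω^2 + (1:ℂ)*b^3*c + (-1:ℂ)*b^3*c*ω + (1/3:ℂ)*b^3*c*ω^2 + (27:ℂ)*a^2*b*c + (-27:ℂ)*a^2*b*c*ω + (9:ℂ)*a^2*b*c*ω^2) * hω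
    rcases eq_or_ne ((27*a^2+b^2)*c + d^3) 0 with hT | hT
    · right
      linear_combination hT
    · refine Or.inl ⟨?_, ?_, ?_⟩
      · exact (mul_eq_zero.mp (by linear_combination hTa)).resolve_right hT
      · exact (mul_eq_zero.mp (by linear_combination hTb)).resolve_right hT
      · exact (mul_eq_zero.mp (by linear_combination hTc)).resolve_right hT
  · intro hcase
    rcases hcase with ⟨ha, hb, hc⟩ | hT
    · refine ⟨_, _, _, lin_form d 0 0 ω, lin_form 0 1 0 ω, lin_form 0 0 1 ω, ?_⟩
      apply MvPolynomial.funext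
      intro x
      rw [hfdef]
      simp only [map_add, map_mul, map_sub, map_pow, map_ofNat, eval_C, eval_X, map_one, map_zero]
      linear_combination (norm := ring1) ((2:ℂ)*(x 2)^3 + (-3:ℂ)*(x 1)*(x 2)^2 + (-3:ℂ)*(x 1)^2*(x 2) + (2:ℂ)*(x 1)^3 + (-3:ℂ)*(x 0)*(x 2)^2 + (12:ℂ)*(x 0)*(x 1)*(x 2) + (-3:ℂ)*(x 0)*(x 1)^2 + (-3:ℂ)*(x 0)^2*(x 2) + (-3:ℂ)*(x 0)^2*(x 1) + (2:ℂ)*(x 0)^3) * ha + ((1:ℂ)*(x 1)*(x 2)^2 + (-1:ℂ)*(x 1)^2*(x 2) + (-1:ℂ)*(x 0)*(x 2)^2 + (1:ℂ)*(x 0)*(x 1)^2 + (1:ℂ)*(x 0)^2*(x 2) + (-1:ℂ)*(x 0)^2*(x 1)) * hb + ((1:ℂ)*(x 2)^3 + (3:ℂ)*(x 1)*(x 2)^2 + (3:ℂ)*(x 1)^2*(x 2) + (1:ℂ)*(x 1)^3 + (3:ℂ)*(x 0)*(x 2)^2 + (6:ℂ)*(x 0)*(x 1)*(x 2) + (3:ℂ)*(x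 0)*(x 1)^2 + (3:ℂ)*(x 0)^2*(x 2) + (3:ℂ)*(x 0)^2*(x 1) + (1:ℂ)*(x 0)^3) * hc + ((1:ℂ)*(x 2)^3*d + (-1:ℂ)*(x 2)^3*d*ω + (-1:ℂ)*(x 1)*(x 2)^2*d*ω^2 + (-1:ℂ)*(x 1)^2*(x 2)*d*ω^2 + (1:ℂ)*(x 1)^3*d + (-1:ℂ)*(x 1)^3*d*ω + (-1:ℂ)*(x 0)*(x 2)^2*d*ω + (-3:ℂ)*(x 0)*(x 1)*(x 2)*d + (1:ℂ)*(x 0)*(x 1)*(x 2)*d*ω + (-1:ℂ)*(x 0)*(x 1)*(x 2)*d*ω^2 + (-1:ℂ)*(x 0)*(x 1)^2*d*ω + (-1:ℂ)*(x 0)^2*(x 2)*d + (-1:ℂ)*(x 0)^2*(x 1)*d) * hω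
    · by_cases hprod0 : c * ((a + (ω - ω^2)/9 * b) * (a - (ω - ω^2)/9 * b)) = 0
      · have hd3 : d^3 = 0 := by
          linear_combination (norm := ring1) ((1:ℂ)) * hT + ((-27:ℂ)) * hprod0 + ((-1:ℂ)*b^2*c + (1:ℂ)*b^2*c*ω + (-1/3:ℂ)*b^2*c*ω^2) * hω
        have hd : d = 0 := by
          exact pow_eq_zero_iff (by norm_num) |>.mp hd3
        rcases mul_eq_zero.mp hprod0 with hc | hAB
        · obtain ⟨be, hbe⟩ := cr (a + (ω - ω^2)/9 * b)
          obtain ⟨ga, hga⟩ := cr (a - (ω - ω^2)/9 * b)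
          refine ⟨_, _, _, lin_form 0 be ga ω, lin_form 0 be (ω*ga) ω, lin_form 0 be (ω^2*ga) ω, ?_⟩
          apply MvPolynomial.funext
          intro x
          rw [hfdef]
          simp only [map_add, map_mul, map_sub, map_pow, map_ofNat, eval_C, eval_X, map_one, map_zero]
          linear_combination (norm := ring1) ((1:ℂ)*(x 2)^3 + (3:ℂ)*(x 1)*(x 2)^2 + (3:ℂ)*(x 1)^2*(x 2) + (1:ℂ)*(x 1)^3 + (3:ℂ)*(x 0)*(x 2)^2 + (6:ℂ)*(x 0)*(x 1)*(x 2) + (3:ℂ)*(x 0)*(x 1)^2 + (3:ℂ)*(x 0)^2*(x 2) + (3:ℂ)*(x 0)^2*(x 1) + (1:ℂ)*(x 0)^3) * hc + ((1:ℂ)*(x 2)^3 + (1:ℂ)*(x 1)^3 + (-3:ℂ)*(x 0)*(x 1)*(x 2) + (1:ℂ)*(x 0)^3) * hd + ((-1:ℂ)*(x 2)^3 + (3:ℂ)*(x 1)*(x 2)^2 + (3:ℂ)*(x 1)*(x 2)^2*ω + (-3:ℂ)*(x 1)^2*(x 2)*ω + (-1:ℂ)*(x 1)^3 + (-3:ℂ)*(x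 0)*(x 2)^2*ω + (-6:ℂ)*(x 0)*(x 1)*(x 2) + (3:ℂ)*(x 0)*(x 1)^2 + (3:ℂ)*(x 0)*(x 1)^2*ω + (3:ℂ)*(x 0)^2*(x 2) + (3:ℂ)*(x 0)^2*(x 2)*ω + (-3:ℂ)*(x 0)^2*(x 1)*ω + (-1:ℂ)*(x 0)^3) * hbe + ((-1:ℂ)*(x 2)^3 + (-3:ℂ)*(x 1)*(x 2)^2*ω + (3:ℂ)*(x 1)^2*(x 2) + (3:ℂ)*(x 1)^2*(x 2)*ω + (-1:ℂ)*(x 1)^3 + (3:ℂ)*(x 0)*(x 2)^2 + (3:ℂ)*(x 0)*(x 2)^2*ω + (-6:ℂ)*(x 0)*(x 1)*(x 2) + (-3:ℂ)*(x 0)*(x 1)^2*ω + (-3:ℂ)*(x 0)^2*(x 2)*ω + (3:ℂ)*(x 0)^2*(x 1) + (3:ℂ)*(x 0)^2*(x 1)*ω + (-1:ℂ)*(x 0)^3) * hga + ((1:ℂ)*(x 2)^3*ga^3 + (1:ℂ)*(x 2)^3*be^3 + (-1:ℂ)*(x 2)^3*ω*ga^3 + (-1:ℂ)*(x 2)^3*ω*be^3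 + (1:ℂ)*(x 2)^3*ω^3*ga^3 + (1:ℂ)*(x 2)^3*ω^3*be^3 + (-1:ℂ)*(x 2)^3*ω^4*ga^3 + (-1:ℂ)*(x 2)^3*ω^4*be^3 + (-1:ℂ)*(x 2)^3*ω^5*be*ga^2 + (-1:ℂ)*(x 2)^3*ω^5*be^2*ga + (-3:ℂ)*(x 1)*(x 2)^2*be^3 + (3:ℂ)*(x 1)*(x 2)^2*ω*ga^3 + (-3:ℂ)*(x 1)*(x 2)^2*ω^2*ga^3 + (3:ℂ)*(x 1)*(x 2)^2*ω^2*be^3 + (-3:ℂ)*(x 1)*(x 2)^2*ω^3*be^3 + (3:ℂ)*(x 1)*(x 2)^2*ω^4*ga^3 + (-1:ℂ)*(x 1)*(x 2)^2*ω^4*be*ga^2 + (-2:ℂ)*(x 1)*(x 2)^2*ω^4*be^2*ga + (-3:ℂ)*(x 1)*(x 2)^2*ω^5*ga^3 + (-2:ℂ)*(x 1)*(x 2)^2*ω^6*be*ga^2 + (-1:ℂ)*(x 1)*(x 2)^2*ω^6*be^2*ga + (1:ℂ)*(x 1)*(x 2)^2*b + (-2/3:ℂ)*(x 1)*(x 2)^2*b*ω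 + (-3:ℂ)*(x 1)^2*(x 2)*ga^3 + (3:ℂ)*(x 1)^2*(x 2)*ω*be^3 + (3:ℂ)*(x 1)^2*(x 2)*ω^2*ga^3 + (-3:ℂ)*(x 1)^2*(x 2)*ω^2*be^3 + (-3:ℂ)*(x 1)^2*(x 2)*ω^3*ga^3 + (-1:ℂ)*(x 1)^2*(x 2)*ω^3*be^2*ga + (3:ℂ)*(x 1)^2*(x 2)*ω^5*ga^3 + (-2:ℂ)*(x 1)^2*(x 2)*ω^5*be*ga^2 + (-2:ℂ)*(x 1)^2*(x 2)*ω^5*be^2*ga + (-3:ℂ)*(x 1)^2*(x 2)*ω^6*ga^3 + (-1:ℂ)*(x 1)^2*(x 2)*ω^7*be*ga^2 + (-1:ℂ)*(x 1)^2*(x 2)*b + (2/3:ℂ)*(x 1)^2*(x 2)*b*ω + (1:ℂ)*(x 1)^3*ga^3 + (1:ℂ)*(x 1)^3*be^3 + (-1:ℂ)*(x 1)^3*ω*ga^3 + (-1:ℂ)*(x 1)^3*ω*be^3 + (1:ℂ)*(x 1)^3*ω^3*ga^3 + (-1:ℂ)*(x 1)^3*ω^4*ga^3 + (-1:ℂ)*(x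 1)^3*ω^4*be^2*ga + (1:ℂ)*(x 1)^3*ω^6*ga^3 + (-1:ℂ)*(x 1)^3*ω^6*be*ga^2 + (-1:ℂ)*(x 1)^3*ω^7*ga^3 + (-3:ℂ)*(x 0)*(x 2)^2*ga^3 + (3:ℂ)*(x 0)*(x 2)^2*ω*be^3 + (3:ℂ)*(x 0)*(x 2)^2*ω^2*ga^3 + (-3:ℂ)*(x 0)*(x 2)^2*ω^2*be^3 + (-3:ℂ)*(x 0)*(x 2)^2*ω^3*ga^3 + (-1:ℂ)*(x 0)*(x 2)^2*ω^3*be*ga^2 + (-2:ℂ)*(x 0)*(x 2)^2*ω^3*be^2*ga + (-2:ℂ)*(x 0)*(x 2)^2*ω^4*be*ga^2 + (-1:ℂ)*(x 0)*(x 2)^2*ω^4*be^2*ga + (-1:ℂ)*(x 0)*(x 2)^2*b + (2/3:ℂ)*(x 0)*(x 2)^2*b*ω + (6:ℂ)*(x 0)*(x 1)*(x 2)*ga^3 + (6:ℂ)*(x 0)*(x 1)*(x 2)*be^3 + (-6:ℂ)*(x 0)*(x 1)*(x 2)*ω*ga^3 + (-6:ℂ)*(x 0)*(x 1)*(x 2)*ω*be^3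 + (-2:ℂ)*(x 0)*(x 1)*(x 2)*ω^2*be^2*ga + (6:ℂ)*(x 0)*(x 1)*(x 2)*ω^3*ga^3 + (-2:ℂ)*(x 0)*(x 1)*(x 2)*ω^3*be*ga^2 + (-2:ℂ)*(x 0)*(x 1)*(x 2)*ω^3*be^2*ga + (-6:ℂ)*(x 0)*(x 1)*(x 2)*ω^4*ga^3 + (-2:ℂ)*(x 0)*(x 1)*(x 2)*ω^4*be*ga^2 + (-2:ℂ)*(x 0)*(x 1)*(x 2)*ω^4*be^2*ga + (-2:ℂ)*(x 0)*(x 1)*(x 2)*ω^5*be*ga^2 + (-3:ℂ)*(x 0)*(x 1)^2*be^3 + (3:ℂ)*(x 0)*(x 1)^2*ω*ga^3 + (-3:ℂ)*(x 0)*(x 1)^2*ω^2*ga^3 + (-1:ℂ)*(x 0)*(x 1)^2*ω^2*be^2*ga + (-2:ℂ)*(x 0)*(x 1)^2*ω^3*be^2*ga + (3:ℂ)*(x 0)*(x 1)^2*ω^4*ga^3 + (-2:ℂ)*(x 0)*(x 1)^2*ω^4*be*ga^2 + (-3:ℂ)*(x 0)*(x 1)^2*ω^5*ga^3 + (-1:ℂ)*(x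 0)*(x 1)^2*ω^5*be*ga^2 + (1:ℂ)*(x 0)*(x 1)^2*b + (-2/3:ℂ)*(x 0)*(x 1)^2*b*ω + (-3:ℂ)*(x 0)^2*(x 2)*be^3 + (3:ℂ)*(x 0)^2*(x 2)*ω*ga^3 + (-1:ℂ)*(x 0)^2*(x 2)*ω*be^2*ga + (-3:ℂ)*(x 0)^2*(x 2)*ω^2*ga^3 + (-2:ℂ)*(x 0)^2*(x 2)*ω^2*be*ga^2 + (-2:ℂ)*(x 0)^2*(x 2)*ω^2*be^2*ga + (-1:ℂ)*(x 0)^2*(x 2)*ω^3*be*ga^2 + (1:ℂ)*(x 0)^2*(x 2)*b + (-2/3:ℂ)*(x 0)^2*(x 2)*b*ω + (-3:ℂ)*(x 0)^2*(x 1)*ga^3 + (-2:ℂ)*(x 0)^2*(x 1)*ω*be^2*ga + (3:ℂ)*(x 0)^2*(x 1)*ω^2*ga^3 + (-1:ℂ)*(x 0)^2*(x 1)*ω^2*be*ga^2 + (-1:ℂ)*(x 0)^2*(x 1)*ω^2*be^2*ga + (-3:ℂ)*(x 0)^2*(x 1)*ω^3*ga^3 + (-2:ℂ)*(x 0)^2*(x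 1)*ω^3*be*ga^2 + (-1:ℂ)*(x 0)^2*(x 1)*b + (2/3:ℂ)*(x 0)^2*(x 1)*b*ω + (1:ℂ)*(x 0)^3*ga^3 + (-1:ℂ)*(x 0)^3*be^2*ga + (-1:ℂ)*(x 0)^3*ω*ga^3 + (-1:ℂ)*(x 0)^3*ω*be*ga^2) * hω
        · rcases mul_eq_zero.mp hAB with hA | hB
          · obtain ⟨al, hal⟩ := cr c
            obtain ⟨ga, hga⟩ := cr (a - (ω - ω^2)/9 * b)
            refine ⟨_, _, _, lin_form al 0 ga ω, lin_form al 0 (ω*ga) ω, lin_form al 0 (ω^2*ga) ω, ?_⟩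
            apply MvPolynomial.funext
            intro x
            rw [hfdef]
            simp only [map_add, map_mul, map_sub, map_pow, map_ofNat, eval_C, eval_X, map_one, map_zero]
            linear_combination (norm := ring1) ((1:ℂ)*(x 2)^3 + (-3:ℂ)*(x 1)*(x 2)^2 + (-3:ℂ)*(x 1)*(x 2)^2*ω + (3:ℂ)*(x 1)^2*(x 2)*ω + (1:ℂ)*(x 1)^3 + (3:ℂ)*(x 0)*(x 2)^2*ω + (6:ℂ)*(x 0)*(x 1)*(x 2) + (-3:ℂ)*(x 0)*(x 1)^2 + (-3:ℂ)*(x 0)*(x 1)^2*ω + (-3:ℂ)*(x 0)^2*(x 2) + (-3:ℂ)*(x 0)^2*(x 2)*ω + (3:ℂ)*(x 0)^2*(x 1)*ω + (1:ℂ)*(x 0)^3) * hA + ((1:ℂ)*(x 2)^3 + (1:ℂ)*(x 1)^3 + (-3:ℂ)*(x 0)*(x 1)*(x 2) + (1:ℂ)*(x 0)^3) * hd + ((-1:ℂ)*(x 2)^3 + (-3:ℂ)*(x 1)*(x 2)^2 + (-3:ℂ)*(x 1)^2*(x 2) + (-1:ℂ)*(x 1)^3 + (-3:ℂ)*(x 0)*(x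 2)^2 + (-6:ℂ)*(x 0)*(x 1)*(x 2) + (-3:ℂ)*(x 0)*(x 1)^2 + (-3:ℂ)*(x 0)^2*(x 2) + (-3:ℂ)*(x 0)^2*(x 1) + (-1:ℂ)*(x 0)^3) * hal + ((-1:ℂ)*(x 2)^3 + (-3:ℂ)*(x 1)*(x 2)^2*ω + (3:ℂ)*(x 1)^2*(x 2) + (3:ℂ)*(x 1)^2*(x 2)*ω + (-1:ℂ)*(x 1)^3 + (3:ℂ)*(x 0)*(x 2)^2 + (3:ℂ)*(x 0)*(x 2)^2*ω + (-6:ℂ)*(x 0)*(x 1)*(x 2) + (-3:ℂ)*(x 0)*(x 1)^2*ω + (-3:ℂ)*(x 0)^2*(x 2)*ω + (3:ℂ)*(x 0)^2*(x 1) + (3:ℂ)*(x 0)^2*(x 1)*ω + (-1:ℂ)*(x 0)^3) * hga + ((1:ℂ)*(x 2)^3*ga^3 + (-1:ℂ)*(x 2)^3*ω*ga^3 + (-1:ℂ)*(x 2)^3*ω*al^2*ga + (1:ℂ)*(x 2)^3*ω^3*ga^3 + (-1:ℂ)*(x 2)^3*ω^3*al*ga^2 + (-1:ℂ)*(x 2)^3*ω^4*ga^3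 + (3:ℂ)*(x 1)*(x 2)^2*ω*ga^3 + (-2:ℂ)*(x 1)*(x 2)^2*ω*al^2*ga + (-3:ℂ)*(x 1)*(x 2)^2*ω^2*ga^3 + (-1:ℂ)*(x 1)*(x 2)^2*ω^2*al^2*ga + (-1:ℂ)*(x 1)*(x 2)^2*ω^3*al*ga^2 + (3:ℂ)*(x 1)*(x 2)^2*ω^4*ga^3 + (-2:ℂ)*(x 1)*(x 2)^2*ω^4*al*ga^2 + (-3:ℂ)*(x 1)*(x 2)^2*ω^5*ga^3 + (1:ℂ)*(x 1)*(x 2)^2*b + (-2/3:ℂ)*(x 1)*(x 2)^2*b*ω + (-3:ℂ)*(x 1)^2*(x 2)*ga^3 + (-1:ℂ)*(x 1)^2*(x 2)*ω*al^2*ga + (3:ℂ)*(x 1)^2*(x 2)*ω^2*ga^3 + (-2:ℂ)*(x 1)^2*(x 2)*ω^2*al^2*ga + (-3:ℂ)*(x 1)^2*(x 2)*ω^3*ga^3 + (-2:ℂ)*(x 1)^2*(x 2)*ω^4*al*ga^2 + (3:ℂ)*(x 1)^2*(x 2)*ω^5*ga^3 + (-1:ℂ)*(x 1)^2*(x 2)*ω^5*al*ga^2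 + (-3:ℂ)*(x 1)^2*(x 2)*ω^6*ga^3 + (-1:ℂ)*(x 1)^2*(x 2)*b + (2/3:ℂ)*(x 1)^2*(x 2)*b*ω + (1:ℂ)*(x 1)^3*ga^3 + (-1:ℂ)*(x 1)^3*ω*ga^3 + (-1:ℂ)*(x 1)^3*ω^2*al^2*ga + (1:ℂ)*(x 1)^3*ω^3*ga^3 + (-1:ℂ)*(x 1)^3*ω^4*ga^3 + (-1:ℂ)*(x 1)^3*ω^5*al*ga^2 + (1:ℂ)*(x 1)^3*ω^6*ga^3 + (-1:ℂ)*(x 1)^3*ω^7*ga^3 + (-3:ℂ)*(x 0)*(x 2)^2*ga^3 + (-1:ℂ)*(x 0)*(x 2)^2*al^2*ga + (-2:ℂ)*(x 0)*(x 2)^2*ω*al^2*ga + (3:ℂ)*(x 0)*(x 2)^2*ω^2*ga^3 + (-2:ℂ)*(x 0)*(x 2)^2*ω^2*al*ga^2 + (-3:ℂ)*(x 0)*(x 2)^2*ω^3*ga^3 + (-1:ℂ)*(x 0)*(x 2)^2*ω^3*al*ga^2 + (-1:ℂ)*(x 0)*(x 2)^2*b + (2/3:ℂ)*(x 0)*(x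 2)^2*b*ω + (6:ℂ)*(x 0)*(x 1)*(x 2)*ga^3 + (-2:ℂ)*(x 0)*(x 1)*(x 2)*al^2*ga + (-6:ℂ)*(x 0)*(x 1)*(x 2)*ω*ga^3 + (-2:ℂ)*(x 0)*(x 1)*(x 2)*ω*al^2*ga + (-2:ℂ)*(x 0)*(x 1)*(x 2)*ω^2*al*ga^2 + (-2:ℂ)*(x 0)*(x 1)*(x 2)*ω^2*al^2*ga + (6:ℂ)*(x 0)*(x 1)*(x 2)*ω^3*ga^3 + (-2:ℂ)*(x 0)*(x 1)*(x 2)*ω^3*al*ga^2 + (-6:ℂ)*(x 0)*(x 1)*(x 2)*ω^4*ga^3 + (-2:ℂ)*(x 0)*(x 1)*(x 2)*ω^4*al*ga^2 + (-1:ℂ)*(x 0)*(x 1)^2*al^2*ga + (3:ℂ)*(x 0)*(x 1)^2*ω*ga^3 + (-3:ℂ)*(x 0)*(x 1)^2*ω^2*ga^3 + (-2:ℂ)*(x 0)*(x 1)^2*ω^2*al^2*ga + (-2:ℂ)*(x 0)*(x 1)^2*ω^3*al*ga^2 + (3:ℂ)*(x 0)*(x 1)^2*ω^4*ga^3 + (-3:ℂ)*(x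 0)*(x 1)^2*ω^5*ga^3 + (-1:ℂ)*(x 0)*(x 1)^2*ω^5*al*ga^2 + (1:ℂ)*(x 0)*(x 1)^2*b + (-2/3:ℂ)*(x 0)*(x 1)^2*b*ω + (-2:ℂ)*(x 0)^2*(x 2)*al^2*ga + (3:ℂ)*(x 0)^2*(x 2)*ω*ga^3 + (-1:ℂ)*(x 0)^2*(x 2)*ω*al*ga^2 + (-1:ℂ)*(x 0)^2*(x 2)*ω*al^2*ga + (-3:ℂ)*(x 0)^2*(x 2)*ω^2*ga^3 + (-2:ℂ)*(x 0)^2*(x 2)*ω^2*al*ga^2 + (1:ℂ)*(x 0)^2*(x 2)*b + (-2/3:ℂ)*(x 0)^2*(x 2)*b*ω + (-3:ℂ)*(x 0)^2*(x 1)*ga^3 + (-2:ℂ)*(x 0)^2*(x 1)*al^2*ga + (-1:ℂ)*(x 0)^2*(x 1)*ω*al*ga^2 + (3:ℂ)*(x 0)^2*(x 1)*ω^2*ga^3 + (-1:ℂ)*(x 0)^2*(x 1)*ω^2*al^2*ga + (-3:ℂ)*(x 0)^2*(x 1)*ω^3*ga^3 + (-2:ℂ)*(x 0)^2*(x 1)*ω^3*al*ga^2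 + (-1:ℂ)*(x 0)^2*(x 1)*b + (2/3:ℂ)*(x 0)^2*(x 1)*b*ω + (1:ℂ)*(x 0)^3*ga^3 + (-1:ℂ)*(x 0)^3*al^2*ga + (-1:ℂ)*(x 0)^3*ω*ga^3 + (-1:ℂ)*(x 0)^3*ω*al*ga^2) * hω
          · obtain ⟨al, hal⟩ := cr c
            obtain ⟨be, hbe⟩ := cr (a + (ω - ω^2)/9 * b)
            refine ⟨_, _, _, lin_form al be 0 ω, lin_form al (ω*be) 0 ω, lin_form al (ω^2*be) 0 ω, ?_⟩
            apply MvPolynomial.funext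
            intro x
            rw [hfdef]
            simp only [map_add, map_mul, map_sub, map_pow, map_ofNat, eval_C, eval_X, map_one, map_zero]
            linear_combination (norm := ring1) ((1:ℂ)*(x 2)^3 + (3:ℂ)*(x 1)*(x 2)^2*ω + (-3:ℂ)*(x 1)^2*(x 2) + (-3:ℂ)*(x 1)^2*(x 2)*ω + (1:ℂ)*(x 1)^3 + (-3:ℂ)*(x 0)*(x 2)^2 + (-3:ℂ)*(x 0)*(x 2)^2*ω + (6:ℂ)*(x 0)*(x 1)*(x 2) + (3:ℂ)*(x 0)*(x 1)^2*ω + (3:ℂ)*(x 0)^2*(x 2)*ω + (-3:ℂ)*(x 0)^2*(x 1) + (-3:ℂ)*(x 0)^2*(x 1)*ω + (1:ℂ)*(x 0)^3) * hB + ((1:ℂ)*(x 2)^3 + (1:ℂ)*(x 1)^3 + (-3:ℂ)*(x 0)*(x 1)*(x 2) + (1:ℂ)*(x 0)^3) * hd + ((-1:ℂ)*(x 2)^3 + (-3:ℂ)*(x 1)*(x 2)^2 + (-3:ℂ)*(x 1)^2*(x 2) + (-1:ℂ)*(x 1)^3 + (-3:ℂ)*(x 0)*(x 2)^2 + (-6:ℂ)*(x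 0)*(x 1)*(x 2) + (-3:ℂ)*(x 0)*(x 1)^2 + (-3:ℂ)*(x 0)^2*(x 2) + (-3:ℂ)*(x 0)^2*(x 1) + (-1:ℂ)*(x 0)^3) * hal + ((-1:ℂ)*(x 2)^3 + (3:ℂ)*(x 1)*(x 2)^2 + (3:ℂ)*(x 1)*(x 2)^2*ω + (-3:ℂ)*(x 1)^2*(x 2)*ω + (-1:ℂ)*(x 1)^3 + (-3:ℂ)*(x 0)*(x 2)^2*ω + (-6:ℂ)*(x 0)*(x 1)*(x 2) + (3:ℂ)*(x 0)*(x 1)^2 + (3:ℂ)*(x 0)*(x 1)^2*ω + (3:ℂ)*(x 0)^2*(x 2) + (3:ℂ)*(x 0)^2*(x 2)*ω + (-3:ℂ)*(x 0)^2*(x 1)*ω + (-1:ℂ)*(x 0)^3) * hbe + ((1:ℂ)*(x 2)^3*be^3 + (-1:ℂ)*(x 2)^3*ω*be^3 + (-1:ℂ)*(x 2)^3*ω^2*al^2*be + (1:ℂ)*(x 2)^3*ω^3*be^3 + (-1:ℂ)*(x 2)^3*ω^4*be^3 + (-1:ℂ)*(x 2)^3*ω^5*al*be^2 + (1:ℂ)*(x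 2)^3*ω^6*be^3 + (-1:ℂ)*(x 2)^3*ω^7*be^3 + (-3:ℂ)*(x 1)*(x 2)^2*be^3 + (-1:ℂ)*(x 1)*(x 2)^2*ω*al^2*be + (3:ℂ)*(x 1)*(x 2)^2*ω^2*be^3 + (-2:ℂ)*(x 1)*(x 2)^2*ω^2*al^2*be + (-3:ℂ)*(x 1)*(x 2)^2*ω^3*be^3 + (-2:ℂ)*(x 1)*(x 2)^2*ω^4*al*be^2 + (3:ℂ)*(x 1)*(x 2)^2*ω^5*be^3 + (-1:ℂ)*(x 1)*(x 2)^2*ω^5*al*be^2 + (-3:ℂ)*(x 1)*(x 2)^2*ω^6*be^3 + (1:ℂ)*(x 1)*(x 2)^2*b + (-2/3:ℂ)*(x 1)*(x 2)^2*b*ω + (3:ℂ)*(x 1)^2*(x 2)*ω*be^3 + (-2:ℂ)*(x 1)^2*(x 2)*ω*al^2*be + (-3:ℂ)*(x 1)^2*(x 2)*ω^2*be^3 + (-1:ℂ)*(x 1)^2*(x 2)*ω^2*al^2*be + (-1:ℂ)*(x 1)^2*(x 2)*ω^3*al*be^2 + (3:ℂ)*(x 1)^2*(x 2)*ω^4*be^3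 + (-2:ℂ)*(x 1)^2*(x 2)*ω^4*al*be^2 + (-3:ℂ)*(x 1)^2*(x 2)*ω^5*be^3 + (-1:ℂ)*(x 1)^2*(x 2)*b + (2/3:ℂ)*(x 1)^2*(x 2)*b*ω + (1:ℂ)*(x 1)^3*be^3 + (-1:ℂ)*(x 1)^3*ω*be^3 + (-1:ℂ)*(x 1)^3*ω*al^2*be + (1:ℂ)*(x 1)^3*ω^3*be^3 + (-1:ℂ)*(x 1)^3*ω^3*al*be^2 + (-1:ℂ)*(x 1)^3*ω^4*be^3 + (-1:ℂ)*(x 0)*(x 2)^2*al^2*be + (3:ℂ)*(x 0)*(x 2)^2*ω*be^3 + (-3:ℂ)*(x 0)*(x 2)^2*ω^2*be^3 + (-2:ℂ)*(x 0)*(x 2)^2*ω^2*al^2*be + (-2:ℂ)*(x 0)*(x 2)^2*ω^3*al*be^2 + (3:ℂ)*(x 0)*(x 2)^2*ω^4*be^3 + (-3:ℂ)*(x 0)*(x 2)^2*ω^5*be^3 + (-1:ℂ)*(x 0)*(x 2)^2*ω^5*al*be^2 + (-1:ℂ)*(x 0)*(x 2)^2*b + (2/3:ℂ)*(x 0)*(x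 2)^2*b*ω + (6:ℂ)*(x 0)*(x 1)*(x 2)*be^3 + (-2:ℂ)*(x 0)*(x 1)*(x 2)*al^2*be + (-6:ℂ)*(x 0)*(x 1)*(x 2)*ω*be^3 + (-2:ℂ)*(x 0)*(x 1)*(x 2)*ω*al^2*be + (-2:ℂ)*(x 0)*(x 1)*(x 2)*ω^2*al*be^2 + (-2:ℂ)*(x 0)*(x 1)*(x 2)*ω^2*al^2*be + (6:ℂ)*(x 0)*(x 1)*(x 2)*ω^3*be^3 + (-2:ℂ)*(x 0)*(x 1)*(x 2)*ω^3*al*be^2 + (-6:ℂ)*(x 0)*(x 1)*(x 2)*ω^4*be^3 + (-2:ℂ)*(x 0)*(x 1)*(x 2)*ω^4*al*be^2 + (-3:ℂ)*(x 0)*(x 1)^2*be^3 + (-1:ℂ)*(x 0)*(x 1)^2*al^2*be + (-2:ℂ)*(x 0)*(x 1)^2*ω*al^2*be + (3:ℂ)*(x 0)*(x 1)^2*ω^2*be^3 + (-2:ℂ)*(x 0)*(x 1)^2*ω^2*al*be^2 + (-3:ℂ)*(x 0)*(x 1)^2*ω^3*be^3 + (-1:ℂ)*(x 0)*(x 1)^2*ω^3*al*be^2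 + (1:ℂ)*(x 0)*(x 1)^2*b + (-2/3:ℂ)*(x 0)*(x 1)^2*b*ω + (-3:ℂ)*(x 0)^2*(x 2)*be^3 + (-2:ℂ)*(x 0)^2*(x 2)*al^2*be + (-1:ℂ)*(x 0)^2*(x 2)*ω*al*be^2 + (3:ℂ)*(x 0)^2*(x 2)*ω^2*be^3 + (-1:ℂ)*(x 0)^2*(x 2)*ω^2*al^2*be + (-3:ℂ)*(x 0)^2*(x 2)*ω^3*be^3 + (-2:ℂ)*(x 0)^2*(x 2)*ω^3*al*be^2 + (1:ℂ)*(x 0)^2*(x 2)*b + (-2/3:ℂ)*(x 0)^2*(x 2)*b*ω + (-2:ℂ)*(x 0)^2*(x 1)*al^2*be + (3:ℂ)*(x 0)^2*(x 1)*ω*be^3 + (-1:ℂ)*(x 0)^2*(x 1)*ω*al*be^2 + (-1:ℂ)*(x 0)^2*(x 1)*ω*al^2*be + (-3:ℂ)*(x 0)^2*(x 1)*ω^2*be^3 + (-2:ℂ)*(x 0)^2*(x 1)*ω^2*al*be^2 + (-1:ℂ)*(x 0)^2*(x 1)*b + (2/3:ℂ)*(x 0)^2*(x 1)*b*ω + (1:ℂ)*(x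 0)^3*be^3 + (-1:ℂ)*(x 0)^3*al^2*be + (-1:ℂ)*(x 0)^3*ω*be^3 + (-1:ℂ)*(x 0)^3*ω*al*be^2) * hω
      · have hcne : c ≠ 0 := fun h => hprod0 (by rw [h, zero_mul])
        have hAne : (a + (ω - ω^2)/9 * b) ≠ 0 := fun h => hprod0 (by rw [h, zero_mul, mul_zero])
        obtain ⟨al, hal⟩ := cr c
        obtain ⟨be, hbe⟩ := cr (a + (ω - ω^2)/9 * b)
        have halbe : al * be ≠ 0 := by
          apply mul_ne_zero
          · intro h; apply hcne; rw [← hal, h]; ring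
          · intro h; apply hAne; rw [← hbe, h]; ring
        obtain ⟨ga, hgadef⟩ : ∃ z : ℂ, z = -d / (3*(al*be)) := ⟨_, rfl⟩
        have hdg : 3*(al*be*ga) = -d := by
          rw [hgadef]
          obtain ⟨h1, h2⟩ := mul_ne_zero_iff.mp halbe
          field_simp
        have hkey : (27*(c*(a + (ω - ω^2)/9 * b))) * (ga^3 - (a - (ω - ω^2)/9 * b)) = 0 := by
          linear_combination (norm := ring1) ((-27:ℂ)*be^3*ga^3) * hal + ((-27:ℂ)*c*ga^3 + (3:ℂ)*b*c + (3:ℂ)*b*c*ω + (3:ℂ)*b*c*ω^2) * hbe + ((9:ℂ)*al^2*be^2*ga^2 + (-3:ℂ)*d*al*be*ga + (1:ℂ)*d^2) * hdg + ((-1:ℂ)) * hT + ((-3:ℂ)*b*c*be^3 + (1:ℂ)*b^2*c + (-2/3:ℂ)*b^2*c*ω + (3:ℂ)*a*b*c) * hω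
        have hga3 : ga^3 = a - (ω - ω^2)/9 * b := by
          rcases mul_eq_zero.mp hkey with h | h
          · exact absurd h (mul_ne_zero (by norm_num) (mul_ne_zero hcne hAne))
          · exact sub_eq_zero.mp h
        refine ⟨_, _, _, lin_form al be ga ω, lin_form al (ω*be) (ω^2*ga) ω, lin_form al (ω^2*be) (ω*ga) ω, ?_⟩
        apply MvPolynomial.funext
        intro x
        rw [hfdef]
        simp only [map_add, map_mul, map_sub, map_pow, map_ofNat, eval_C, eval_X, map_one, map_zero]
        linear_combination (norm := ring1) ((-1:ℂ)*(x 2)^3 + (-3:ℂ)*(x 1)*(x 2)^2 + (-3:ℂ)*(x 1)^2*(x 2) + (-1:ℂ)*(x 1)^3 + (-3:ℂ)*(x 0)*(x 2)^2 + (-6:ℂ)*(x 0)*(x 1)*(x 2) + (-3:ℂ)*(x 0)*(x 1)^2 + (-3:ℂ)*(x 0)^2*(x 2) + (-3:ℂ)*(x 0)^2*(x 1) + (-1:ℂ)*(x 0)^3) * hal + ((-1:ℂ)*(x 2)^3 + (3:ℂ)*(x 1)*(x 2)^2 + (3:ℂ)*(x 1)*(x 2)^2*ω + (-3:ℂ)*(x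 1)^2*(x 2)*ω + (-1:ℂ)*(x 1)^3 + (-3:ℂ)*(x 0)*(x 2)^2*ω + (-6:ℂ)*(x 0)*(x 1)*(x 2) + (3:ℂ)*(x 0)*(x 1)^2 + (3:ℂ)*(x 0)*(x 1)^2*ω + (3:ℂ)*(x 0)^2*(x 2) + (3:ℂ)*(x 0)^2*(x 2)*ω + (-3:ℂ)*(x 0)^2*(x 1)*ω + (-1:ℂ)*(x 0)^3) * hbe + ((-1:ℂ)*(x 2)^3 + (-3:ℂ)*(x 1)*(x 2)^2*ω + (3:ℂ)*(x 1)^2*(x 2) + (3:ℂ)*(x 1)^2*(x 2)*ω + (-1:ℂ)*(x 1)^3 + (3:ℂ)*(x 0)*(x 2)^2 + (3:ℂ)*(x 0)*(x 2)^2*ω + (-6:ℂ)*(x 0)*(x 1)*(x 2) + (-3:ℂ)*(x 0)*(x 1)^2*ω + (-3:ℂ)*(x 0)^2*(x 2)*ω + (3:ℂ)*(x 0)^2*(x 1) + (3:ℂ)*(x 0)^2*(x 1)*ω + (-1:ℂ)*(x 0)^3) * hga3 + ((-2/3:ℂ)*(x 2)^3*ω^4 + (-1:ℂ)*(x 2)^3*ω^5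 + (-1/3:ℂ)*(x 2)^3*ω^7 + (-2/3:ℂ)*(x 1)*(x 2)^2*ω^3 + (-5/3:ℂ)*(x 1)*(x 2)^2*ω^4 + (-5/3:ℂ)*(x 1)*(x 2)^2*ω^5 + (-4/3:ℂ)*(x 1)*(x 2)^2*ω^6 + (-1/3:ℂ)*(x 1)*(x 2)^2*ω^7 + (-1/3:ℂ)*(x 1)*(x 2)^2*ω^8 + (-2/3:ℂ)*(x 1)^2*(x 2)*ω^3 + (-5/3:ℂ)*(x 1)^2*(x 2)*ω^4 + (-5/3:ℂ)*(x 1)^2*(x 2)*ω^5 + (-4/3:ℂ)*(x 1)^2*(x 2)*ω^6 + (-1/3:ℂ)*(x 1)^2*(x 2)*ω^7 + (-1/3:ℂ)*(x 1)^2*(x 2)*ω^8 + (-2/3:ℂ)*(x 1)^3*ω^4 + (-1:ℂ)*(x 1)^3*ω^5 + (-1/3:ℂ)*(x 1)^3*ω^7 + (-2/3:ℂ)*(x 0)*(x 2)^2*ω^2 + (-5/3:ℂ)*(x 0)*(x 2)^2*ω^3 + (-5/3:ℂ)*(x 0)*(x 2)^2*ω^4 + (-4/3:ℂ)*(x 0)*(x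 2)^2*ω^5 + (-1/3:ℂ)*(x 0)*(x 2)^2*ω^6 + (-1/3:ℂ)*(x 0)*(x 2)^2*ω^7 + (-4/3:ℂ)*(x 0)*(x 1)*(x 2)*ω^2 + (-4:ℂ)*(x 0)*(x 1)*(x 2)*ω^3 + (-3:ℂ)*(x 0)*(x 1)*(x 2)*ω^4 + (-4/3:ℂ)*(x 0)*(x 1)*(x 2)*ω^5 + (-2:ℂ)*(x 0)*(x 1)*(x 2)*ω^6 + (-1/3:ℂ)*(x 0)*(x 1)*(x 2)*ω^8 + (-2/3:ℂ)*(x 0)*(x 1)^2*ω^2 + (-5/3:ℂ)*(x 0)*(x 1)^2*ω^3 + (-5/3:ℂ)*(x 0)*(x 1)^2*ω^4 + (-4/3:ℂ)*(x 0)*(x 1)^2*ω^5 + (-1/3:ℂ)*(x 0)*(x 1)^2*ω^6 + (-1/3:ℂ)*(x 0)*(x 1)^2*ω^7 + (-2/3:ℂ)*(x 0)^2*(x 2)*ω + (-5/3:ℂ)*(x 0)^2*(x 2)*ω^2 + (-5/3:ℂ)*(x 0)^2*(x 2)*ω^3 + (-4/3:ℂ)*(x 0)^2*(x 2)*ω^4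 + (-1/3:ℂ)*(x 0)^2*(x 2)*ω^5 + (-1/3:ℂ)*(x 0)^2*(x 2)*ω^6 + (-2/3:ℂ)*(x 0)^2*(x 1)*ω + (-5/3:ℂ)*(x 0)^2*(x 1)*ω^2 + (-5/3:ℂ)*(x 0)^2*(x 1)*ω^3 + (-4/3:ℂ)*(x 0)^2*(x 1)*ω^4 + (-1/3:ℂ)*(x 0)^2*(x 1)*ω^5 + (-1/3:ℂ)*(x 0)^2*(x 1)*ω^6 + (-2/3:ℂ)*(x 0)^3*ω + (-1:ℂ)*(x 0)^3*ω^2 + (-1/3:ℂ)*(x 0)^3*ω^4) * hdg + ((1:ℂ)*(x 2)^3*ga^3 + (1:ℂ)*(x 2)^3*be^3 + (-1:ℂ)*(x 2)^3*ω*ga^3 + (-1:ℂ)*(x 2)^3*ω*be^3 + (-1:ℂ)*(x 2)^3*ω*al^2*ga + (-1:ℂ)*(x 2)^3*ω^2*al^2*be + (1:ℂ)*(x 2)^3*ω^3*ga^3 + (1:ℂ)*(x 2)^3*ω^3*be^3 + (-1:ℂ)*(x 2)^3*ω^3*al*ga^2 + (-1:ℂ)*(x 2)^3*ω^4*ga^3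 + (-1:ℂ)*(x 2)^3*ω^4*be^3 + (-1:ℂ)*(x 2)^3*ω^5*al*be^2 + (-1:ℂ)*(x 2)^3*ω^6*be*ga^2 + (1:ℂ)*(x 2)^3*ω^6*be^3 + (-1:ℂ)*(x 2)^3*ω^7*be^2*ga + (-1:ℂ)*(x 2)^3*ω^7*be^3 + (1:ℂ)*(x 2)^3*d + (-1:ℂ)*(x 2)^3*d*ω + (1:ℂ)*(x 2)^3*d*ω^3 + (-1/3:ℂ)*(x 2)^3*d*ω^4 + (1/3:ℂ)*(x 2)^3*d*ω^5 + (-3:ℂ)*(x 1)*(x 2)^2*be^3 + (3:ℂ)*(x 1)*(x 2)^2*ω*ga^3 + (-2:ℂ)*(x 1)*(x 2)^2*ω*al^2*ga + (-1:ℂ)*(x 1)*(x 2)^2*ω*al^2*be + (-3:ℂ)*(x 1)*(x 2)^2*ω^2*ga^3 + (3:ℂ)*(x 1)*(x 2)^2*ω^2*be^3 + (-1:ℂ)*(x 1)*(x 2)^2*ω^2*al^2*ga + (-2:ℂ)*(x 1)*(x 2)^2*ω^2*al^2*be + (-3:ℂ)*(x 1)*(x 2)^2*ω^3*be^3 + (-1:ℂ)*(x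 1)*(x 2)^2*ω^3*al*ga^2 + (3:ℂ)*(x 1)*(x 2)^2*ω^4*ga^3 + (-2:ℂ)*(x 1)*(x 2)^2*ω^4*al*ga^2 + (-2:ℂ)*(x 1)*(x 2)^2*ω^4*al*be^2 + (-3:ℂ)*(x 1)*(x 2)^2*ω^5*ga^3 + (-1:ℂ)*(x 1)*(x 2)^2*ω^5*be*ga^2 + (3:ℂ)*(x 1)*(x 2)^2*ω^5*be^3 + (-1:ℂ)*(x 1)*(x 2)^2*ω^5*al*be^2 + (-2:ℂ)*(x 1)*(x 2)^2*ω^6*be^2*ga + (-3:ℂ)*(x 1)*(x 2)^2*ω^6*be^3 + (-2:ℂ)*(x 1)*(x 2)^2*ω^7*be*ga^2 + (-1:ℂ)*(x 1)*(x 2)^2*ω^8*be^2*ga + (2/3:ℂ)*(x 1)*(x 2)^2*d*ω^3 + (1:ℂ)*(x 1)*(x 2)^2*d*ω^4 + (1/3:ℂ)*(x 1)*(x 2)^2*d*ω^6 + (1:ℂ)*(x 1)*(x 2)^2*b + (-2/3:ℂ)*(x 1)*(x 2)^2*b*ω + (-3:ℂ)*(x 1)^2*(x 2)*ga^3 + (3:ℂ)*(x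 1)^2*(x 2)*ω*be^3 + (-1:ℂ)*(x 1)^2*(x 2)*ω*al^2*ga + (-2:ℂ)*(x 1)^2*(x 2)*ω*al^2*be + (3:ℂ)*(x 1)^2*(x 2)*ω^2*ga^3 + (-3:ℂ)*(x 1)^2*(x 2)*ω^2*be^3 + (-2:ℂ)*(x 1)^2*(x 2)*ω^2*al^2*ga + (-1:ℂ)*(x 1)^2*(x 2)*ω^2*al^2*be + (-3:ℂ)*(x 1)^2*(x 2)*ω^3*ga^3 + (-1:ℂ)*(x 1)^2*(x 2)*ω^3*al*be^2 + (3:ℂ)*(x 1)^2*(x 2)*ω^4*be^3 + (-2:ℂ)*(x 1)^2*(x 2)*ω^4*al*ga^2 + (-2:ℂ)*(x 1)^2*(x 2)*ω^4*al*be^2 + (3:ℂ)*(x 1)^2*(x 2)*ω^5*ga^3 + (-1:ℂ)*(x 1)^2*(x 2)*ω^5*be^2*ga + (-3:ℂ)*(x 1)^2*(x 2)*ω^5*be^3 + (-1:ℂ)*(x 1)^2*(x 2)*ω^5*al*ga^2 + (-3:ℂ)*(x 1)^2*(x 2)*ω^6*ga^3 + (-2:ℂ)*(x 1)^2*(x 2)*ω^6*be*ga^2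 + (-2:ℂ)*(x 1)^2*(x 2)*ω^7*be^2*ga + (-1:ℂ)*(x 1)^2*(x 2)*ω^8*be*ga^2 + (2/3:ℂ)*(x 1)^2*(x 2)*d*ω^3 + (1:ℂ)*(x 1)^2*(x 2)*d*ω^4 + (1/3:ℂ)*(x 1)^2*(x 2)*d*ω^6 + (-1:ℂ)*(x 1)^2*(x 2)*b + (2/3:ℂ)*(x 1)^2*(x 2)*b*ω + (1:ℂ)*(x 1)^3*ga^3 + (1:ℂ)*(x 1)^3*be^3 + (-1:ℂ)*(x 1)^3*ω*ga^3 + (-1:ℂ)*(x 1)^3*ω*be^3 + (-1:ℂ)*(x 1)^3*ω*al^2*be + (-1:ℂ)*(x 1)^3*ω^2*al^2*ga + (1:ℂ)*(x 1)^3*ω^3*ga^3 + (1:ℂ)*(x 1)^3*ω^3*be^3 + (-1:ℂ)*(x 1)^3*ω^3*al*be^2 + (-1:ℂ)*(x 1)^3*ω^4*ga^3 + (-1:ℂ)*(x 1)^3*ω^4*be^3 + (-1:ℂ)*(x 1)^3*ω^5*al*ga^2 + (1:ℂ)*(x 1)^3*ω^6*ga^3 + (-1:ℂ)*(x 1)^3*ω^6*be^2*ga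 + (-1:ℂ)*(x 1)^3*ω^7*ga^3 + (-1:ℂ)*(x 1)^3*ω^7*be*ga^2 + (1:ℂ)*(x 1)^3*d + (-1:ℂ)*(x 1)^3*d*ω + (1:ℂ)*(x 1)^3*d*ω^3 + (-1/3:ℂ)*(x 1)^3*d*ω^4 + (1/3:ℂ)*(x 1)^3*d*ω^5 + (-3:ℂ)*(x 0)*(x 2)^2*ga^3 + (-1:ℂ)*(x 0)*(x 2)^2*al^2*ga + (-1:ℂ)*(x 0)*(x 2)^2*al^2*be + (3:ℂ)*(x 0)*(x 2)^2*ω*be^3 + (-2:ℂ)*(x 0)*(x 2)^2*ω*al^2*ga + (3:ℂ)*(x 0)*(x 2)^2*ω^2*ga^3 + (-3:ℂ)*(x 0)*(x 2)^2*ω^2*be^3 + (-2:ℂ)*(x 0)*(x 2)^2*ω^2*al*ga^2 + (-2:ℂ)*(x 0)*(x 2)^2*ω^2*al^2*be + (-3:ℂ)*(x 0)*(x 2)^2*ω^3*ga^3 + (-1:ℂ)*(x 0)*(x 2)^2*ω^3*al*ga^2 + (-2:ℂ)*(x 0)*(x 2)^2*ω^3*al*be^2 + (-1:ℂ)*(x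 0)*(x 2)^2*ω^4*be*ga^2 + (3:ℂ)*(x 0)*(x 2)^2*ω^4*be^3 + (-2:ℂ)*(x 0)*(x 2)^2*ω^5*be*ga^2 + (-2:ℂ)*(x 0)*(x 2)^2*ω^5*be^2*ga + (-3:ℂ)*(x 0)*(x 2)^2*ω^5*be^3 + (-1:ℂ)*(x 0)*(x 2)^2*ω^5*al*be^2 + (-1:ℂ)*(x 0)*(x 2)^2*ω^6*be^2*ga + (2/3:ℂ)*(x 0)*(x 2)^2*d*ω^2 + (1:ℂ)*(x 0)*(x 2)^2*d*ω^3 + (1/3:ℂ)*(x 0)*(x 2)^2*d*ω^5 + (-1:ℂ)*(x 0)*(x 2)^2*b + (2/3:ℂ)*(x 0)*(x 2)^2*b*ω + (6:ℂ)*(x 0)*(x 1)*(x 2)*ga^3 + (6:ℂ)*(x 0)*(x 1)*(x 2)*be^3 + (-2:ℂ)*(x 0)*(x 1)*(x 2)*al^2*ga + (-2:ℂ)*(x 0)*(x 1)*(x 2)*al^2*be + (-6:ℂ)*(x 0)*(x 1)*(x 2)*ω*ga^3 + (-6:ℂ)*(x 0)*(x 1)*(x 2)*ω*be^3 + (-2:ℂ)*(x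 0)*(x 1)*(x 2)*ω*al^2*ga + (-2:ℂ)*(x 0)*(x 1)*(x 2)*ω*al^2*be + (-2:ℂ)*(x 0)*(x 1)*(x 2)*ω^2*al*ga^2 + (-2:ℂ)*(x 0)*(x 1)*(x 2)*ω^2*al*be^2 + (-2:ℂ)*(x 0)*(x 1)*(x 2)*ω^2*al^2*ga + (-2:ℂ)*(x 0)*(x 1)*(x 2)*ω^2*al^2*be + (6:ℂ)*(x 0)*(x 1)*(x 2)*ω^3*ga^3 + (6:ℂ)*(x 0)*(x 1)*(x 2)*ω^3*be^3 + (-2:ℂ)*(x 0)*(x 1)*(x 2)*ω^3*al*ga^2 + (-2:ℂ)*(x 0)*(x 1)*(x 2)*ω^3*al*be^2 + (-6:ℂ)*(x 0)*(x 1)*(x 2)*ω^4*ga^3 + (-2:ℂ)*(x 0)*(x 1)*(x 2)*ω^4*be*ga^2 + (-2:ℂ)*(x 0)*(x 1)*(x 2)*ω^4*be^2*ga + (-6:ℂ)*(x 0)*(x 1)*(x 2)*ω^4*be^3 + (-2:ℂ)*(x 0)*(x 1)*(x 2)*ω^4*al*ga^2 + (-2:ℂ)*(x 0)*(x 1)*(x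 2)*ω^4*al*be^2 + (-2:ℂ)*(x 0)*(x 1)*(x 2)*ω^5*be*ga^2 + (-2:ℂ)*(x 0)*(x 1)*(x 2)*ω^5*be^2*ga + (-2:ℂ)*(x 0)*(x 1)*(x 2)*ω^6*be*ga^2 + (-2:ℂ)*(x 0)*(x 1)*(x 2)*ω^6*be^2*ga + (-3:ℂ)*(x 0)*(x 1)*(x 2)*d + (3:ℂ)*(x 0)*(x 1)*(x 2)*d*ω + (4/3:ℂ)*(x 0)*(x 1)*(x 2)*d*ω^2 + (-1/3:ℂ)*(x 0)*(x 1)*(x 2)*d*ω^3 + (2:ℂ)*(x 0)*(x 1)*(x 2)*d*ω^4 + (-1/3:ℂ)*(x 0)*(x 1)*(x 2)*d*ω^5 + (1/3:ℂ)*(x 0)*(x 1)*(x 2)*d*ω^6 + (-3:ℂ)*(x 0)*(x 1)^2*be^3 + (-1:ℂ)*(x 0)*(x 1)^2*al^2*ga + (-1:ℂ)*(x 0)*(x 1)^2*al^2*be + (3:ℂ)*(x 0)*(x 1)^2*ω*ga^3 + (-2:ℂ)*(x 0)*(x 1)^2*ω*al^2*be + (-3:ℂ)*(x 0)*(x 1)^2*ω^2*ga^3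 + (3:ℂ)*(x 0)*(x 1)^2*ω^2*be^3 + (-2:ℂ)*(x 0)*(x 1)^2*ω^2*al*be^2 + (-2:ℂ)*(x 0)*(x 1)^2*ω^2*al^2*ga + (-3:ℂ)*(x 0)*(x 1)^2*ω^3*be^3 + (-2:ℂ)*(x 0)*(x 1)^2*ω^3*al*ga^2 + (-1:ℂ)*(x 0)*(x 1)^2*ω^3*al*be^2 + (3:ℂ)*(x 0)*(x 1)^2*ω^4*ga^3 + (-1:ℂ)*(x 0)*(x 1)^2*ω^4*be^2*ga + (-3:ℂ)*(x 0)*(x 1)^2*ω^5*ga^3 + (-2:ℂ)*(x 0)*(x 1)^2*ω^5*be*ga^2 + (-2:ℂ)*(x 0)*(x 1)^2*ω^5*be^2*ga + (-1:ℂ)*(x 0)*(x 1)^2*ω^5*al*ga^2 + (-1:ℂ)*(x 0)*(x 1)^2*ω^6*be*ga^2 + (2/3:ℂ)*(x 0)*(x 1)^2*d*ω^2 + (1:ℂ)*(x 0)*(x 1)^2*d*ω^3 + (1/3:ℂ)*(x 0)*(x 1)^2*d*ω^5 + (1:ℂ)*(x 0)*(x 1)^2*b + (-2/3:ℂ)*(x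 0)*(x 1)^2*b*ω + (-3:ℂ)*(x 0)^2*(x 2)*be^3 + (-2:ℂ)*(x 0)^2*(x 2)*al^2*ga + (-2:ℂ)*(x 0)^2*(x 2)*al^2*be + (3:ℂ)*(x 0)^2*(x 2)*ω*ga^3 + (-1:ℂ)*(x 0)^2*(x 2)*ω*al*ga^2 + (-1:ℂ)*(x 0)^2*(x 2)*ω*al*be^2 + (-1:ℂ)*(x 0)^2*(x 2)*ω*al^2*ga + (-3:ℂ)*(x 0)^2*(x 2)*ω^2*ga^3 + (3:ℂ)*(x 0)^2*(x 2)*ω^2*be^3 + (-2:ℂ)*(x 0)^2*(x 2)*ω^2*al*ga^2 + (-1:ℂ)*(x 0)^2*(x 2)*ω^2*al^2*be + (-2:ℂ)*(x 0)^2*(x 2)*ω^3*be*ga^2 + (-1:ℂ)*(x 0)^2*(x 2)*ω^3*be^2*ga + (-3:ℂ)*(x 0)^2*(x 2)*ω^3*be^3 + (-2:ℂ)*(x 0)^2*(x 2)*ω^3*al*be^2 + (-1:ℂ)*(x 0)^2*(x 2)*ω^4*be*ga^2 + (-2:ℂ)*(x 0)^2*(x 2)*ω^4*be^2*ga + (2/3:ℂ)*(x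 0)^2*(x 2)*d*ω + (1:ℂ)*(x 0)^2*(x 2)*d*ω^2 + (1/3:ℂ)*(x 0)^2*(x 2)*d*ω^4 + (1:ℂ)*(x 0)^2*(x 2)*b + (-2/3:ℂ)*(x 0)^2*(x 2)*b*ω + (-3:ℂ)*(x 0)^2*(x 1)*ga^3 + (-2:ℂ)*(x 0)^2*(x 1)*al^2*ga + (-2:ℂ)*(x 0)^2*(x 1)*al^2*be + (3:ℂ)*(x 0)^2*(x 1)*ω*be^3 + (-1:ℂ)*(x 0)^2*(x 1)*ω*al*ga^2 + (-1:ℂ)*(x 0)^2*(x 1)*ω*al*be^2 + (-1:ℂ)*(x 0)^2*(x 1)*ω*al^2*be + (3:ℂ)*(x 0)^2*(x 1)*ω^2*ga^3 + (-3:ℂ)*(x 0)^2*(x 1)*ω^2*be^3 + (-2:ℂ)*(x 0)^2*(x 1)*ω^2*al*be^2 + (-1:ℂ)*(x 0)^2*(x 1)*ω^2*al^2*ga + (-3:ℂ)*(x 0)^2*(x 1)*ω^3*ga^3 + (-1:ℂ)*(x 0)^2*(x 1)*ω^3*be*ga^2 + (-2:ℂ)*(x 0)^2*(x 1)*ω^3*be^2*ga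 + (-2:ℂ)*(x 0)^2*(x 1)*ω^3*al*ga^2 + (-2:ℂ)*(x 0)^2*(x 1)*ω^4*be*ga^2 + (-1:ℂ)*(x 0)^2*(x 1)*ω^4*be^2*ga + (2/3:ℂ)*(x 0)^2*(x 1)*d*ω + (1:ℂ)*(x 0)^2*(x 1)*d*ω^2 + (1/3:ℂ)*(x 0)^2*(x 1)*d*ω^4 + (-1:ℂ)*(x 0)^2*(x 1)*b + (2/3:ℂ)*(x 0)^2*(x 1)*b*ω + (1:ℂ)*(x 0)^3*ga^3 + (1:ℂ)*(x 0)^3*be^3 + (-1:ℂ)*(x 0)^3*al^2*ga + (-1:ℂ)*(x 0)^3*al^2*be + (-1:ℂ)*(x 0)^3*ω*ga^3 + (-1:ℂ)*(x 0)^3*ω*be^3 + (-1:ℂ)*(x 0)^3*ω*al*ga^2 + (-1:ℂ)*(x 0)^3*ω*al*be^2 + (-1:ℂ)*(x 0)^3*ω^2*be*ga^2 + (-1:ℂ)*(x 0)^3*ω^2*be^2*ga + (1:ℂ)*(x 0)^3*d + (-1/3:ℂ)*(x 0)^3*d*ω + (1/3:ℂ)*(x 0)^3*d*ω^2) * hω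
end
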